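/- arXiv:math/0201136 — 8 statements merged into one kernel-verified Lean document; each statement's English description precedes it below -/
import Mathlib

section
/- For every k ≥ 3 and n ≥ 0, the number of permutations of length n avoiding both 132 and 12…k equals the number of permutations of length n avoiding both 132 and 2134…k. -/
set_option maxHeartbeats 1000000

def IsInvolution {n : ℕ} (π : Equiv.Perm (Fin n)) : Prop := ∀ i, π (π i) = i

def Avoids132 {n : ℕ} (π : Equiv.Perm (Fin n)) : Prop :=
  ¬ ∃ i j k : Fin n, i < j ∧ j < k ∧ π i < π k ∧ π k < π j

def fixCount {n : ℕ} (π : Equiv.Perm (Fin n)) : ℕ :=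
  (Finset.univ.filter fun i => π i = i).card

def ContainsPat {n k : ℕ} (π : Equiv.Perm (Fin n)) (τ : Fin k → Fin k) : Prop :=
  ∃ f : Fin k → Fin n, StrictMono f ∧ ∀ a b : Fin k, τ a < τ b ↔ π (f a) < π (f b)

def pat2134 (k : ℕ) : Fin k → Fin k := fun i =>
  if (i : ℕ) = 0 then ⟨1 % k, Nat.mod_lt 1 i.pos⟩
  else if (i : ℕ) = 1 then ⟨0, i.pos⟩
  else i

namespace Stmt9

variable {n j m : ℕ}



def joinFun (h : n = j + 1 + m) (σ : Equiv.Perm (Fin j)) (ρ : Equiv.Perm (Fin m)) :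
    Fin n → Fin n := fun p =>
  if hp : (p : ℕ) < j then
    ⟨m + σ ⟨p, hp⟩, by have := (σ ⟨p, hp⟩).isLt; omega⟩
  else if hq : (p : ℕ) = j then ⟨j + m, by omega⟩
  else
    ⟨ρ ⟨(p : ℕ) - (j + 1), by have := p.isLt; omega⟩, by
      have := (ρ ⟨(p : ℕ) - (j + 1), by have := p.isLt; omega⟩).isLt; omega⟩

theorem joinFunAux_coe_lt (h : n = j + 1 + m) (σ : Equiv.Perm (Fin j)) (ρ : Equiv.Perm (Fin m))
    {p : Fin n} (hp : (p : ℕ) < j) :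
    (joinFun h σ ρ p : ℕ) = m + σ ⟨p, hp⟩ := by
  simp [joinFun, hp]

theorem joinFunAux_coe_eq (h : n = j + 1 + m) (σ : Equiv.Perm (Fin j)) (ρ : Equiv.Perm (Fin m))
    {p : Fin n} (hp : (p : ℕ) = j) :
    (joinFun h σ ρ p : ℕ) = j + m := by
  simp [joinFun, hp]

theorem joinFunAux_coe_gt (h : n = j + 1 + m) (σ : Equiv.Perm (Fin j)) (ρ : Equiv.Perm (Fin m))
    {p : Fin n} (hp : j < (p : ℕ)) :
    (joinFun h σ ρ p : ℕ) = ρ ⟨(p : ℕ) - (j + 1), by have := p.isLt; omega⟩ := by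
  have h1 : ¬ (p : ℕ) < j := by omega
  have h2 : ¬ (p : ℕ) = j := by omega
  simp [joinFun, h1, h2]

theorem joinFun_injective (h : n = j + 1 + m) (σ : Equiv.Perm (Fin j)) (ρ : Equiv.Perm (Fin m)) :
    Function.Injective (joinFun h σ ρ) := by
  intro p q hpq
  have hv : (joinFun h σ ρ p : ℕ) = (joinFun h σ ρ q : ℕ) := by rw [hpq]
  rcases lt_trichotomy (p : ℕ) j with hp | hp | hp <;>
    rcases lt_trichotomy (q : ℕ) j with hq | hq | hq
  · rw [joinFunAux_coe_lt h σ ρ hp, joinFunAux_coe_lt h σ ρ hq] at hv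
    have : σ ⟨p, hp⟩ = σ ⟨q, hq⟩ := Fin.ext (by omega)
    have := σ.injective this
    exact Fin.ext (by simpa [Fin.ext_iff] using this)
  · rw [joinFunAux_coe_lt h σ ρ hp, joinFunAux_coe_eq h σ ρ hq] at hv
    have := (σ ⟨p, hp⟩).isLt; omega
  · rw [joinFunAux_coe_lt h σ ρ hp, joinFunAux_coe_gt h σ ρ hq] at hv
    have := (σ ⟨p, hp⟩).isLt
    have := (ρ ⟨(q : ℕ) - (j + 1), by have := q.isLt; omega⟩).isLt
    omega
  · rw [joinFunAux_coe_eq h σ ρ hp, joinFunAux_coe_lt h σ ρ hq] at hv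
    have := (σ ⟨q, hq⟩).isLt; omega
  · exact Fin.ext (by omega)
  · rw [joinFunAux_coe_eq h σ ρ hp, joinFunAux_coe_gt h σ ρ hq] at hv
    have := (ρ ⟨(q : ℕ) - (j + 1), by have := q.isLt; omega⟩).isLt
    omega
  · rw [joinFunAux_coe_gt h σ ρ hp, joinFunAux_coe_lt h σ ρ hq] at hv
    have := (σ ⟨q, hq⟩).isLt
    have := (ρ ⟨(p : ℕ) - (j + 1), by have := p.isLt; omega⟩).isLt
    omega
  · rw [joinFunAux_coe_gt h σ ρ hp, joinFunAux_coe_eq h σ ρ hq] at hv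
    have := (ρ ⟨(p : ℕ) - (j + 1), by have := p.isLt; omega⟩).isLt
    omega
  · rw [joinFunAux_coe_gt h σ ρ hp, joinFunAux_coe_gt h σ ρ hq] at hv
    have : ρ ⟨(p : ℕ) - (j + 1), by have := p.isLt; omega⟩
        = ρ ⟨(q : ℕ) - (j + 1), by have := q.isLt; omega⟩ := Fin.ext (by omega)
    have := ρ.injective this
    rw [Fin.ext_iff] at this
    simp only at this
    exact Fin.ext (by omega)

noncomputable def join (h : n = j + 1 + m) (σ : Equiv.Perm (Fin j)) (ρ : Equiv.Perm (Fin m)) :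
    Equiv.Perm (Fin n) :=
  Equiv.ofBijective (joinFun h σ ρ)
    (Finite.injective_iff_bijective.mp (joinFun_injective h σ ρ))

theorem join_apply (h : n = j + 1 + m) (σ : Equiv.Perm (Fin j)) (ρ : Equiv.Perm (Fin m))
    (p : Fin n) : join h σ ρ p = joinFun h σ ρ p := rfl

theorem joinFun_coe_lt (h : n = j + 1 + m) (σ : Equiv.Perm (Fin j)) (ρ : Equiv.Perm (Fin m))
    {p : Fin n} (hp : (p : ℕ) < j) : ((join h σ ρ p : Fin n) : ℕ) = m + σ ⟨p, hp⟩ :=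
  joinFunAux_coe_lt h σ ρ hp

theorem joinFun_coe_eq (h : n = j + 1 + m) (σ : Equiv.Perm (Fin j)) (ρ : Equiv.Perm (Fin m))
    {p : Fin n} (hp : (p : ℕ) = j) : ((join h σ ρ p : Fin n) : ℕ) = j + m :=
  joinFunAux_coe_eq h σ ρ hp

theorem joinFun_coe_gt (h : n = j + 1 + m) (σ : Equiv.Perm (Fin j)) (ρ : Equiv.Perm (Fin m))
    {p : Fin n} (hp : j < (p : ℕ)) :
    ((join h σ ρ p : Fin n) : ℕ) = ρ ⟨(p : ℕ) - (j + 1), by have := p.isLt; omega⟩ :=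
  joinFunAux_coe_gt h σ ρ hp





theorem join_coe_L (h : n = j + 1 + m) (σ : Equiv.Perm (Fin j)) (ρ : Equiv.Perm (Fin m))
    (a : Fin j) : ((join h σ ρ) ⟨(a : ℕ), by omega⟩ : ℕ) = m + σ a := by
  rw [joinFun_coe_lt h σ ρ (p := ⟨(a : ℕ), by omega⟩) (by simpa using a.isLt)]

theorem join_coe_R (h : n = j + 1 + m) (σ : Equiv.Perm (Fin j)) (ρ : Equiv.Perm (Fin m))
    (a : Fin m) : ((join h σ ρ) ⟨j + 1 + (a : ℕ), by omega⟩ : ℕ) = ρ a := by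
  rw [joinFun_coe_gt h σ ρ (p := ⟨j + 1 + (a : ℕ), by omega⟩) (by simp; omega)]
  exact congrArg (fun x => ((ρ x : Fin m) : ℕ)) (Fin.ext (by simp))

theorem avoids132_join_iff (h : n = j + 1 + m) (σ : Equiv.Perm (Fin j))
    (ρ : Equiv.Perm (Fin m)) :
    Avoids132 (join h σ ρ) ↔ Avoids132 σ ∧ Avoids132 ρ := by
  constructor
  · intro hav
    constructor
    · rintro ⟨a, b, c, hab, hbc, h1, h2⟩
      apply hav
      refine ⟨⟨(a : ℕ), by omega⟩, ⟨(b : ℕ), by omega⟩, ⟨(c : ℕ), by omega⟩, ?_, ?_, ?_, ?_⟩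
      · exact Fin.lt_def.mpr (by simpa using Fin.lt_def.mp hab)
      · exact Fin.lt_def.mpr (by simpa using Fin.lt_def.mp hbc)
      · refine Fin.lt_def.mpr ?_
        rw [join_coe_L h σ ρ a, join_coe_L h σ ρ c]
        have := Fin.lt_def.mp h1; omega
      · refine Fin.lt_def.mpr ?_
        rw [join_coe_L h σ ρ c, join_coe_L h σ ρ b]
        have := Fin.lt_def.mp h2; omega
    · rintro ⟨a, b, c, hab, hbc, h1, h2⟩
      apply hav
      refine ⟨⟨j + 1 + (a : ℕ), by omega⟩, ⟨j + 1 + (b : ℕ), by omega⟩,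
        ⟨j + 1 + (c : ℕ), by omega⟩, ?_, ?_, ?_, ?_⟩
      · exact Fin.lt_def.mpr (by simpa using Fin.lt_def.mp hab)
      · exact Fin.lt_def.mpr (by simpa using Fin.lt_def.mp hbc)
      · refine Fin.lt_def.mpr ?_
        rw [join_coe_R h σ ρ a, join_coe_R h σ ρ c]
        exact Fin.lt_def.mp h1
      · refine Fin.lt_def.mpr ?_
        rw [join_coe_R h σ ρ c, join_coe_R h σ ρ b]
        exact Fin.lt_def.mp h2
  · rintro ⟨hσ, hρ⟩ ⟨a, b, c, hab, hbc, h1, h2⟩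
    have hab' := Fin.lt_def.mp hab
    have hbc' := Fin.lt_def.mp hbc
    have h1' := Fin.lt_def.mp h1
    have h2' := Fin.lt_def.mp h2
    rcases lt_trichotomy (c : ℕ) j with hc | hc | hc
    · have ha : (a : ℕ) < j := by omega
      have hb : (b : ℕ) < j := by omega
      rw [joinFun_coe_lt h σ ρ ha, joinFun_coe_lt h σ ρ hc] at h1'
      rw [joinFun_coe_lt h σ ρ hc, joinFun_coe_lt h σ ρ hb] at h2'
      exact hσ ⟨⟨a, ha⟩, ⟨b, hb⟩, ⟨c, hc⟩, Fin.lt_def.mpr (by simpa using hab'),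
        Fin.lt_def.mpr (by simpa using hbc'),
        Fin.lt_def.mpr (by omega), Fin.lt_def.mpr (by omega)⟩
    · rw [joinFun_coe_eq h σ ρ hc] at h2'
      have : ((join h σ ρ) b : ℕ) < n := (join h σ ρ b).isLt
      omega
    · have hcm : ((join h σ ρ) c : ℕ) < m := by
        rw [joinFun_coe_gt h σ ρ hc]; exact (ρ _).isLt
      have ha : j < (a : ℕ) := by
        rcases lt_trichotomy (a : ℕ) j with ha | ha | ha
        · rw [joinFun_coe_lt h σ ρ ha] at h1'; omega
        · rw [joinFun_coe_eq h σ ρ ha] at h1'; omega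
        · exact ha
      have hb : j < (b : ℕ) := by omega
      rw [joinFun_coe_gt h σ ρ ha, joinFun_coe_gt h σ ρ hc] at h1'
      rw [joinFun_coe_gt h σ ρ hc, joinFun_coe_gt h σ ρ hb] at h2'
      exact hρ ⟨⟨(a : ℕ) - (j + 1), by have := a.isLt; omega⟩,
        ⟨(b : ℕ) - (j + 1), by have := b.isLt; omega⟩,
        ⟨(c : ℕ) - (j + 1), by have := c.isLt; omega⟩,
        Fin.lt_def.mpr (by simp; omega), Fin.lt_def.mpr (by simp; omega),
        Fin.lt_def.mpr (by omega), Fin.lt_def.mpr (by omega)⟩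




theorem containsPat_restrict {d k : ℕ} (hk : 1 ≤ k) (π : Equiv.Perm (Fin d))
    (τ : Fin k → Fin k) (τ' : Fin (k - 1) → Fin (k - 1))
    (hres : ∀ i : Fin (k - 1), (τ (Fin.castLE (by omega) i) : ℕ) = (τ' i : ℕ)) :
    ContainsPat π τ → ContainsPat π τ' := by
  rintro ⟨f, hf, hiff⟩
  refine ⟨f ∘ Fin.castLE (by omega), hf.comp (Fin.strictMono_castLE _), fun a b => ?_⟩
  have h1 := hiff (Fin.castLE (by omega) a) (Fin.castLE (by omega) b)
  rw [Fin.lt_def, hres a, hres b] at h1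
  rw [Fin.lt_def]
  exact h1

theorem containsPat_join_iff {k : ℕ} (h : n = j + 1 + m) (σ : Equiv.Perm (Fin j))
    (ρ : Equiv.Perm (Fin m))
    (τ : Fin k → Fin k) (τ' : Fin (k - 1) → Fin (k - 1))
    (hk : 1 ≤ k)
    (hinj : Function.Injective τ)
    (hlast : (τ ⟨k - 1, by omega⟩ : ℕ) = k - 1)
    (hres : ∀ i : Fin (k - 1), (τ (Fin.castLE (by omega) i) : ℕ) = (τ' i : ℕ))
    (hsplit : ∀ t : ℕ, 0 < t → t < k → ∃ a b : Fin k, (a : ℕ) < t ∧ t ≤ (b : ℕ) ∧ τ a < τ b) :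
    ContainsPat (join h σ ρ) τ ↔ ContainsPat σ τ' ∨ ContainsPat ρ τ := by
  constructor
  · rintro ⟨F, hF, hiff⟩
    by_cases hmid : ∃ i : Fin k, (F i : ℕ) = j
    · -- the max position is used; pattern index there must be the last one
      obtain ⟨i, hi⟩ := hmid
      left
      have hFi : ((join h σ ρ) (F i) : ℕ) = j + m := joinFun_coe_eq h σ ρ hi
      have hmax : ∀ b : Fin k, b ≠ i → τ b < τ i := by
        intro b hb
        rw [hiff]
        refine Fin.lt_def.mpr ?_
        rw [hFi]
        have h1 : ((join h σ ρ) (F b) : ℕ) < n := (((join h σ ρ)) (F b)).isLt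
        have h2 : (join h σ ρ) (F b) ≠ (join h σ ρ) (F i) :=
          fun e => hb (hF.injective ((join h σ ρ).injective e))
        have h3 : ((join h σ ρ) (F b) : ℕ) ≠ j + m := by
          intro e; exact h2 (Fin.ext (by rw [e, hFi]))
        omega
      have hτi : (τ i : ℕ) = k - 1 := by
        by_contra hne
        obtain ⟨b, hb⟩ := (Finite.injective_iff_surjective.mp hinj) ⟨k - 1, by omega⟩
        have hbi : b ≠ i := by rintro rfl; rw [hb] at hne; exact hne rfl
        have h5 := Fin.lt_def.mp (hmax b hbi)
        rw [hb] at h5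
        have h6 : ((⟨k - 1, by omega⟩ : Fin k) : ℕ) = k - 1 := rfl
        rw [h6] at h5
        have : (τ i : ℕ) < k := (τ i).isLt
        omega
      have hie : (i : ℕ) = k - 1 := by
        have h7 : ((⟨k - 1, by omega⟩ : Fin k) : ℕ) = k - 1 := rfl
        by_contra hne
        have hbi : (⟨k - 1, by omega⟩ : Fin k) ≠ i := by
          intro e
          rw [← e, h7] at hne
          exact hne rfl
        have h5 := Fin.lt_def.mp (hmax _ hbi)
        rw [hlast] at h5
        omega
      -- all other indices map into the left block
      have hL : ∀ b : Fin (k - 1), (F (Fin.castLE (by omega) b) : ℕ) < j := by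
        intro b
        have hlt : Fin.castLE (by omega : k - 1 ≤ k) b < i := Fin.lt_def.mpr (by
          rw [Fin.coe_castLE, hie]; exact b.isLt)
        have h8 := Fin.lt_def.mp (hF hlt)
        omega
      let g : Fin (k - 1) → Fin j := fun b => ⟨(F (Fin.castLE (by omega) b) : ℕ), hL b⟩
      have key : ∀ a : Fin (k - 1),
          ((join h σ ρ) (F (Fin.castLE (by omega) a)) : ℕ) = m + (σ (g a) : ℕ) :=
        fun a => joinFun_coe_lt h σ ρ (hL a)
      refine ⟨g, ?_, ?_⟩
      · intro a b hab
        refine Fin.lt_def.mpr ?_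
        show (F (Fin.castLE (by omega) a) : ℕ) < (F (Fin.castLE (by omega) b) : ℕ)
        exact Fin.lt_def.mp (hF (Fin.lt_def.mpr (by
          rw [Fin.coe_castLE, Fin.coe_castLE]; exact Fin.lt_def.mp hab)))
      · intro a b
        have h1 := hiff (Fin.castLE (by omega) a) (Fin.castLE (by omega) b)
        rw [Fin.lt_def, Fin.lt_def, hres a, hres b, key a, key b] at h1
        rw [Fin.lt_def, Fin.lt_def]
        constructor
        · intro hh; have := h1.mp hh; omega
        · intro hh; exact h1.mpr (by omega)
    · push_neg at hmid
      by_cases hall : ∀ i : Fin k, j < (F i : ℕ)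
      · -- all in the right block
        right
        have hR : ∀ i : Fin k, (F i : ℕ) - (j + 1) < m := by
          intro i; have := (F i).isLt; have := hall i; omega
        let g : Fin k → Fin m := fun i => ⟨(F i : ℕ) - (j + 1), hR i⟩
        have key : ∀ a : Fin k, ((join h σ ρ) (F a) : ℕ) = (ρ (g a) : ℕ) :=
          fun a => joinFun_coe_gt h σ ρ (hall a)
        refine ⟨g, ?_, ?_⟩
        · intro a b hab
          refine Fin.lt_def.mpr ?_
          show (F a : ℕ) - (j + 1) < (F b : ℕ) - (j + 1)
          have := Fin.lt_def.mp (hF hab)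
          have := hall a; have := hall b
          omega
        · intro a b
          have h1 := hiff a b
          rw [Fin.lt_def, Fin.lt_def, key a, key b] at h1
          rw [Fin.lt_def, Fin.lt_def]
          exact h1
      · push_neg at hall
        obtain ⟨i₀, hi₀⟩ := hall
        have hi₀' : (F i₀ : ℕ) < j := lt_of_le_of_ne hi₀ (hmid i₀)
        by_cases hallL : ∀ i : Fin k, (F i : ℕ) < j
        · -- all in the left block
          left
          have hcon : ContainsPat σ τ := by
            let g : Fin k → Fin j := fun i => ⟨(F i : ℕ), hallL i⟩
            have key : ∀ a : Fin k, ((join h σ ρ) (F a) : ℕ) = m + (σ (g a) : ℕ) :=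
              fun a => joinFun_coe_lt h σ ρ (hallL a)
            refine ⟨g, ?_, ?_⟩
            · intro a b hab
              refine Fin.lt_def.mpr ?_
              show (F a : ℕ) < (F b : ℕ)
              exact Fin.lt_def.mp (hF hab)
            · intro a b
              have h1 := hiff a b
              rw [Fin.lt_def, Fin.lt_def, key a, key b] at h1
              rw [Fin.lt_def, Fin.lt_def]
              constructor
              · intro hh; have := h1.mp hh; omega
              · intro hh; exact h1.mpr (by omega)
          exact containsPat_restrict hk σ τ τ' hres hcon
        · -- split occurrence: impossible
          exfalso
          push_neg at hallL
          obtain ⟨i₁, hi₁⟩ := hallL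
          have hi₁' : j < (F i₁ : ℕ) :=
            lt_of_le_of_ne hi₁ (fun e => hmid i₁ e.symm)
          have hne : (Finset.univ.filter fun i : Fin k => j < (F i : ℕ)).Nonempty := by
            refine ⟨i₁, ?_⟩
            rw [Finset.mem_filter]
            exact ⟨Finset.mem_univ _, hi₁'⟩
          obtain ⟨i₂, hmem, hmin⟩ := Finset.exists_min_image _ id hne
          rw [Finset.mem_filter] at hmem
          have hi₂mem : j < (F i₂ : ℕ) := hmem.2
          have ht0 : 0 < (i₂ : ℕ) := by
            by_contra h0
            push_neg at h0
            have h01 : (i₂ : ℕ) = 0 := by omega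
            have : i₂ ≤ i₀ := Fin.le_def.mpr (by omega)
            have := Fin.le_def.mp (hF.le_iff_le.mpr this)
            omega
          obtain ⟨a, b, hat, htb, hab⟩ := hsplit (i₂ : ℕ) ht0 i₂.isLt
          have haL : (F a : ℕ) < j := by
            have hamem : a ∉ Finset.univ.filter fun i : Fin k => j < (F i : ℕ) := by
              intro hmem2
              have := hmin a hmem2
              simp only [id] at this
              have := Fin.le_def.mp this
              omega
            rw [Finset.mem_filter] at hamem
            push_neg at hamem
            exact lt_of_le_of_ne (hamem (Finset.mem_univ _)) (hmid a)
          have hbR : j < (F b : ℕ) := by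
            have hle : i₂ ≤ b := Fin.le_def.mpr htb
            have := Fin.le_def.mp (hF.le_iff_le.mpr hle)
            omega
          have hvv := Fin.lt_def.mp ((hiff a b).mp hab)
          rw [joinFun_coe_lt h σ ρ haL, joinFun_coe_gt h σ ρ hbR] at hvv
          have := (ρ ⟨(F b : ℕ) - (j + 1), by have := (F b).isLt; omega⟩).isLt
          omega
  · rintro (⟨f, hf, hiff⟩ | ⟨f, hf, hiff⟩)
    · -- embed occurrence of τ' into left block, max position as the last element
      let F : Fin k → Fin n := fun i =>
        if hi : (i : ℕ) < k - 1 then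
          ⟨(f ⟨i, hi⟩ : ℕ), by have := (f ⟨i, hi⟩).isLt; omega⟩
        else ⟨j, by omega⟩
      have hFlt : ∀ (i : Fin k) (hi : (i : ℕ) < k - 1),
          (F i : ℕ) = (f ⟨i, hi⟩ : ℕ) := by
        intro i hi
        show ((fun i : Fin k => if hi : (i : ℕ) < k - 1 then
          (⟨(f ⟨i, hi⟩ : ℕ), by have := (f ⟨i, hi⟩).isLt; omega⟩ : Fin n)
          else ⟨j, by omega⟩) i : ℕ) = _
        beta_reduce
        rw [dif_pos hi]
      have hFlast : ∀ (i : Fin k), ¬ ((i : ℕ) < k - 1) → (F i : ℕ) = j := by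
        intro i hi
        show ((fun i : Fin k => if hi : (i : ℕ) < k - 1 then
          (⟨(f ⟨i, hi⟩ : ℕ), by have := (f ⟨i, hi⟩).isLt; omega⟩ : Fin n)
          else ⟨j, by omega⟩) i : ℕ) = _
        beta_reduce
        rw [dif_neg hi]
      have keyL : ∀ (i : Fin k) (hi : (i : ℕ) < k - 1),
          ((join h σ ρ) (F i) : ℕ) = m + (σ (f ⟨i, hi⟩) : ℕ) := by
        intro i hi
        have h1 : (F i : ℕ) < j := by rw [hFlt i hi]; exact (f ⟨i, hi⟩).isLt
        rw [joinFun_coe_lt h σ ρ h1]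
        have h2 : (⟨(F i : ℕ), h1⟩ : Fin j) = f ⟨i, hi⟩ := Fin.ext (hFlt i hi)
        rw [h2]
      have keyR : ∀ (i : Fin k), ¬ ((i : ℕ) < k - 1) →
          ((join h σ ρ) (F i) : ℕ) = j + m := by
        intro i hi
        exact joinFun_coe_eq h σ ρ (hFlast i hi)
      have hτlast : ∀ (i : Fin k), ¬ ((i : ℕ) < k - 1) → (τ i : ℕ) = k - 1 := by
        intro i hi
        have : i = ⟨k - 1, by omega⟩ :=
          Fin.ext (show (i : ℕ) = k - 1 by have := i.isLt; omega)
        rw [this]; exact hlast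
      have hτlt : ∀ (i : Fin k) (hi : (i : ℕ) < k - 1), (τ i : ℕ) = (τ' ⟨i, hi⟩ : ℕ) := by
        intro i hi
        have e : i = Fin.castLE (by omega) (⟨(i : ℕ), hi⟩ : Fin (k - 1)) := Fin.ext rfl
        conv_lhs => rw [e]
        exact hres _
      have hτsmall : ∀ (i : Fin k) (hi : (i : ℕ) < k - 1), (τ i : ℕ) < k - 1 := by
        intro i hi
        have h1 : i ≠ ⟨k - 1, by omega⟩ := by
          intro e
          rw [Fin.ext_iff] at e
          simp only at e
          omega
        have h2 : τ i ≠ τ ⟨k - 1, by omega⟩ := fun e => h1 (hinj e)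
        have h3 : (τ i : ℕ) ≠ k - 1 := fun e => h2 (Fin.ext (e.trans hlast.symm))
        have := (τ i).isLt
        omega
      refine ⟨F, ?_, ?_⟩
      · intro a b hab
        have hab' := Fin.lt_def.mp hab
        refine Fin.lt_def.mpr ?_
        by_cases hb : (b : ℕ) < k - 1
        · have ha : (a : ℕ) < k - 1 := by omega
          rw [hFlt a ha, hFlt b hb]
          exact Fin.lt_def.mp (hf (Fin.lt_def.mpr (by simpa using hab')))
        · have ha : (a : ℕ) < k - 1 := by have := b.isLt; omega
          rw [hFlt a ha, hFlast b hb]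
          exact (f ⟨a, ha⟩).isLt
      · intro a b
        rw [Fin.lt_def, Fin.lt_def]
        by_cases ha : (a : ℕ) < k - 1 <;> by_cases hb : (b : ℕ) < k - 1
        · rw [keyL a ha, keyL b hb, hτlt a ha, hτlt b hb]
          have h1 := hiff ⟨a, ha⟩ ⟨b, hb⟩
          rw [Fin.lt_def, Fin.lt_def] at h1
          constructor
          · intro hh; have := h1.mp (by omega); omega
          · intro hh; have := h1.mpr (by omega); omega
        · rw [keyL a ha, keyR b hb, hτlt a ha, hτlast b hb]
          have := hτsmall a ha
          have h2 := (σ (f ⟨a, ha⟩)).isLt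
          rw [hτlt a ha] at this
          constructor <;> intro _ <;> omega
        · rw [keyR a ha, keyL b hb, hτlast a ha, hτlt b hb]
          have := hτsmall b hb
          have h2 := (σ (f ⟨b, hb⟩)).isLt
          rw [hτlt b hb] at this
          constructor <;> intro _ <;> omega
        · have : a = b := Fin.ext (by have := a.isLt; have := b.isLt; omega)
          subst this
          constructor <;> intro hh <;> exact absurd hh (lt_irrefl _)
    · -- embed occurrence of τ into right block
      have hRb : ∀ i : Fin k, j + 1 + (f i : ℕ) < n := by
        intro i; have := (f i).isLt; omega
      let F : Fin k → Fin n := fun i => ⟨j + 1 + (f i : ℕ), hRb i⟩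
      have key : ∀ a : Fin k, ((join h σ ρ) (F a) : ℕ) = (ρ (f a) : ℕ) := by
        intro a
        have h1 : j < (F a : ℕ) := by show j < j + 1 + (f a : ℕ); omega
        rw [joinFun_coe_gt h σ ρ h1]
        congr 2
        refine Fin.ext ?_
        show j + 1 + (f a : ℕ) - (j + 1) = (f a : ℕ)
        omega
      refine ⟨F, ?_, ?_⟩
      · intro a b hab
        refine Fin.lt_def.mpr ?_
        show j + 1 + (f a : ℕ) < j + 1 + (f b : ℕ)
        have := Fin.lt_def.mp (hf hab)
        omega
      · intro a b
        rw [Fin.lt_def, Fin.lt_def, key a, key b]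
        exact (hiff a b).trans (by rw [Fin.lt_def])




theorem exists_join {π : Equiv.Perm (Fin n)} (hn : 0 < n) (hπ : Avoids132 π) :
    ∃ (jp : ℕ) (hj : jp < n) (σ : Equiv.Perm (Fin jp))
      (ρ : Equiv.Perm (Fin (n - 1 - jp))),
      π = join (by omega) σ ρ := by
  classical
  set top : Fin n := ⟨n - 1, by omega⟩ with htop
  set jpF : Fin n := π⁻¹ top with hjpF
  set jp : ℕ := (jpF : ℕ) with hjp
  set M : ℕ := n - 1 - jp with hM
  have hj : jp < n := jpF.isLt
  have hmaxval : (π jpF : ℕ) = n - 1 := by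
    rw [hjpF, Equiv.Perm.inv_def, Equiv.apply_symm_apply]
  have hne_top : ∀ p : Fin n, p ≠ jpF → (π p : ℕ) < n - 1 := by
    intro p hp
    have h1 : π p ≠ π jpF := fun e => hp (π.injective e)
    have h2 : (π p : ℕ) ≠ n - 1 := fun e => h1 (Fin.ext (by rw [e, hmaxval]))
    have := (π p).isLt
    omega
  -- positions after jp have small values
  have hB : ∀ q : Fin n, jp < (q : ℕ) → (π q : ℕ) < M := by
    intro q hq
    -- all positions < jp have bigger values than q (by 132-avoidance)
    have hbig : ∀ p : Fin n, (p : ℕ) < jp → π q < π p := by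
      intro p hp
      rcases lt_trichotomy (π q) (π p) with hh | hh | hh
      · exact hh
      · exact absurd (π.injective hh) (by
          intro e; rw [e] at hq; omega)
      · exfalso
        apply hπ
        refine ⟨p, jpF, q, Fin.lt_def.mpr hp, Fin.lt_def.mpr hq, hh, ?_⟩
        refine Fin.lt_def.mpr ?_
        rw [hmaxval]
        exact hne_top q (by intro e; rw [e] at hq; omega)
    -- build a finset of jp+1 values all above π q
    set S : Finset (Fin n) :=
      insert (π jpF) ((Finset.Iio jpF).image (fun p => π p)) with hS
    have hScard : S.card = jp + 1 := by
      rw [hS, Finset.card_insert_of_notMem, Finset.card_image_of_injective _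
        (fun a b hab => π.injective hab), Fin.card_Iio]
      intro hmem
      obtain ⟨p, hp1, hp2⟩ := Finset.mem_image.mp hmem
      have := π.injective hp2
      rw [this] at hp1
      exact absurd (Finset.mem_Iio.mp hp1) (lt_irrefl _)
    have hSsub : S ⊆ Finset.Ioi (π q) := by
      intro x hx
      rw [hS, Finset.mem_insert] at hx
      rcases hx with hx | hx
      · subst hx
        rw [Finset.mem_Ioi]
        refine Fin.lt_def.mpr ?_
        rw [hmaxval]
        exact hne_top q (by intro e; rw [e] at hq; omega)
      · obtain ⟨p, hp1, hp2⟩ := Finset.mem_image.mp hx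
        rw [Finset.mem_Iio] at hp1
        rw [Finset.mem_Ioi, ← hp2]
        exact hbig p (Fin.lt_def.mp hp1)
    have := Finset.card_le_card hSsub
    rw [hScard, Fin.card_Ioi] at this
    omega
  -- positions before jp have large values
  have hA : ∀ p : Fin n, (p : ℕ) < jp → M ≤ (π p : ℕ) := by
    intro p hp
    by_contra hcon
    push_neg at hcon
    have hMn : M < n := by omega
    -- the M values below M are all taken by positions after jp
    set B : Finset (Fin n) :=
      (Finset.Ioi jpF).image (fun q => π q) with hBdef
    have hBcard : B.card = M := by
      rw [hBdef, Finset.card_image_of_injective _ (fun a b hab => π.injective hab),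
        Fin.card_Ioi]
    have hBsub : B ⊆ Finset.Iio ⟨M, hMn⟩ := by
      intro x hx
      obtain ⟨q, hq1, hq2⟩ := Finset.mem_image.mp hx
      rw [Finset.mem_Ioi] at hq1
      rw [Finset.mem_Iio, ← hq2]
      exact Fin.lt_def.mpr (hB q (Fin.lt_def.mp hq1))
    have hBeq : B = Finset.Iio ⟨M, hMn⟩ := by
      apply Finset.eq_of_subset_of_card_le hBsub
      rw [hBcard, Fin.card_Iio]
    have hπpB : π p ∈ B := by
      rw [hBeq, Finset.mem_Iio]
      exact Fin.lt_def.mpr hcon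
    obtain ⟨q, hq1, hq2⟩ := Finset.mem_image.mp hπpB
    have := π.injective hq2
    rw [Finset.mem_Ioi] at hq1
    rw [this] at hq1
    have := Fin.lt_def.mp hq1
    omega
  -- build σ and ρ
  have hσb : ∀ p : Fin jp, (π ⟨(p : ℕ), by omega⟩ : ℕ) - M < jp := by
    intro p
    have h1 := hne_top ⟨(p : ℕ), by omega⟩ (by
      intro e
      have := congrArg Fin.val e
      simp only at this
      omega)
    have h2 := hA ⟨(p : ℕ), by omega⟩ (by simpa using p.isLt)
    omega
  have hσinj : Function.Injective
      (fun p : Fin jp => (⟨(π ⟨(p : ℕ), by omega⟩ : ℕ) - M, hσb p⟩ : Fin jp)) := by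
    intro p q hpq
    have h1 := hA ⟨(p : ℕ), by omega⟩ (by simpa using p.isLt)
    have h2 := hA ⟨(q : ℕ), by omega⟩ (by simpa using q.isLt)
    have h3 : (π ⟨(p : ℕ), by omega⟩ : ℕ) = (π ⟨(q : ℕ), by omega⟩ : ℕ) := by
      have := congrArg Fin.val hpq
      simp only at this
      omega
    have h4 := π.injective (Fin.ext h3 :
      π ⟨(p : ℕ), by omega⟩ = π ⟨(q : ℕ), by omega⟩)
    have := congrArg Fin.val h4
    simp only at this
    exact Fin.ext this
  have hρb : ∀ t : Fin (n - 1 - jp), (π ⟨jp + 1 + (t : ℕ), by have := t.isLt; omega⟩ : ℕ) < M := by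
    intro t
    exact hB _ (by simp only; omega)
  have hρinj : Function.Injective
      (fun t : Fin (n - 1 - jp) =>
        (⟨(π ⟨jp + 1 + (t : ℕ), by have := t.isLt; omega⟩ : ℕ), hρb t⟩ : Fin (n - 1 - jp))) := by
    intro p q hpq
    have h3 : (π ⟨jp + 1 + (p : ℕ), by have := p.isLt; omega⟩ : ℕ)
        = (π ⟨jp + 1 + (q : ℕ), by have := q.isLt; omega⟩ : ℕ) := by
      have := congrArg Fin.val hpq
      simpa using this
    have h4 := π.injective (Fin.ext h3 :
      π ⟨jp + 1 + (p : ℕ), by have := p.isLt; omega⟩ = π ⟨jp + 1 + (q : ℕ), by have := q.isLt; omega⟩)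
    have := congrArg Fin.val h4
    simp only at this
    exact Fin.ext (by omega)
  set σ : Equiv.Perm (Fin jp) :=
    Equiv.ofBijective _ (Finite.injective_iff_bijective.mp hσinj) with hσdef
  set ρ : Equiv.Perm (Fin (n - 1 - jp)) :=
    Equiv.ofBijective _ (Finite.injective_iff_bijective.mp hρinj) with hρdef
  refine ⟨jp, hj, σ, ρ, ?_⟩
  apply Equiv.ext
  intro p
  apply Fin.ext
  rcases lt_trichotomy (p : ℕ) jp with hp | hp | hp
  · rw [joinFun_coe_lt (by omega) σ ρ hp]
    have hσval : (σ ⟨(p : ℕ), hp⟩ : ℕ) = (π ⟨(p : ℕ), by omega⟩ : ℕ) - M := rfl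
    have h2 := hA ⟨(p : ℕ), by omega⟩ (by simpa using hp)
    have hpe : (⟨(p : ℕ), by omega⟩ : Fin n) = p := Fin.ext rfl
    rw [hpe] at h2
    rw [hσval]
    have : π (⟨(p : ℕ), by omega⟩ : Fin n) = π p := by rw [hpe]
    rw [this]
    omega
  · rw [joinFun_coe_eq (by omega) σ ρ hp]
    have : p = jpF := Fin.ext hp
    rw [this, hmaxval]
    omega
  · rw [joinFun_coe_gt (by omega) σ ρ hp]
    have hρval : (ρ ⟨(p : ℕ) - (jp + 1), by have := p.isLt; omega⟩ : ℕ)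
        = (π ⟨jp + 1 + ((p : ℕ) - (jp + 1)), by have := p.isLt; omega⟩ : ℕ) := rfl
    rw [hρval]
    have hpe : (⟨jp + 1 + ((p : ℕ) - (jp + 1)), by have := p.isLt; omega⟩ : Fin n) = p :=
      Fin.ext (by simp only; omega)
    rw [hpe]




theorem pat2134_coe {k : ℕ} (i : Fin k) :
    (pat2134 k i : ℕ) = if (i : ℕ) = 0 then 1 % k else if (i : ℕ) = 1 then 0 else (i : ℕ) := by
  unfold pat2134
  by_cases h0 : (i : ℕ) = 0
  · rw [if_pos h0, if_pos h0]
  · rw [if_neg h0, if_neg h0]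
    by_cases h1 : (i : ℕ) = 1
    · rw [if_pos h1, if_pos h1]
    · rw [if_neg h1, if_neg h1]

theorem pat2134_injective {k : ℕ} : Function.Injective (pat2134 k) := by
  intro a b hab
  have h := congrArg Fin.val hab
  rw [pat2134_coe, pat2134_coe] at h
  have ha := a.isLt
  have hb := b.isLt
  by_cases hk2 : 2 ≤ k
  · have hm : 1 % k = 1 := Nat.mod_eq_of_lt (by omega)
    apply Fin.ext
    split_ifs at h <;> omega
  · apply Fin.ext
    omega

theorem pat2134_last {k : ℕ} (hk : 3 ≤ k) : (pat2134 k ⟨k - 1, by omega⟩ : ℕ) = k - 1 := by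
  rw [pat2134_coe]
  have : ¬ ((⟨k - 1, by omega⟩ : Fin k) : ℕ) = 0 := by simp only; omega
  rw [if_neg this]
  have : ¬ ((⟨k - 1, by omega⟩ : Fin k) : ℕ) = 1 := by simp only; omega
  rw [if_neg this]

theorem pat2134_res {k : ℕ} (hk : 3 ≤ k) (i : Fin (k - 1)) :
    (pat2134 k (Fin.castLE (by omega) i) : ℕ) = (pat2134 (k - 1) i : ℕ) := by
  rw [pat2134_coe, pat2134_coe]
  have hc : ((Fin.castLE (by omega : k - 1 ≤ k) i : Fin k) : ℕ) = (i : ℕ) := rfl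
  rw [hc]
  by_cases h0 : (i : ℕ) = 0
  · rw [if_pos h0, if_pos h0]
    have hm1 : 1 % k = 1 := Nat.mod_eq_of_lt (by omega)
    have hm2 : 1 % (k - 1) = 1 := Nat.mod_eq_of_lt (by omega)
    omega
  · rw [if_neg h0, if_neg h0]

theorem pat2134_split {k : ℕ} (hk : 3 ≤ k) (t : ℕ) (ht0 : 0 < t) (htk : t < k) :
    ∃ a b : Fin k, (a : ℕ) < t ∧ t ≤ (b : ℕ) ∧ pat2134 k a < pat2134 k b := by
  have hm : 1 % k = 1 := Nat.mod_eq_of_lt (by omega)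
  by_cases ht1 : t = 1
  · refine ⟨⟨0, by omega⟩, ⟨2, by omega⟩, by simp [ht1], by simp only; omega, ?_⟩
    refine Fin.lt_def.mpr ?_
    rw [pat2134_coe, pat2134_coe]
    simp only
    norm_num
    omega
  · refine ⟨⟨1, by omega⟩, ⟨t, by omega⟩, by simp only; omega, by simp only; omega, ?_⟩
    refine Fin.lt_def.mpr ?_
    rw [pat2134_coe, pat2134_coe]
    simp only
    norm_num
    rw [if_neg (by omega), if_neg ht1]
    omega

theorem id_last {k : ℕ} (hk : 1 ≤ k) : ((id : Fin k → Fin k) ⟨k - 1, by omega⟩ : ℕ) = k - 1 :=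
  rfl

theorem id_res {k : ℕ} (hk : 1 ≤ k) (i : Fin (k - 1)) :
    ((id : Fin k → Fin k) (Fin.castLE (by omega) i) : ℕ) = ((id : Fin (k - 1) → Fin (k - 1)) i : ℕ) :=
  rfl

theorem id_split {k : ℕ} (t : ℕ) (ht0 : 0 < t) (htk : t < k) :
    ∃ a b : Fin k, (a : ℕ) < t ∧ t ≤ (b : ℕ) ∧
      (id : Fin k → Fin k) a < (id : Fin k → Fin k) b := by
  refine ⟨⟨t - 1, by omega⟩, ⟨t, by omega⟩, by simp only; omega, by simp only; omega, ?_⟩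
  exact Fin.lt_def.mpr (by simp only [id]; omega)

-- pattern of length 2 characterizations
theorem contains_two_iff (π : Equiv.Perm (Fin n)) (τ : Fin 2 → Fin 2) :
    ContainsPat π τ ↔ ∃ p q : Fin n, p < q ∧ (τ 0 < τ 1 ↔ π p < π q) ∧ (τ 1 < τ 0 ↔ π q < π p) := by
  constructor
  · rintro ⟨f, hf, hiff⟩
    exact ⟨f 0, f 1, hf (by norm_num [Fin.lt_def]), hiff 0 1, hiff 1 0⟩
  · rintro ⟨p, q, hpq, h1, h2⟩
    refine ⟨fun a => if (a : ℕ) = 0 then p else q, ?_, ?_⟩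
    · intro a b hab
      have ha := a.isLt
      have hb := b.isLt
      have hab' := Fin.lt_def.mp hab
      have ha0 : (a : ℕ) = 0 := by omega
      have hb1 : (b : ℕ) = 1 := by omega
      beta_reduce
      rw [if_pos ha0, if_neg (by omega)]
      exact hpq
    · intro a b
      have ha := a.isLt
      have hb := b.isLt
      beta_reduce
      have ha' : (a : ℕ) = 0 ∨ (a : ℕ) = 1 := by omega
      have hb' : (b : ℕ) = 0 ∨ (b : ℕ) = 1 := by omega
      rcases ha' with h | h <;> rcases hb' with h' | h'
      · have : a = b := Fin.ext (by omega)
        subst this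
        rw [if_pos h]
        exact ⟨fun hc => absurd hc (lt_irrefl _), fun hc => absurd hc (lt_irrefl _)⟩
      · have ea : a = 0 := Fin.ext h
        have eb : b = 1 := Fin.ext h'
        rw [if_pos h, if_neg (by omega)]
        rw [ea, eb]
        exact h1
      · have ea : a = 1 := Fin.ext h
        have eb : b = 0 := Fin.ext h'
        rw [if_neg (by omega), if_pos h']
        rw [ea, eb]
        exact h2
      · have : a = b := Fin.ext (by omega)
        subst this
        rw [if_neg (by omega)]
        exact ⟨fun hc => absurd hc (lt_irrefl _), fun hc => absurd hc (lt_irrefl _)⟩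

theorem id2_vals : ((id : Fin 2 → Fin 2) 0 < (id : Fin 2 → Fin 2) 1) ∧
    ¬ ((id : Fin 2 → Fin 2) 1 < (id : Fin 2 → Fin 2) 0) := by
  constructor
  · exact Fin.lt_def.mpr (by norm_num)
  · exact fun hc => absurd (Fin.lt_def.mp hc) (by norm_num)

theorem pat21_vals : (pat2134 2 1 < pat2134 2 0) ∧ ¬ (pat2134 2 0 < pat2134 2 1) := by
  constructor
  · refine Fin.lt_def.mpr ?_
    rw [pat2134_coe, pat2134_coe]
    norm_num
  · intro hc
    have := Fin.lt_def.mp hc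
    rw [pat2134_coe, pat2134_coe] at this
    norm_num at this

theorem not_contains_id2_iff (π : Equiv.Perm (Fin n)) :
    ¬ ContainsPat π (id : Fin 2 → Fin 2) ↔ ∀ p q : Fin n, p < q → π q < π p := by
  rw [contains_two_iff]
  constructor
  · intro hc p q hpq
    rcases lt_trichotomy (π q) (π p) with hh | hh | hh
    · exact hh
    · exact absurd (π.injective hh) (by rintro rfl; exact absurd hpq (lt_irrefl _))
    · exact absurd ⟨p, q, hpq, iff_of_true id2_vals.1 hh,
        iff_of_false id2_vals.2 (asymm hh)⟩ hc
  · rintro hanti ⟨p, q, hpq, h1, h2⟩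
    have := hanti p q hpq
    exact absurd (h1.mp id2_vals.1) (asymm this)

theorem not_contains_pat21_iff (π : Equiv.Perm (Fin n)) :
    ¬ ContainsPat π (pat2134 2) ↔ ∀ p q : Fin n, p < q → π p < π q := by
  rw [contains_two_iff]
  constructor
  · intro hc p q hpq
    rcases lt_trichotomy (π p) (π q) with hh | hh | hh
    · exact hh
    · exact absurd (π.injective hh) (by rintro rfl; exact absurd hpq (lt_irrefl _))
    · exact absurd ⟨p, q, hpq, iff_of_false pat21_vals.2 (asymm hh),
        iff_of_true pat21_vals.1 hh⟩ hc
  · rintro hmono ⟨p, q, hpq, h1, h2⟩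
    have := hmono p q hpq
    exact absurd (h2.mp pat21_vals.1) (asymm this)




theorem join_inj_pos {j' m' : ℕ} (h : n = j + 1 + m) (h' : n = j' + 1 + m')
    (σ : Equiv.Perm (Fin j)) (ρ : Equiv.Perm (Fin m))
    (σ' : Equiv.Perm (Fin j')) (ρ' : Equiv.Perm (Fin m'))
    (he : join h σ ρ = join h' σ' ρ') : j = j' := by
  by_contra hne
  -- wlog j < j'
  rcases Nat.lt_or_ge j j' with hlt | hge
  · have e1 : ((join h σ ρ) ⟨j, by omega⟩ : ℕ) = j + m := joinFun_coe_eq h σ ρ rfl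
    have e2 : ((join h' σ' ρ') ⟨j, by omega⟩ : ℕ) = m' + σ' ⟨j, hlt⟩ :=
      joinFun_coe_lt h' σ' ρ' hlt
    rw [he, e2] at e1
    have := (σ' ⟨j, hlt⟩).isLt
    omega
  · have hlt : j' < j := by omega
    have e1 : ((join h' σ' ρ') ⟨j', by omega⟩ : ℕ) = j' + m' := joinFun_coe_eq h' σ' ρ' rfl
    have e2 : ((join h σ ρ) ⟨j', by omega⟩ : ℕ) = m + σ ⟨j', hlt⟩ :=
      joinFun_coe_lt h σ ρ hlt
    rw [← he, e2] at e1
    have := (σ ⟨j', hlt⟩).isLt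
    omega

theorem join_inj_parts (h h' : n = j + 1 + m)
    (σ σ' : Equiv.Perm (Fin j)) (ρ ρ' : Equiv.Perm (Fin m))
    (he : join h σ ρ = join h' σ' ρ') : σ = σ' ∧ ρ = ρ' := by
  constructor
  · apply Equiv.ext
    intro x
    apply Fin.ext
    have e1 := join_coe_L h σ ρ x
    have e2 := join_coe_L h' σ' ρ' x
    rw [he] at e1
    omega
  · apply Equiv.ext
    intro x
    apply Fin.ext
    have e1 := join_coe_R h σ ρ x
    have e2 := join_coe_R h' σ' ρ' x
    rw [he] at e1
    omega

theorem card_step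
    (A : ∀ {d : ℕ}, Equiv.Perm (Fin d) → Prop)
    (B : ∀ {d : ℕ}, Equiv.Perm (Fin d) → Prop)
    (hAB : ∀ (n j m : ℕ) (h : n = j + 1 + m) (σ : Equiv.Perm (Fin j)) (ρ : Equiv.Perm (Fin m)),
      B (join h σ ρ) ↔ A σ ∧ B ρ)
    (n : ℕ) (hn : 0 < n) :
    Nat.card {π : Equiv.Perm (Fin n) // Avoids132 π ∧ B π} =
      ∑ i ∈ Finset.range n,
        Nat.card {σ : Equiv.Perm (Fin i) // Avoids132 σ ∧ A σ} *
        Nat.card {ρ : Equiv.Perm (Fin (n - 1 - i)) // Avoids132 ρ ∧ B ρ} := by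
  classical
  set T := Σ i : Fin n,
      {σ : Equiv.Perm (Fin (i : ℕ)) // Avoids132 σ ∧ A σ} ×
      {ρ : Equiv.Perm (Fin (n - 1 - (i : ℕ))) // Avoids132 ρ ∧ B ρ} with hT
  have hb : n = (fun (i : Fin n) => (i : ℕ) + 1 + (n - 1 - (i : ℕ))) ⟨0, hn⟩ := by
    simp only
    omega
  let e : T → {π : Equiv.Perm (Fin n) // Avoids132 π ∧ B π} := fun x =>
    ⟨join (show n = (x.1 : ℕ) + 1 + (n - 1 - (x.1 : ℕ)) by have := x.1.isLt; omega)
        x.2.1.1 x.2.2.1,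
      by
        constructor
        · rw [avoids132_join_iff]
          exact ⟨x.2.1.2.1, x.2.2.2.1⟩
        · rw [hAB]
          exact ⟨x.2.1.2.2, x.2.2.2.2⟩⟩
  have hbij : Function.Bijective e := by
    constructor
    · rintro ⟨i, s, r⟩ ⟨i', s', r'⟩ hxy
      have hj : join _ s.1 r.1 = join _ s'.1 r'.1 := congrArg Subtype.val hxy
      have hii : (i : ℕ) = (i' : ℕ) := join_inj_pos _ _ _ _ _ _ hj
      have hie : i = i' := Fin.ext hii
      subst hie
      obtain ⟨hσ, hρ⟩ := join_inj_parts _ _ _ _ _ _ hj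
      have hs : s = s' := Subtype.ext hσ
      have hr : r = r' := Subtype.ext hρ
      rw [hs, hr]
    · rintro ⟨π, hav, hB⟩
      obtain ⟨jp, hj, σ, ρ, hjoin⟩ := exists_join hn hav
      have hcond : Avoids132 (join (show n = jp + 1 + (n - 1 - jp) by omega) σ ρ) ∧
          B (join (show n = jp + 1 + (n - 1 - jp) by omega) σ ρ) := by
        rw [← hjoin]; exact ⟨hav, hB⟩
      rw [avoids132_join_iff] at hcond
      have hBc : A σ ∧ B ρ := by
        have := hcond.2
        rw [hAB] at this
        exact this
      refine ⟨⟨⟨jp, hj⟩, ⟨σ, hcond.1.1, hBc.1⟩, ⟨ρ, hcond.1.2, hBc.2⟩⟩, ?_⟩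
      apply Subtype.ext
      exact hjoin.symm
  have hcard : Nat.card T = Nat.card {π : Equiv.Perm (Fin n) // Avoids132 π ∧ B π} :=
    Nat.card_eq_of_bijective e hbij
  rw [← hcard, hT]
  letI : ∀ i : Fin n, Fintype ({σ : Equiv.Perm (Fin (i : ℕ)) // Avoids132 σ ∧ A σ} ×
      {ρ : Equiv.Perm (Fin (n - 1 - (i : ℕ))) // Avoids132 ρ ∧ B ρ}) :=
    fun i => Fintype.ofFinite _
  rw [Nat.card_eq_fintype_card, Fintype.card_sigma]
  rw [← Fin.sum_univ_eq_sum_range (fun i =>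
    Nat.card {σ : Equiv.Perm (Fin i) // Avoids132 σ ∧ A σ} *
    Nat.card {ρ : Equiv.Perm (Fin (n - 1 - i)) // Avoids132 ρ ∧ B ρ})]
  apply Finset.sum_congr rfl
  intro i _
  rw [← Nat.card_eq_fintype_card, Nat.card_prod]

theorem avoids132_of_anti {π : Equiv.Perm (Fin n)}
    (h : ∀ p q : Fin n, p < q → π q < π p) : Avoids132 π := by
  rintro ⟨a, b, c, hab, hbc, h1, h2⟩
  exact absurd h1 (asymm (h a c (hab.trans hbc)))

theorem avoids132_of_mono {π : Equiv.Perm (Fin n)}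
    (h : ∀ p q : Fin n, p < q → π p < π q) : Avoids132 π := by
  rintro ⟨a, b, c, hab, hbc, h1, h2⟩
  exact absurd h2 (asymm (h b c hbc))

theorem anti_unique {π π' : Equiv.Perm (Fin n)}
    (h : ∀ p q : Fin n, p < q → π q < π p)
    (h' : ∀ p q : Fin n, p < q → π' q < π' p) : π = π' := by
  have hf : StrictMono (fun p => π (Fin.rev p)) := by
    intro a b hab
    exact h _ _ (by rwa [Fin.rev_lt_rev])
  have hg : StrictMono (fun p => π' (Fin.rev p)) := by
    intro a b hab
    exact h' _ _ (by rwa [Fin.rev_lt_rev])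
  have hr1 : Set.range (fun p => π (Fin.rev p)) = Set.univ :=
    (π.surjective.comp Fin.rev_involutive.surjective).range_eq
  have hr2 : Set.range (fun p => π' (Fin.rev p)) = Set.univ :=
    (π'.surjective.comp Fin.rev_involutive.surjective).range_eq
  have hr : Set.range (fun p => π (Fin.rev p)) = Set.range (fun p => π' (Fin.rev p)) := by
    rw [hr1, hr2]
  have := (hf.range_inj hg).mp hr
  apply Equiv.ext
  intro p
  have := congrFun this (Fin.rev p)
  simpa [Fin.rev_rev] using this

theorem mono_unique {π π' : Equiv.Perm (Fin n)}
    (h : ∀ p q : Fin n, p < q → π p < π q)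
    (h' : ∀ p q : Fin n, p < q → π' p < π' q) : π = π' := by
  have hf : StrictMono (fun p => π p) := fun a b hab => h _ _ hab
  have hg : StrictMono (fun p => π' p) := fun a b hab => h' _ _ hab
  have hr : Set.range (fun p => π p) = Set.range (fun p => π' p) := by
    rw [π.surjective.range_eq, π'.surjective.range_eq]
  have := (hf.range_inj hg).mp hr
  exact Equiv.ext (congrFun this)

theorem revPerm_anti : ∀ p q : Fin n, p < q → Fin.revPerm q < Fin.revPerm p := by
  intro p q hpq
  simpa [Fin.rev_lt_rev] using hpq

theorem card_zero {k : ℕ} (hk : 1 ≤ k) (τ : Fin k → Fin k) :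
    Nat.card {π : Equiv.Perm (Fin 0) // Avoids132 π ∧ ¬ ContainsPat π τ} = 1 := by
  haveI : Nonempty {π : Equiv.Perm (Fin 0) // Avoids132 π ∧ ¬ ContainsPat π τ} := by
    refine ⟨1, ?_, ?_⟩
    · rintro ⟨i, _, _, _⟩; exact i.elim0
    · rintro ⟨f, _, _⟩; exact (f ⟨0, by omega⟩).elim0
  haveI : Subsingleton {π : Equiv.Perm (Fin 0) // Avoids132 π ∧ ¬ ContainsPat π τ} := by
    constructor
    rintro ⟨π, _⟩ ⟨π', _⟩
    apply Subtype.ext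
    apply Equiv.ext
    intro x
    exact x.elim0
  exact Nat.card_unique


-- counting abbreviations
noncomputable def aC (k n : ℕ) : ℕ :=
  Nat.card {π : Equiv.Perm (Fin n) // Avoids132 π ∧ ¬ ContainsPat π (id : Fin k → Fin k)}

noncomputable def bC (k n : ℕ) : ℕ :=
  Nat.card {π : Equiv.Perm (Fin n) // Avoids132 π ∧ ¬ ContainsPat π (pat2134 k)}

theorem card_base_a (n : ℕ) : aC 2 n = 1 := by
  haveI : Nonempty {π : Equiv.Perm (Fin n) //
      Avoids132 π ∧ ¬ ContainsPat π (id : Fin 2 → Fin 2)} :=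
    ⟨Fin.revPerm, avoids132_of_anti revPerm_anti,
      (not_contains_id2_iff _).mpr revPerm_anti⟩
  haveI : Subsingleton {π : Equiv.Perm (Fin n) //
      Avoids132 π ∧ ¬ ContainsPat π (id : Fin 2 → Fin 2)} := by
    constructor
    rintro ⟨π, _, hπ⟩ ⟨π', _, hπ'⟩
    exact Subtype.ext (anti_unique ((not_contains_id2_iff _).mp hπ)
      ((not_contains_id2_iff _).mp hπ'))
  exact Nat.card_unique

theorem one_mono : ∀ p q : Fin n, p < q → (1 : Equiv.Perm (Fin n)) p < (1 : Equiv.Perm (Fin n)) q :=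
  fun _ _ h => h

theorem card_base_b (n : ℕ) : bC 2 n = 1 := by
  haveI : Nonempty {π : Equiv.Perm (Fin n) // Avoids132 π ∧ ¬ ContainsPat π (pat2134 2)} :=
    ⟨1, avoids132_of_mono one_mono, (not_contains_pat21_iff _).mpr one_mono⟩
  haveI : Subsingleton {π : Equiv.Perm (Fin n) // Avoids132 π ∧ ¬ ContainsPat π (pat2134 2)} := by
    constructor
    rintro ⟨π, _, hπ⟩ ⟨π', _, hπ'⟩
    exact Subtype.ext (mono_unique ((not_contains_pat21_iff _).mp hπ)
      ((not_contains_pat21_iff _).mp hπ'))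
  exact Nat.card_unique

theorem rec_a {k : ℕ} (hk : 2 ≤ k) (n : ℕ) (hn : 0 < n) :
    aC k n = ∑ i ∈ Finset.range n, aC (k - 1) i * aC k (n - 1 - i) := by
  apply card_step
    (fun {d} (σ : Equiv.Perm (Fin d)) => ¬ ContainsPat σ (id : Fin (k - 1) → Fin (k - 1)))
    (fun {d} (ρ : Equiv.Perm (Fin d)) => ¬ ContainsPat ρ (id : Fin k → Fin k))
    ?_ n hn
  intro n j m h σ ρ
  show ¬ ContainsPat (join h σ ρ) (id : Fin k → Fin k) ↔
    (¬ ContainsPat σ (id : Fin (k - 1) → Fin (k - 1))) ∧ (¬ ContainsPat ρ (id : Fin k → Fin k))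
  rw [containsPat_join_iff h σ ρ (id : Fin k → Fin k) (id : Fin (k - 1) → Fin (k - 1))
    (by omega) Function.injective_id (id_last (by omega)) (id_res (by omega))
    (fun t ht0 htk => id_split t ht0 htk)]
  push_neg
  exact Iff.rfl

theorem rec_b {k : ℕ} (hk : 3 ≤ k) (n : ℕ) (hn : 0 < n) :
    bC k n = ∑ i ∈ Finset.range n, bC (k - 1) i * bC k (n - 1 - i) := by
  apply card_step
    (fun {d} (σ : Equiv.Perm (Fin d)) => ¬ ContainsPat σ (pat2134 (k - 1)))
    (fun {d} (ρ : Equiv.Perm (Fin d)) => ¬ ContainsPat ρ (pat2134 k))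
    ?_ n hn
  intro n j m h σ ρ
  show ¬ ContainsPat (join h σ ρ) (pat2134 k) ↔
    (¬ ContainsPat σ (pat2134 (k - 1))) ∧ (¬ ContainsPat ρ (pat2134 k))
  rw [containsPat_join_iff h σ ρ (pat2134 k) (pat2134 (k - 1))
    (by omega) pat2134_injective (pat2134_last hk) (pat2134_res hk)
    (fun t ht0 htk => pat2134_split hk t ht0 htk)]
  push_neg
  exact Iff.rfl

theorem main_eq : ∀ k, 2 ≤ k → ∀ n, aC k n = bC k n := by
  intro k hk
  induction k, hk using Nat.le_induction with
  | base =>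
    intro n
    rw [card_base_a, card_base_b]
  | succ k hk ih =>
    intro n
    induction n using Nat.strong_induction_on with
    | _ n ihn =>
      rcases Nat.eq_zero_or_pos n with rfl | hn
      · rw [aC, bC, card_zero (by omega) _, card_zero (by omega) _]
      · rw [rec_a (by omega) n hn, rec_b (by omega) n hn]
        apply Finset.sum_congr rfl
        intro i hi
        have hi' : i < n := Finset.mem_range.mp hi
        have e1 : k + 1 - 1 = k := by omega
        rw [e1]
        rw [ih i, ihn (n - 1 - i) (by omega)]

end Stmt9

theorem stmt9 (k : ℕ) (hk : 3 ≤ k) (n : ℕ) :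
    Nat.card {π : Equiv.Perm (Fin n) //
        Avoids132 π ∧ ¬ ContainsPat π (id : Fin k → Fin k)} =
    Nat.card {π : Equiv.Perm (Fin n) //
        Avoids132 π ∧ ¬ ContainsPat π (pat2134 k)} :=
  Stmt9.main_eq k (by omega) n
end

section
/- The number of involutions of length n ≥ 1 avoiding both 132 and 231 equals n; the number of involutions of length n ≥ 1 avoiding both 132 and 321 equals ⌊n/2⌋ + 1. -/
def Avoids231 {n : ℕ} (π : Equiv.Perm (Fin n)) : Prop :=
  ¬ ∃ i j k : Fin n, i < j ∧ j < k ∧ π k < π i ∧ π i < π j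

def Avoids321 {n : ℕ} (π : Equiv.Perm (Fin n)) : Prop :=
  ¬ ∃ i j k : Fin n, i < j ∧ j < k ∧ π k < π j ∧ π j < π i

/-- reversal of the initial segment [0, m] -/
def sigmaFun {n : ℕ} (m : Fin n) (i : Fin n) : Fin n :=
  if (i : ℕ) ≤ (m : ℕ) then ⟨(m : ℕ) - i, lt_of_le_of_lt (Nat.sub_le _ _) m.isLt⟩ else i

lemma sigmaFun_invol {n : ℕ} (m : Fin n) : Function.Involutive (sigmaFun m) := by
  intro i
  unfold sigmaFun
  by_cases h : (i : ℕ) ≤ (m : ℕ)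
  · rw [if_pos h]
    rw [if_pos (by simp [Nat.sub_le])]
    exact Fin.ext (by simp only [Fin.val_mk]; omega)
  · rw [if_neg h, if_neg h]

def sigmaPerm {n : ℕ} (m : Fin n) : Equiv.Perm (Fin n) := (sigmaFun_invol m).toPerm

lemma sigmaPerm_apply {n : ℕ} (m : Fin n) (i : Fin n) :
    ((sigmaPerm m i : Fin n) : ℕ) = if (i : ℕ) ≤ (m : ℕ) then (m : ℕ) - i else (i : ℕ) := by
  show ((sigmaFun m i : Fin n) : ℕ) = _
  unfold sigmaFun
  split_ifs <;> rfl

/-- swap the blocks [0,m) and [m,2m), fix the rest -/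
def tauFun {n : ℕ} (m : ℕ) (hm : 2 * m ≤ n) (i : Fin n) : Fin n :=
  if h1 : (i : ℕ) < m then ⟨(i : ℕ) + m, by omega⟩
  else if h2 : (i : ℕ) < 2 * m then ⟨(i : ℕ) - m, by omega⟩
  else i

lemma tauFun_invol {n : ℕ} (m : ℕ) (hm : 2 * m ≤ n) : Function.Involutive (tauFun m hm) := by
  intro i
  unfold tauFun
  by_cases h1 : (i : ℕ) < m
  · rw [dif_pos h1, dif_neg (by simp only [Fin.val_mk]; omega), dif_pos (by simp only [Fin.val_mk]; omega)]
    exact Fin.ext (by simp)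
  · by_cases h2 : (i : ℕ) < 2 * m
    · rw [dif_neg h1, dif_pos h2, dif_pos (by simp only [Fin.val_mk]; omega)]
      exact Fin.ext (by simp only [Fin.val_mk]; omega)
    · rw [dif_neg h1, dif_neg h2, dif_neg h1, dif_neg h2]

def tauPerm {n : ℕ} (m : ℕ) (hm : 2 * m ≤ n) : Equiv.Perm (Fin n) := (tauFun_invol m hm).toPerm

lemma tauPerm_apply {n : ℕ} (m : ℕ) (hm : 2 * m ≤ n) (i : Fin n) :
    ((tauPerm m hm i : Fin n) : ℕ) =
      if (i : ℕ) < m then (i : ℕ) + m else if (i : ℕ) < 2 * m then (i : ℕ) - m else (i : ℕ) := by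
  show ((tauFun m hm i : Fin n) : ℕ) = _
  unfold tauFun
  by_cases h1 : (i : ℕ) < m
  · rw [dif_pos h1, if_pos h1]
  · by_cases h2 : (i : ℕ) < 2 * m
    · rw [dif_neg h1, dif_pos h2, if_neg h1, if_pos h2]
    · rw [dif_neg h1, dif_neg h2, if_neg h1, if_neg h2]

lemma sigmaPerm_props {n : ℕ} (m : Fin n) :
    IsInvolution (sigmaPerm m) ∧ Avoids132 (sigmaPerm m) ∧ Avoids231 (sigmaPerm m) := by
  refine ⟨fun i => sigmaFun_invol m i, ?_, ?_⟩
  · rintro ⟨i, j, k, hij, hjk, h1, h2⟩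
    rw [Fin.lt_def] at hij hjk h1 h2
    rw [sigmaPerm_apply, sigmaPerm_apply] at h1 h2
    split_ifs at h1 h2 <;> omega
  · rintro ⟨i, j, k, hij, hjk, h1, h2⟩
    rw [Fin.lt_def] at hij hjk h1 h2
    rw [sigmaPerm_apply, sigmaPerm_apply] at h1 h2
    split_ifs at h1 h2 <;> omega

lemma tauPerm_props {n : ℕ} (m : ℕ) (hm : 2 * m ≤ n) :
    IsInvolution (tauPerm m hm) ∧ Avoids132 (tauPerm m hm) ∧ Avoids321 (tauPerm m hm) := by
  refine ⟨fun i => tauFun_invol m hm i, ?_, ?_⟩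
  · rintro ⟨i, j, k, hij, hjk, h1, h2⟩
    rw [Fin.lt_def] at hij hjk h1 h2
    rw [tauPerm_apply, tauPerm_apply] at h1 h2
    split_ifs at h1 h2 <;> omega
  · rintro ⟨i, j, k, hij, hjk, h1, h2⟩
    rw [Fin.lt_def] at hij hjk h1 h2
    rw [tauPerm_apply, tauPerm_apply] at h1 h2
    split_ifs at h1 h2 <;> omega

lemma charA {n : ℕ} (hn : 0 < n) (π : Equiv.Perm (Fin n)) (hinv : IsInvolution π)
    (h132 : Avoids132 π) (h231 : Avoids231 π) :
    ∀ i : Fin n, ((π i : Fin n) : ℕ) =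
      if (i : ℕ) ≤ ((π ⟨0, hn⟩ : Fin n) : ℕ) then ((π ⟨0, hn⟩ : Fin n) : ℕ) - i else (i : ℕ) := by
  set z : Fin n := ⟨0, hn⟩ with hz
  set m : Fin n := π z with hm
  have hmz : π m = z := hinv z
  have zle : ∀ a : Fin n, z ≤ a := fun a => by rw [Fin.le_def]; exact Nat.zero_le _
  have peak : ∀ i j k : Fin n, i < j → j < k → π i < π j → π k < π j → False := by
    intro i j k hij hjk h1 h2
    rcases lt_trichotomy (π i) (π k) with h | h | h
    · exact h132 ⟨i, j, k, hij, hjk, h, h2⟩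
    · exact absurd (π.injective h) (ne_of_lt (hij.trans hjk))
    · exact h231 ⟨i, j, k, hij, hjk, h, h1⟩
  have closed : ∀ j : Fin n, j ≤ m → π j ≤ m := by
    intro j hj
    by_contra hc
    push_neg at hc
    have hjz : j ≠ z := by
      rintro rfl
      rw [← hm] at hc
      exact absurd hc (lt_irrefl m)
    have hjm : j ≠ m := by
      rintro rfl
      rw [hmz] at hc
      exact absurd hc (not_lt.mpr (zle m))
    refine peak z j m (lt_of_le_of_ne (zle j) (Ne.symm hjz)) (lt_of_le_of_ne hj hjm) ?_ ?_
    · rw [← hm]; exact hc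
    · rw [hmz]; exact lt_of_le_of_lt (zle m) hc
  have decA : ∀ a b : Fin n, a < b → b ≤ m → π b < π a := by
    intro a b hab hbm
    rcases lt_trichotomy (π b) (π a) with h | h | h
    · exact h
    · exact absurd (π.injective h) (ne_of_gt hab)
    · exfalso
      have hbm' : b ≠ m := by
        rintro rfl
        rw [hmz] at h
        exact absurd h (not_lt.mpr (zle _))
      have hbz : π b ≠ z := by
        intro he
        apply hbm'
        have := hinv b
        rw [he] at this
        rw [← this, ← hm]
      exact peak a b m hab (lt_of_le_of_ne hbm hbm') h
        (by rw [hmz]; exact lt_of_le_of_ne (zle _) (Ne.symm hbz))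
  have c1 : ∀ t : ℕ, ∀ i : Fin n, (i : ℕ) = t → (i : ℕ) ≤ (m : ℕ) → ((π i : Fin n) : ℕ) + i ≤ m := by
    intro t
    induction t with
    | zero =>
      intro i h0 _
      have : i = z := Fin.ext h0
      subst this
      rw [← hm]
      omega
    | succ t ih =>
      intro i hit him
      have htn : t < n := by omega
      have h3 : π i < π ⟨t, htn⟩ :=
        decA ⟨t, htn⟩ i (by rw [Fin.lt_def]; simp; omega) (by rw [Fin.le_def]; exact him)
      have h4 := ih ⟨t, htn⟩ rfl (by simp; omega)
      rw [Fin.lt_def] at h3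
      simp at h4
      omega
  have c2 : ∀ t : ℕ, ∀ i : Fin n, (i : ℕ) + t = (m : ℕ) → (m : ℕ) ≤ ((π i : Fin n) : ℕ) + i := by
    intro t
    induction t with
    | zero =>
      intro i h0
      have : i = m := Fin.ext (by omega)
      subst this
      rw [hmz]
      omega
    | succ t ih =>
      intro i hit
      have hi1 : (i : ℕ) + 1 < n := by have := m.isLt; omega
      have h3 : π ⟨(i : ℕ) + 1, hi1⟩ < π i :=
        decA i ⟨(i : ℕ) + 1, hi1⟩ (by rw [Fin.lt_def]; simp) (by rw [Fin.le_def]; simp; omega)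
      have h4 := ih ⟨(i : ℕ) + 1, hi1⟩ (by simp; omega)
      rw [Fin.lt_def] at h3
      simp at h4
      omega
  intro i
  by_cases hi : (i : ℕ) ≤ (m : ℕ)
  · rw [if_pos hi]
    have := c1 i.val i rfl hi
    have := c2 ((m : ℕ) - i) i (by omega)
    omega
  · rw [if_neg hi]
    push_neg at hi
    have hpi : (m : ℕ) < ((π i : Fin n) : ℕ) := by
      by_contra hc
      push_neg at hc
      have h1 : π i ≤ m := Fin.le_def.mpr hc
      have h2 := closed (π i) h1
      rw [hinv i] at h2
      exact absurd (Fin.le_def.mp h2) (not_le.mpr hi)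
    by_contra hne
    have hzi : z < i := Fin.lt_def.mpr (by simp [hz]; omega)
    rcases lt_trichotomy ((π i : Fin n) : ℕ) (i : ℕ) with h | h | h
    · refine peak z (π i) i (Fin.lt_def.mpr (by simp [hz]; omega)) (Fin.lt_def.mpr h) ?_ ?_
      · rw [hinv i, ← hm]; exact Fin.lt_def.mpr hi
      · rw [hinv i]; exact Fin.lt_def.mpr h
    · exact hne h
    · refine peak z i (π i) hzi (Fin.lt_def.mpr h) ?_ ?_
      · rw [← hm]; exact Fin.lt_def.mpr hpi
      · rw [hinv i]; exact Fin.lt_def.mpr h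

lemma charB {n : ℕ} (hn : 0 < n) (π : Equiv.Perm (Fin n)) (hinv : IsInvolution π)
    (h132 : Avoids132 π) (h321 : Avoids321 π) :
    2 * ((π ⟨0, hn⟩ : Fin n) : ℕ) ≤ n ∧
    ∀ i : Fin n, ((π i : Fin n) : ℕ) =
      if (i : ℕ) < ((π ⟨0, hn⟩ : Fin n) : ℕ) then (i : ℕ) + ((π ⟨0, hn⟩ : Fin n) : ℕ)
      else if (i : ℕ) < 2 * ((π ⟨0, hn⟩ : Fin n) : ℕ) then (i : ℕ) - ((π ⟨0, hn⟩ : Fin n) : ℕ)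
      else (i : ℕ) := by
  set z : Fin n := ⟨0, hn⟩ with hz
  set m : Fin n := π z with hm
  have hmz : π m = z := hinv z
  have zle : ∀ a : Fin n, z ≤ a := fun a => by rw [Fin.le_def]; exact Nat.zero_le _
  have incB : ∀ a b : Fin n, a < b → b < m → π a < π b := by
    intro a b hab hbm
    rcases lt_trichotomy (π a) (π b) with h | h | h
    · exact h
    · exact absurd (π.injective h) (ne_of_lt hab)
    · exfalso
      have hbz : π b ≠ z := by
        intro he
        have := hinv b
        rw [he, ← hm] at this
        exact absurd hbm (this ▸ lt_irrefl b)
      exact h321 ⟨a, b, m, hab, hbm,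
        by rw [hmz]; exact lt_of_le_of_ne (zle _) (Ne.symm hbz), h⟩
  have low : ∀ t : ℕ, ∀ i : Fin n, (i : ℕ) = t → (i : ℕ) < (m : ℕ) →
      (m : ℕ) + i ≤ ((π i : Fin n) : ℕ) := by
    intro t
    induction t with
    | zero =>
      intro i h0 _
      have : i = z := Fin.ext h0
      subst this
      rw [← hm]
      omega
    | succ t ih =>
      intro i hit him
      have htn : t < n := by omega
      have h3 : π ⟨t, htn⟩ < π i :=
        incB ⟨t, htn⟩ i (by rw [Fin.lt_def]; simp; omega) (Fin.lt_def.mpr him)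
      have h4 := ih ⟨t, htn⟩ rfl (by simp; omega)
      rw [Fin.lt_def] at h3
      simp at h4
      omega
  have high : ∀ t : ℕ, ∀ i : Fin n, (i : ℕ) = t → (i : ℕ) < (m : ℕ) →
      ((π i : Fin n) : ℕ) ≤ (m : ℕ) + i := by
    intro t
    induction t using Nat.strong_induction_on with
    | _ t ih =>
      intro i hit him
      by_contra hc
      push_neg at hc
      have hi0 : 0 < (i : ℕ) := by
        rcases Nat.eq_zero_or_pos (i : ℕ) with h | h
        · have : i = z := Fin.ext h
          subst this
          rw [← hm] at hc
          omega
        · exact h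
      have hmi_lt : (m : ℕ) + i < n := lt_trans hc (π i).isLt
      set w : Fin n := ⟨(m : ℕ) + i, hmi_lt⟩ with hw
      set q : Fin n := π w with hq'
      have hqw : π q = w := hinv w
      have hqwv : ((π q : Fin n) : ℕ) = (m : ℕ) + i := by rw [hqw]
      have hqi : i < q := by
        rcases lt_trichotomy (q : ℕ) (i : ℕ) with h | h | h
        · exfalso
          have e1 := low q.val q rfl (by omega)
          have e2 := ih q (by omega) q rfl (by omega)
          omega
        · exfalso
          have : q = i := Fin.ext h
          rw [this] at hqw
          have : ((π i : Fin n) : ℕ) = (m : ℕ) + i := by rw [hqw]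
          omega
        · exact Fin.lt_def.mpr h
      refine h132 ⟨z, i, q, Fin.lt_def.mpr (by simp [hz]; omega), hqi, ?_, ?_⟩
      · rw [← hm]; exact Fin.lt_def.mpr (by omega)
      · exact Fin.lt_def.mpr (by omega)
  have B3 : ∀ i : Fin n, (i : ℕ) < (m : ℕ) → ((π i : Fin n) : ℕ) = (m : ℕ) + i := by
    intro i him
    have := low i.val i rfl him
    have := high i.val i rfl him
    omega
  have h2mn : 2 * (m : ℕ) ≤ n := by
    rcases Nat.eq_zero_or_pos (m : ℕ) with h | h
    · omega
    · have hlt : (m : ℕ) - 1 < n := by have := m.isLt; omega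
      have := B3 ⟨(m : ℕ) - 1, hlt⟩ (by simp; omega)
      simp at this
      have := (π ⟨(m : ℕ) - 1, hlt⟩).isLt
      omega
  have B4 : ∀ i : Fin n, (m : ℕ) ≤ (i : ℕ) → (i : ℕ) < 2 * (m : ℕ) →
      ((π i : Fin n) : ℕ) = (i : ℕ) - (m : ℕ) := by
    intro i h1 h2
    have hu : (i : ℕ) - (m : ℕ) < n := by have := i.isLt; omega
    have e := B3 ⟨(i : ℕ) - (m : ℕ), hu⟩ (by simp; omega)
    simp at e
    have he : π ⟨(i : ℕ) - (m : ℕ), hu⟩ = i := Fin.ext (by rw [e]; omega)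
    have := hinv ⟨(i : ℕ) - (m : ℕ), hu⟩
    rw [he] at this
    rw [this]
  have B5 : ∀ i : Fin n, 2 * (m : ℕ) ≤ (i : ℕ) → ((π i : Fin n) : ℕ) = (i : ℕ) := by
    intro i h2m
    have hge : 2 * (m : ℕ) ≤ ((π i : Fin n) : ℕ) := by
      by_contra hc
      push_neg at hc
      rcases Nat.lt_or_ge ((π i : Fin n) : ℕ) (m : ℕ) with h | h
      · have := B3 (π i) h
        rw [hinv i] at this
        omega
      · have := B4 (π i) h hc
        rw [hinv i] at this
        omega
    rcases lt_trichotomy ((π i : Fin n) : ℕ) (i : ℕ) with h | h | h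
    · exfalso
      have hpiz : π i ≠ z := by
        intro he
        have := hinv i
        rw [he, ← hm] at this
        omega
      have hmlt : (m : ℕ) < ((π i : Fin n) : ℕ) := by
        rcases Nat.eq_zero_or_pos (m : ℕ) with h0 | h0
        · have : (0:ℕ) < ((π i : Fin n) : ℕ) := by
            rcases Nat.eq_zero_or_pos ((π i : Fin n) : ℕ) with h1 | h1
            · exact absurd (Fin.ext h1 : π i = z) hpiz
            · exact h1
          omega
        · omega
      refine h132 ⟨z, π i, i, Fin.lt_def.mpr (by simp [hz]; omega), Fin.lt_def.mpr h, ?_, ?_⟩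
      · rw [← hm]; exact Fin.lt_def.mpr hmlt
      · rw [hinv i]; exact Fin.lt_def.mpr h
    · exact h
    · exfalso
      have hiz : i ≠ z := by
        intro he
        subst he
        rw [← hm] at h
        omega
      have hmlt : (m : ℕ) < (i : ℕ) := by
        rcases Nat.eq_zero_or_pos (m : ℕ) with h0 | h0
        · have : (0:ℕ) < (i : ℕ) := by
            rcases Nat.eq_zero_or_pos (i : ℕ) with h1 | h1
            · exact absurd (Fin.ext h1 : i = z) hiz
            · exact h1
          omega
        · omega
      refine h132 ⟨z, i, π i, Fin.lt_def.mpr (by simp [hz]; omega), Fin.lt_def.mpr h, ?_, ?_⟩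
      · rw [hinv i, ← hm]; exact Fin.lt_def.mpr hmlt
      · rw [hinv i]; exact Fin.lt_def.mpr h
  refine ⟨h2mn, fun i => ?_⟩
  by_cases hlt : (i : ℕ) < (m : ℕ)
  · rw [if_pos hlt, B3 i hlt]; omega
  · rw [if_neg hlt]
    by_cases hlt2 : (i : ℕ) < 2 * (m : ℕ)
    · rw [if_pos hlt2, B4 i (by omega) hlt2]
    · rw [if_neg hlt2, B5 i (by omega)]

theorem stmt10 (n : ℕ) (hn : 1 ≤ n) :
    Nat.card {π : Equiv.Perm (Fin n) // IsInvolution π ∧ Avoids132 π ∧ Avoids231 π} = n ∧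
    Nat.card {π : Equiv.Perm (Fin n) // IsInvolution π ∧ Avoids132 π ∧ Avoids321 π} =
      n / 2 + 1 := by
  have hn0 : 0 < n := hn
  constructor
  · -- part A
    have hbij : Function.Bijective
        (fun k : Fin n => (⟨sigmaPerm k, sigmaPerm_props k⟩ :
          {π : Equiv.Perm (Fin n) // IsInvolution π ∧ Avoids132 π ∧ Avoids231 π})) := by
      constructor
      · intro k₁ k₂ he
        simp only [Subtype.mk.injEq] at he
        have h1 := congrArg (fun σ : Equiv.Perm (Fin n) => ((σ ⟨0, hn0⟩ : Fin n) : ℕ)) he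
        rw [sigmaPerm_apply, sigmaPerm_apply] at h1
        simp only [Nat.zero_le, if_pos, Nat.sub_zero] at h1
        exact Fin.ext h1
      · rintro ⟨π, hinv, h132, h231⟩
        refine ⟨π ⟨0, hn0⟩, ?_⟩
        refine Subtype.ext ?_
        refine Equiv.ext fun i => Fin.ext ?_
        rw [sigmaPerm_apply, charA hn0 π hinv h132 h231 i]
    have := Nat.card_eq_of_bijective _ hbij
    simp only [Nat.card_eq_fintype_card, Fintype.card_fin] at this ⊢
    rw [← this]
  · -- part B
    have hbij : Function.Bijective
        (fun k : Fin (n / 2 + 1) =>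
          (⟨tauPerm (k : ℕ) (by have := k.isLt; omega),
            tauPerm_props (k : ℕ) (by have := k.isLt; omega)⟩ :
          {π : Equiv.Perm (Fin n) // IsInvolution π ∧ Avoids132 π ∧ Avoids321 π})) := by
      constructor
      · intro k₁ k₂ he
        simp only [Subtype.mk.injEq] at he
        have h1 := congrArg (fun σ : Equiv.Perm (Fin n) => ((σ ⟨0, hn0⟩ : Fin n) : ℕ)) he
        rw [tauPerm_apply, tauPerm_apply] at h1
        have e : ∀ m : ℕ, (if (0:ℕ) < m then 0 + m else if (0:ℕ) < 2 * m then 0 - m else 0) = m := by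
          intro m; split_ifs <;> omega
        rw [show ((⟨0, hn0⟩ : Fin n) : ℕ) = 0 from rfl] at h1
        rw [e, e] at h1
        exact Fin.ext h1
      · rintro ⟨π, hinv, h132, h321⟩
        obtain ⟨h2m, hch⟩ := charB hn0 π hinv h132 h321
        refine ⟨⟨((π ⟨0, hn0⟩ : Fin n) : ℕ), by omega⟩, ?_⟩
        refine Subtype.ext ?_
        refine Equiv.ext fun i => Fin.ext ?_
        rw [tauPerm_apply, hch i]
    have := Nat.card_eq_of_bijective _ hbij
    simp only [Nat.card_eq_fintype_card, Fintype.card_fin] at this ⊢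
    rw [← this]
end

section
/- Every involution of length n avoiding both 132 and 231 has the form i,(i−1),…,1,(i+1),(i+2),…,n for some 1 ≤ i ≤ n, and conversely each such permutation is such an involution. -/
theorem stmt11 (n : ℕ) (hn : 1 ≤ n) (π : Equiv.Perm (Fin n)) :
    (IsInvolution π ∧ Avoids132 π ∧ Avoids231 π) ↔
      ∃ i : ℕ, 1 ≤ i ∧ i ≤ n ∧
        ∀ j : Fin n, (π j : ℕ) = if (j : ℕ) < i then i - 1 - (j : ℕ) else (j : ℕ) := by
  constructor
  · rintro ⟨hInv, h132, h231⟩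
    have hcomb : ∀ p q r : Fin n, p < q → q < r → π p < π q → π r < π q → False := by
      intro p q r hpq hqr h1 h2
      rcases lt_trichotomy (π p) (π r) with h | h | h
      · exact h132 ⟨p, q, r, hpq, hqr, h, h2⟩
      · exact absurd (π.injective h) (ne_of_lt (hpq.trans hqr))
      · exact h231 ⟨p, q, r, hpq, hqr, h, h1⟩
    set z : Fin n := ⟨0, hn⟩ with hz
    set a : Fin n := π z with ha
    have han : (a : ℕ) < n := a.isLt
    have hπa : π a = z := hInv z
    have hdec : ∀ p q : Fin n, p < q → (q : ℕ) ≤ (a : ℕ) → π q < π p := by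
      intro p q hpq hq
      by_cases hqa : (q : ℕ) = (a : ℕ)
      · have hq' : q = a := Fin.ext hqa
        subst hq'
        have hne : π p ≠ π a := fun h => absurd (π.injective h) (ne_of_lt hpq)
        rw [Fin.lt_def, hπa]
        have hne0 : (π p : ℕ) ≠ 0 := by
          intro h0
          exact hne (by rw [hπa]; exact Fin.ext h0)
        exact Nat.pos_of_ne_zero hne0
      · have hqa' : q < a := Fin.lt_def.mpr (lt_of_le_of_ne hq hqa)
        have h2 : π a < π q := by
          rw [hπa, Fin.lt_def]
          have hne : π q ≠ π a := fun h => absurd (π.injective h) (ne_of_lt hqa')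
          have hne0 : (π q : ℕ) ≠ 0 := fun h0 => hne (by rw [hπa]; exact Fin.ext h0)
          exact Nat.pos_of_ne_zero hne0
        by_contra hle
        have h1 : π p < π q := by
          rcases lt_trichotomy (π p) (π q) with h | h | h
          · exact h
          · exact absurd (π.injective h) (ne_of_lt hpq)
          · exact absurd h hle
        exact hcomb p q a hpq hqa' h1 h2
    have I1 : ∀ m : ℕ, m ≤ (a : ℕ) → ∀ p : Fin n, (p : ℕ) = m → (π p : ℕ) ≤ (a : ℕ) - m := by
      intro m
      induction m with
      | zero =>
        intro _ p hp
        have hpz : p = z := Fin.ext hp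
        subst hpz
        omega
      | succ m ih =>
        intro hm p hp
        have hlt : (⟨m, by omega⟩ : Fin n) < p := by rw [Fin.lt_def]; simp [hp]
        have hd := hdec ⟨m, by omega⟩ p hlt (by omega)
        have hi := ih (by omega) ⟨m, by omega⟩ rfl
        rw [Fin.lt_def] at hd
        omega
    have I2 : ∀ s : ℕ, s ≤ (a : ℕ) → ∀ p : Fin n, (p : ℕ) = (a : ℕ) - s → s ≤ (π p : ℕ) := by
      intro s
      induction s with
      | zero => intro _ _ _; omega
      | succ s ih =>
        intro hs p hp
        have hlt : p < (⟨(a : ℕ) - s, by omega⟩ : Fin n) := by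
          rw [Fin.lt_def]; simp only [hp]; omega
        have hd := hdec p ⟨(a : ℕ) - s, by omega⟩ hlt (by simp)
        have hi := ih (by omega) ⟨(a : ℕ) - s, by omega⟩ rfl
        rw [Fin.lt_def] at hd
        omega
    have heq1 : ∀ p : Fin n, (p : ℕ) ≤ (a : ℕ) → (π p : ℕ) = (a : ℕ) - (p : ℕ) := by
      intro p hp
      have h1 := I1 (p : ℕ) hp p rfl
      have h2 := I2 ((a : ℕ) - (p : ℕ)) (by omega) p (by omega)
      omega
    have hgt : ∀ j : Fin n, (a : ℕ) < (j : ℕ) → (a : ℕ) < (π j : ℕ) := by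
      intro j hj
      by_contra h
      have h' : (π j : ℕ) ≤ (a : ℕ) := by omega
      have h1 := heq1 (π j) h'
      have h2 := hInv j
      rw [Fin.ext_iff] at h2
      omega
    have hle2 : ∀ j : Fin n, (a : ℕ) < (j : ℕ) → (π j : ℕ) ≤ (j : ℕ) := by
      intro j hj
      by_contra h
      have hjπ : j < π j := Fin.lt_def.mpr (by omega)
      have h0j : z < j := Fin.lt_def.mpr (by simp [hz]; omega)
      exact hcomb z j (π j) h0j hjπ (Fin.lt_def.mpr (hgt j hj))
        (by rw [hInv j]; exact hjπ)
    have hfix : ∀ j : Fin n, (a : ℕ) < (j : ℕ) → (π j : ℕ) = (j : ℕ) := by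
      intro j hj
      have h1 := hle2 j hj
      have h2 := hle2 (π j) (hgt j hj)
      rw [hInv j] at h2
      omega
    refine ⟨(a : ℕ) + 1, by omega, by omega, ?_⟩
    intro j
    by_cases hj : (j : ℕ) < (a : ℕ) + 1
    · rw [if_pos hj]
      have h1 := heq1 j (by omega)
      omega
    · rw [if_neg hj]
      exact hfix j (by omega)
  · rintro ⟨i, hi1, hin, hform⟩
    have hInv : IsInvolution π := by
      intro j
      have h1 := hform j
      have h2 := hform (π j)
      apply Fin.ext
      split_ifs at h1 h2 <;> omega
    refine ⟨hInv, ?_, ?_⟩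
    · rintro ⟨p, q, r, hpq, hqr, h1, h2⟩
      rw [Fin.lt_def] at hpq hqr h1 h2
      have e1 := hform p
      have e2 := hform q
      have e3 := hform r
      split_ifs at e1 e2 e3 <;> omega
    · rintro ⟨p, q, r, hpq, hqr, h1, h2⟩
      rw [Fin.lt_def] at hpq hqr h1 h2
      have e1 := hform p
      have e2 := hform q
      have e3 := hform r
      split_ifs at e1 e2 e3 <;> omega
end

section
/- Every involution of length n avoiding both 132 and 321 has the form (i+1),(i+2),…,2i,1,2,…,i,(2i+1),(2i+2),…,n for some 0 ≤ i ≤ ⌊n/2⌋, and conversely each such permutation is such an involution. -/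
/-- A downward-closed subset of `Fin n` is an initial segment. -/
lemma initseg {n : ℕ} (S : Finset (Fin n))
    (h : ∀ x y : Fin n, x < y → y ∈ S → x ∈ S) :
    ∀ j : Fin n, j ∈ S ↔ (j : ℕ) < S.card := by
  intro j
  constructor
  · intro hj
    have hsub : Finset.Iic j ⊆ S := by
      intro x hx
      rcases lt_or_eq_of_le (Finset.mem_Iic.mp hx) with h' | h'
      · exact h x j h' hj
      · exact h' ▸ hj
    have hc := Finset.card_le_card hsub
    rw [Fin.card_Iic] at hc
    omega
  · intro hj
    by_contra hjS
    have hsub : S ⊆ Finset.Iio j := by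
      intro x hx
      rw [Finset.mem_Iio]
      by_contra hx'
      push_neg at hx'
      rcases lt_or_eq_of_le hx' with h' | h'
      · exact hjS (h j x h' hx)
      · exact hjS (h' ▸ hx)
    have hc := Finset.card_le_card hsub
    rw [Fin.card_Iio] at hc
    omega

theorem stmt12 (n : ℕ) (π : Equiv.Perm (Fin n)) :
    (IsInvolution π ∧ Avoids132 π ∧ Avoids321 π) ↔
      ∃ i : ℕ, i ≤ n / 2 ∧
        ∀ j : Fin n, (π j : ℕ) =
          if (j : ℕ) < i then (j : ℕ) + i
          else if (j : ℕ) < 2 * i then (j : ℕ) - i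
          else (j : ℕ) := by
  constructor
  · rintro ⟨hinv, h132, h321⟩
    -- two crossing lemmas
    have hcross : ∀ a c : Fin n, a < π a → c < π c → a < c → c < π a ∧ π a < π c := by
      intro a c ha hc hac
      have h1 : π a < π c := by
        rcases lt_trichotomy (π a) (π c) with h | h | h
        · exact h
        · exact absurd (π.injective h) (ne_of_lt hac)
        · exact absurd ⟨a, c, π c, hac, hc, by rw [hinv c]; exact hc, h⟩ h321
      refine ⟨?_, h1⟩
      rcases lt_trichotomy c (π a) with h | h | h
      · exact h
      · exfalso
        have : π c = a := by rw [h, hinv a]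
        rw [this] at hc; exact absurd hac (not_lt_of_gt hc)
      · exact absurd ⟨a, c, π c, hac, hc, by rw [hinv c]; exact h, by rw [hinv c]; exact hc⟩ h132
    have hfix : ∀ f a : Fin n, π f = f → a < π a → π a < f := by
      intro f a hf ha
      rcases lt_trichotomy f a with h | h | h
      · exact absurd ⟨f, a, π a, h, ha, by rw [hf, hinv a]; exact h, by rw [hinv a]; exact ha⟩ h132
      · exfalso; rw [h] at hf; rw [hf] at ha; exact lt_irrefl a ha
      · rcases lt_trichotomy f (π a) with h' | h' | h'
        · exact absurd ⟨a, f, π a, h, h', by rw [hf, hinv a]; exact h, by rw [hf]; exact h'⟩ h321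
        · exfalso
          have h1 : f = a := by rw [← hinv a, ← h', hf]
          rw [h1] at h'
          rw [← h'] at ha
          exact lt_irrefl a ha
        · exact h'
    classical
    set L : Finset (Fin n) := Finset.univ.filter fun j => j < π j with hLdef
    have hLmem : ∀ j : Fin n, j ∈ L ↔ j < π j := by
      intro j; simp [hLdef]
    set i := L.card with hidef
    have hLdown : ∀ x y : Fin n, x < y → y ∈ L → x ∈ L := by
      intro x y hxy hy
      rw [hLmem] at hy ⊢
      rcases lt_trichotomy x (π x) with h | h | h
      · exact h
      · exfalso
        have := hfix x y h.symm hy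
        exact absurd (hxy.trans hy) (not_lt_of_gt this)
      · exfalso
        have hpx : π x < π (π x) := by rw [hinv x]; exact h
        rcases lt_trichotomy (π x) y with h' | h' | h'
        · have := (hcross (π x) y hpx hy h').1
          rw [hinv x] at this
          exact absurd hxy (not_lt_of_gt this)
        · have hxx : x = π y := by rw [← h', hinv x]
          rw [← hxx] at hy
          exact absurd hxy (not_lt_of_gt hy)
        · have := (hcross y (π x) hy hpx h').2
          rw [hinv x] at this
          exact absurd hxy (not_lt_of_gt (hy.trans this))
    have hL : ∀ j : Fin n, j < π j ↔ (j : ℕ) < i := by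
      intro j; rw [← hLmem, initseg L hLdown j]
    -- the nonfixed set
    set N : Finset (Fin n) := Finset.univ.filter fun j => π j ≠ j with hNdef
    have hNmem : ∀ j : Fin n, j ∈ N ↔ π j ≠ j := by
      intro j; simp [hNdef]
    have hNdown : ∀ x y : Fin n, x < y → y ∈ N → x ∈ N := by
      intro x y hxy hy
      rw [hNmem] at hy ⊢
      intro hx
      rcases lt_trichotomy y (π y) with h | h | h
      · have := hfix x y hx h
        exact absurd (hxy.trans h) (not_lt_of_gt this)
      · exact hy h.symm
      · have hpy : π y < π (π y) := by rw [hinv y]; exact h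
        have := hfix x (π y) hx hpy
        rw [hinv y] at this
        exact absurd hxy (not_lt_of_gt this)
    have hNeq : N = L ∪ L.image π := by
      ext x
      rw [hNmem, Finset.mem_union, hLmem, Finset.mem_image]
      constructor
      · intro hx
        rcases lt_trichotomy x (π x) with h | h | h
        · exact Or.inl h
        · exact absurd h.symm hx
        · refine Or.inr ⟨π x, ?_, hinv x⟩
          rw [hLmem, hinv x]
          exact h
      · rintro (h | ⟨a, ha, rfl⟩)
        · intro he; rw [he] at h; exact lt_irrefl x h
        · rw [hLmem] at ha
          rw [hinv a]
          intro he; rw [← he] at ha; exact lt_irrefl a ha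
    have hdisj : Disjoint L (L.image π) := by
      rw [Finset.disjoint_left]
      intro x hx hx'
      rw [hLmem] at hx
      rw [Finset.mem_image] at hx'
      obtain ⟨a, ha, rfl⟩ := hx'
      rw [hLmem] at ha
      rw [hinv a] at hx
      exact absurd (hx.trans ha) (lt_irrefl _)
    have hNcard : N.card = 2 * i := by
      rw [hNeq, Finset.card_union_of_disjoint hdisj,
        Finset.card_image_of_injective L π.injective]
      omega
    have hN : ∀ j : Fin n, π j ≠ j ↔ (j : ℕ) < 2 * i := by
      intro j; rw [← hNmem, initseg N hNdown j, hNcard]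
    have h2in : 2 * i ≤ n := by
      have := Finset.card_le_univ N
      rw [hNcard] at this
      simpa using this
    -- lower bound
    have hlow : ∀ m : ℕ, ∀ j : Fin n, (j : ℕ) < i → (j : ℕ) = m → i + m ≤ (π j : ℕ) := by
      intro m
      induction m with
      | zero =>
        intro j hj _
        have hjL : j < π j := (hL j).mpr hj
        have : ¬ (π j < π (π j)) := by rw [hinv j]; exact not_lt_of_gt hjL
        rw [hL (π j)] at this
        omega
      | succ m ih =>
        intro j hj hjm
        have hmn : m < n := by have := j.isLt; omega
        have hj'i : ((⟨m, hmn⟩ : Fin n) : ℕ) < i := by simp; omega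
        have hj'L : (⟨m, hmn⟩ : Fin n) < π ⟨m, hmn⟩ := (hL _).mpr hj'i
        have hjL : j < π j := (hL j).mpr hj
        have hlt : (⟨m, hmn⟩ : Fin n) < j := by rw [Fin.lt_def]; simp; omega
        have hc2 := (hcross _ j hj'L hjL hlt).2
        have hih := ih ⟨m, hmn⟩ hj'i (by simp)
        rw [Fin.lt_def] at hc2
        omega
    -- upper bound
    have hup : ∀ k : ℕ, ∀ j : Fin n, (j : ℕ) < i → i - 1 - (j : ℕ) = k → (π j : ℕ) ≤ i + (j : ℕ) := by
      intro k
      induction k with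
      | zero =>
        intro j hj hk
        have hjL : j < π j := (hL j).mpr hj
        have hne : π (π j) ≠ π j := by rw [hinv j]; exact ne_of_lt hjL
        rw [hN (π j)] at hne
        omega
      | succ k ih =>
        intro j hj hk
        have hjn : (j : ℕ) + 1 < n := by omega
        have hj''i : ((⟨(j : ℕ) + 1, hjn⟩ : Fin n) : ℕ) < i := by simp; omega
        have hj''L : (⟨(j : ℕ) + 1, hjn⟩ : Fin n) < π ⟨(j : ℕ) + 1, hjn⟩ := (hL _).mpr hj''i
        have hjL : j < π j := (hL j).mpr hj
        have hlt : j < (⟨(j : ℕ) + 1, hjn⟩ : Fin n) := by rw [Fin.lt_def]; simp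
        have hc2 := (hcross j _ hjL hj''L hlt).2
        have hih := ih ⟨(j : ℕ) + 1, hjn⟩ hj''i (by simp; omega)
        rw [Fin.lt_def] at hc2
        simp only [Fin.val_mk] at hih
        omega
    refine ⟨i, by omega, ?_⟩
    intro j
    rcases lt_or_ge (j : ℕ) i with hj | hj
    · rw [if_pos hj]
      have h1 := hlow (j : ℕ) j hj rfl
      have h2 := hup (i - 1 - (j : ℕ)) j hj rfl
      omega
    · rw [if_neg (not_lt_of_ge hj)]
      rcases lt_or_ge (j : ℕ) (2 * i) with hj2 | hj2
      · rw [if_pos hj2]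
        have hne : π j ≠ j := (hN j).mpr hj2
        have hnL : ¬ j < π j := fun h => absurd ((hL j).mp h) (not_lt_of_ge hj)
        have hlt : π j < j := by
          rcases lt_trichotomy (π j) j with h | h | h
          · exact h
          · exact absurd h hne
          · exact absurd h hnL
        have hpL : π j < π (π j) := by rw [hinv j]; exact hlt
        have hpi : ((π j : Fin n) : ℕ) < i := (hL (π j)).mp hpL
        have h1 := hlow ((π j : Fin n) : ℕ) (π j) hpi rfl
        have h2 := hup (i - 1 - ((π j : Fin n) : ℕ)) (π j) hpi rfl
        rw [hinv j] at h1 h2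
        omega
      · rw [if_neg (not_lt_of_ge hj2)]
        have : ¬ (π j ≠ j) := fun h => absurd ((hN j).mp h) (not_lt_of_ge hj2)
        push_neg at this
        rw [this]
  · rintro ⟨i, hi, hf⟩
    have h2i : 2 * i ≤ n := by omega
    refine ⟨?_, ?_, ?_⟩
    · intro j
      have h1 := hf j
      have h2 := hf (π j)
      rw [h1] at h2
      have hj := j.isLt
      apply Fin.eq_of_val_eq
      rw [h2]
      split_ifs <;> omega
    · rintro ⟨a, b, c, hab, hbc, h1, h2⟩
      rw [Fin.lt_def] at hab hbc h1 h2
      rw [hf a, hf b, hf c] at *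
      have hc := c.isLt
      split_ifs at h1 h2 <;> omega
    · rintro ⟨a, b, c, hab, hbc, h1, h2⟩
      rw [Fin.lt_def] at hab hbc h1 h2
      rw [hf a, hf b, hf c] at *
      have hc := c.isLt
      split_ifs at h1 h2 <;> omega
end

section
/- The number of involutions of length n avoiding both 132 and 3412 equals the n-th Fibonacci number F_n (F_0=F_1=1). -/
def Avoids3412 {n : ℕ} (π : Equiv.Perm (Fin n)) : Prop :=
  ¬ ∃ i j k l : Fin n, i < j ∧ j < k ∧ k < l ∧ π k < π l ∧ π l < π i ∧ π i < π j

namespace Stmt13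

def Good {n : ℕ} (π : Equiv.Perm (Fin n)) : Prop :=
  IsInvolution π ∧ Avoids132 π ∧ Avoids3412 π

abbrev S (n : ℕ) := {π : Equiv.Perm (Fin n) // Good π}

/-! ### extension by a fixed point at the end -/

def ext1Fun {n : ℕ} (π : Equiv.Perm (Fin (n+1))) : Fin (n+2) → Fin (n+2) :=
  fun j => if h : (j : ℕ) < n + 1 then
      ⟨(π ⟨j, h⟩ : ℕ), (π ⟨j, h⟩).isLt.trans (Nat.lt_succ_self _)⟩
    else j

lemma ext1Fun_val {n : ℕ} (π : Equiv.Perm (Fin (n+1))) (j : Fin (n+2)) (h : (j : ℕ) < n + 1) :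
    (ext1Fun π j : ℕ) = (π ⟨j, h⟩ : ℕ) := by
  simp only [ext1Fun, dif_pos h]

lemma ext1Fun_last {n : ℕ} (π : Equiv.Perm (Fin (n+1))) (j : Fin (n+2)) (h : (j : ℕ) = n + 1) :
    ext1Fun π j = j := by
  have h' : ¬ ((j : ℕ) < n + 1) := by omega
  simp only [ext1Fun, dif_neg h']

lemma inv_ext1 {n : ℕ} (π : Equiv.Perm (Fin (n+1))) (hπ : IsInvolution π) :
    Function.Involutive (ext1Fun π) := by
  intro j
  by_cases h : (j : ℕ) < n + 1
  · apply Fin.ext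
    have h2 : (ext1Fun π j : ℕ) < n + 1 := by rw [ext1Fun_val π j h]; exact (π ⟨j, h⟩).isLt
    have key : (⟨(ext1Fun π j : ℕ), h2⟩ : Fin (n+1)) = π ⟨j, h⟩ :=
      Fin.ext (ext1Fun_val π j h)
    rw [ext1Fun_val π _ h2, key, hπ]
  · rw [ext1Fun_last π j (by omega), ext1Fun_last π j (by omega)]

def ext1Perm {n : ℕ} (π : Equiv.Perm (Fin (n+1))) (hπ : IsInvolution π) :
    Equiv.Perm (Fin (n+2)) := Function.Involutive.toPerm _ (inv_ext1 π hπ)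

@[simp] lemma ext1Perm_apply {n : ℕ} (π : Equiv.Perm (Fin (n+1))) (hπ : IsInvolution π)
    (j : Fin (n+2)) : ext1Perm π hπ j = ext1Fun π j := rfl

lemma good_ext1 {n : ℕ} (π : Equiv.Perm (Fin (n+1))) (hg : Good π) :
    Good (ext1Perm π hg.1) := by
  obtain ⟨hinv, h132, h3412⟩ := hg
  refine ⟨fun i => inv_ext1 π hinv i, ?_, ?_⟩
  · rintro ⟨i, j, k, hij, hjk, h1, h2⟩
    simp only [ext1Perm_apply] at h1 h2
    have hk : (k : ℕ) < n + 1 := by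
      by_contra hk
      have hk' : (k : ℕ) = n + 1 := by omega
      rw [Fin.lt_def] at h2
      rw [show ext1Fun π k = k from ext1Fun_last π k hk'] at h2
      have := (ext1Fun π j).isLt
      omega
    have hi : (i : ℕ) < n + 1 := by have := hij.trans hjk; rw [Fin.lt_def] at this; omega
    have hj : (j : ℕ) < n + 1 := by rw [Fin.lt_def] at hjk; omega
    apply h132
    refine ⟨⟨i, hi⟩, ⟨j, hj⟩, ⟨k, hk⟩, ?_, ?_, ?_, ?_⟩
    · exact hij
    · exact hjk
    · rw [Fin.lt_def] at h1 ⊢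
      rw [ext1Fun_val π i hi, ext1Fun_val π k hk] at h1; exact h1
    · rw [Fin.lt_def] at h2 ⊢
      rw [ext1Fun_val π k hk, ext1Fun_val π j hj] at h2; exact h2
  · rintro ⟨i, j, k, l, hij, hjk, hkl, h1, h2, h3⟩
    simp only [ext1Perm_apply] at h1 h2 h3
    have hl : (l : ℕ) < n + 1 := by
      by_contra hl
      have hl' : (l : ℕ) = n + 1 := by omega
      rw [Fin.lt_def] at h2
      rw [show ext1Fun π l = l from ext1Fun_last π l hl'] at h2
      have := (ext1Fun π i).isLt
      omega
    have hk : (k : ℕ) < n + 1 := by rw [Fin.lt_def] at hkl; omega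
    have hj : (j : ℕ) < n + 1 := by rw [Fin.lt_def] at hjk; omega
    have hi : (i : ℕ) < n + 1 := by rw [Fin.lt_def] at hij; omega
    apply h3412
    refine ⟨⟨i, hi⟩, ⟨j, hj⟩, ⟨k, hk⟩, ⟨l, hl⟩, hij, hjk, hkl, ?_, ?_, ?_⟩
    · rw [Fin.lt_def] at h1 ⊢
      rw [ext1Fun_val π k hk, ext1Fun_val π l hl] at h1; exact h1
    · rw [Fin.lt_def] at h2 ⊢
      rw [ext1Fun_val π l hl, ext1Fun_val π i hi] at h2; exact h2
    · rw [Fin.lt_def] at h3 ⊢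
      rw [ext1Fun_val π i hi, ext1Fun_val π j hj] at h3; exact h3

/-! ### wrap construction: new max at front, new min at back -/

def wrapFun {n : ℕ} (π : Equiv.Perm (Fin n)) : Fin (n+2) → Fin (n+2) :=
  fun j =>
    if h0 : (j : ℕ) = 0 then ⟨n+1, by omega⟩
    else if h : (j : ℕ) < n + 1 then
      ⟨(π ⟨(j : ℕ) - 1, by omega⟩ : ℕ) + 1,
        by have := (π ⟨(j : ℕ) - 1, by omega⟩).isLt; omega⟩
    else ⟨0, by omega⟩

lemma wrapFun_zero {n : ℕ} (π : Equiv.Perm (Fin n)) (j : Fin (n+2)) (h0 : (j : ℕ) = 0) :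
    (wrapFun π j : ℕ) = n + 1 := by
  simp only [wrapFun, dif_pos h0]

lemma wrapFun_mid {n : ℕ} (π : Equiv.Perm (Fin n)) (j : Fin (n+2)) (h0 : (j : ℕ) ≠ 0)
    (h : (j : ℕ) < n + 1) :
    (wrapFun π j : ℕ) = (π ⟨(j : ℕ) - 1, by omega⟩ : ℕ) + 1 := by
  simp only [wrapFun, dif_neg h0, dif_pos h]

lemma wrapFun_last {n : ℕ} (π : Equiv.Perm (Fin n)) (j : Fin (n+2)) (h1 : (j : ℕ) = n + 1) :
    (wrapFun π j : ℕ) = 0 := by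
  have h0 : ¬ ((j : ℕ) = 0) := by omega
  have h : ¬ ((j : ℕ) < n + 1) := by omega
  simp only [wrapFun, dif_neg h0, dif_neg h]

lemma inv_wrap {n : ℕ} (π : Equiv.Perm (Fin n)) (hπ : IsInvolution π) :
    Function.Involutive (wrapFun π) := by
  intro j
  apply Fin.ext
  rcases Nat.lt_trichotomy (j : ℕ) 1 with h0 | h0 | h0
  · -- j = 0
    have h0 : (j : ℕ) = 0 := by omega
    have e1 : (wrapFun π j : ℕ) = n + 1 := wrapFun_zero π j h0
    rw [wrapFun_last π _ e1, h0]
  · -- middle or... j = 1 is middle (since n could be 0? if n = 0 then j=1 is... n+1=1, so j=1 means last)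
    rcases Nat.lt_or_ge (j : ℕ) (n+1) with h | h
    · have h0' : (j : ℕ) ≠ 0 := by omega
      have e1 := wrapFun_mid π j h0' h
      have hne : (wrapFun π j : ℕ) ≠ 0 := by omega
      have hlt : (wrapFun π j : ℕ) < n + 1 := by
        have := (π ⟨(j : ℕ) - 1, by omega⟩).isLt; omega
      rw [wrapFun_mid π _ hne hlt]
      have key : (⟨(wrapFun π j : ℕ) - 1, by omega⟩ : Fin n) = π ⟨(j : ℕ) - 1, by omega⟩ := by
        apply Fin.ext; simp [e1]
      rw [key, hπ]
      simp only [Fin.val_mk]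
      omega
    · have h1 : (j : ℕ) = n + 1 := by have := j.isLt; omega
      have e1 : (wrapFun π j : ℕ) = 0 := wrapFun_last π j h1
      rw [wrapFun_zero π _ e1, h1]
  · rcases Nat.lt_or_ge (j : ℕ) (n+1) with h | h
    · have h0' : (j : ℕ) ≠ 0 := by omega
      have e1 := wrapFun_mid π j h0' h
      have hne : (wrapFun π j : ℕ) ≠ 0 := by omega
      have hlt : (wrapFun π j : ℕ) < n + 1 := by
        have := (π ⟨(j : ℕ) - 1, by omega⟩).isLt; omega
      rw [wrapFun_mid π _ hne hlt]
      have key : (⟨(wrapFun π j : ℕ) - 1, by omega⟩ : Fin n) = π ⟨(j : ℕ) - 1, by omega⟩ := by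
        apply Fin.ext; simp [e1]
      rw [key, hπ]
      simp only [Fin.val_mk]
      omega
    · have h1 : (j : ℕ) = n + 1 := by have := j.isLt; omega
      have e1 : (wrapFun π j : ℕ) = 0 := wrapFun_last π j h1
      rw [wrapFun_zero π _ e1, h1]

def wrapPerm {n : ℕ} (π : Equiv.Perm (Fin n)) (hπ : IsInvolution π) :
    Equiv.Perm (Fin (n+2)) := Function.Involutive.toPerm _ (inv_wrap π hπ)

@[simp] lemma wrapPerm_apply {n : ℕ} (π : Equiv.Perm (Fin n)) (hπ : IsInvolution π)
    (j : Fin (n+2)) : wrapPerm π hπ j = wrapFun π j := rfl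

lemma good_wrap {n : ℕ} (π : Equiv.Perm (Fin n)) (hg : Good π) :
    Good (wrapPerm π hg.1) := by
  obtain ⟨hinv, h132, h3412⟩ := hg
  refine ⟨fun i => inv_wrap π hinv i, ?_, ?_⟩
  · rintro ⟨i, j, k, hij, hjk, h1, h2⟩
    simp only [wrapPerm_apply] at h1 h2
    rw [Fin.lt_def] at hij hjk h1 h2
    have hi0 : (i : ℕ) ≠ 0 := by
      intro hi0
      rw [wrapFun_zero π i hi0] at h1
      have := (wrapFun π k).isLt; omega
    have hkl : (k : ℕ) < n + 1 := by
      rcases Nat.lt_or_ge (k : ℕ) (n+1) with h | h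
      · exact h
      · exfalso
        have hk1 : (k : ℕ) = n + 1 := by have := k.isLt; omega
        rw [wrapFun_last π k hk1] at h1; omega
    have hi : (i : ℕ) < n + 1 := by omega
    have hj : (j : ℕ) < n + 1 := by omega
    have hj0 : (j : ℕ) ≠ 0 := by omega
    have hk0 : (k : ℕ) ≠ 0 := by omega
    rw [wrapFun_mid π i hi0 hi, wrapFun_mid π k hk0 hkl] at h1
    rw [wrapFun_mid π k hk0 hkl, wrapFun_mid π j hj0 hj] at h2
    apply h132
    refine ⟨⟨(i:ℕ)-1, by omega⟩, ⟨(j:ℕ)-1, by omega⟩, ⟨(k:ℕ)-1, by omega⟩, ?_, ?_, ?_, ?_⟩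
    · rw [Fin.lt_def]; simp; omega
    · rw [Fin.lt_def]; simp; omega
    · rw [Fin.lt_def]; omega
    · rw [Fin.lt_def]; omega
  · rintro ⟨i, j, k, l, hij, hjk, hkl, h1, h2, h3⟩
    simp only [wrapPerm_apply] at h1 h2 h3
    rw [Fin.lt_def] at hij hjk hkl h1 h2 h3
    have hi0 : (i : ℕ) ≠ 0 := by
      intro hi0
      rw [wrapFun_zero π i hi0] at h3
      have := (wrapFun π j).isLt; omega
    have hll : (l : ℕ) < n + 1 := by
      rcases Nat.lt_or_ge (l : ℕ) (n+1) with h | h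
      · exact h
      · exfalso
        have hl1 : (l : ℕ) = n + 1 := by have := l.isLt; omega
        rw [wrapFun_last π l hl1] at h1; omega
    have hi : (i : ℕ) < n + 1 := by omega
    have hj : (j : ℕ) < n + 1 := by omega
    have hk : (k : ℕ) < n + 1 := by omega
    have hj0 : (j : ℕ) ≠ 0 := by omega
    have hk0 : (k : ℕ) ≠ 0 := by omega
    have hl0 : (l : ℕ) ≠ 0 := by omega
    rw [wrapFun_mid π k hk0 hk, wrapFun_mid π l hl0 hll] at h1
    rw [wrapFun_mid π l hl0 hll, wrapFun_mid π i hi0 hi] at h2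
    rw [wrapFun_mid π i hi0 hi, wrapFun_mid π j hj0 hj] at h3
    apply h3412
    refine ⟨⟨(i:ℕ)-1, by omega⟩, ⟨(j:ℕ)-1, by omega⟩, ⟨(k:ℕ)-1, by omega⟩, ⟨(l:ℕ)-1, by omega⟩,
      ?_, ?_, ?_, ?_, ?_, ?_⟩
    · rw [Fin.lt_def]; simp; omega
    · rw [Fin.lt_def]; simp; omega
    · rw [Fin.lt_def]; simp; omega
    · rw [Fin.lt_def]; omega
    · rw [Fin.lt_def]; omega
    · rw [Fin.lt_def]; omega

/-! ### restrictions -/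

def res1 {n : ℕ} (σ : Equiv.Perm (Fin (n+2))) : Fin (n+1) → Fin (n+1) :=
  fun i => if h : (σ ⟨(i : ℕ), by omega⟩ : ℕ) < n + 1 then ⟨(σ ⟨(i : ℕ), by omega⟩ : ℕ), h⟩ else i

lemma res1_val {n : ℕ} (σ : Equiv.Perm (Fin (n+2)))
    (hfix : σ ⟨n+1, by omega⟩ = ⟨n+1, by omega⟩) (i : Fin (n+1)) :
    (res1 σ i : ℕ) = (σ ⟨(i : ℕ), by omega⟩ : ℕ) := by
  have hne : (σ ⟨(i : ℕ), by omega⟩ : ℕ) ≠ n + 1 := by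
    intro hc
    have e : σ ⟨(i : ℕ), by omega⟩ = σ ⟨n+1, by omega⟩ := by
      rw [hfix]; exact Fin.ext hc
    have e2 := congrArg Fin.val (σ.injective e)
    simp only [Fin.val_mk] at e2
    have := i.isLt
    omega
  have h : (σ ⟨(i : ℕ), by omega⟩ : ℕ) < n + 1 := by
    have h1 := (σ ⟨(i : ℕ), by omega⟩).isLt
    omega
  simp only [res1, dif_pos h]

def resW {n : ℕ} (σ : Equiv.Perm (Fin (n+2))) : Fin n → Fin n :=
  fun i => if h : (σ ⟨(i : ℕ) + 1, by omega⟩ : ℕ) - 1 < n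
    then ⟨(σ ⟨(i : ℕ) + 1, by omega⟩ : ℕ) - 1, h⟩ else i

lemma mid_maps_mid {n : ℕ} (σ : Equiv.Perm (Fin (n+2))) (hinv : IsInvolution σ)
    (h0 : σ ⟨0, by omega⟩ = ⟨n+1, by omega⟩) (j : Fin (n+2))
    (hj0 : (j : ℕ) ≠ 0) (hj1 : (j : ℕ) ≠ n + 1) :
    1 ≤ (σ j : ℕ) ∧ (σ j : ℕ) ≤ n := by
  have hlast : σ ⟨n+1, by omega⟩ = ⟨0, by omega⟩ := by
    rw [← h0, hinv]
  constructor
  · by_contra hc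
    have : (σ j : ℕ) = 0 := by omega
    have e : σ j = σ ⟨n+1, by omega⟩ := by rw [hlast]; exact Fin.ext this
    have := σ.injective e
    rw [this] at hj1
    simp at hj1
  · by_contra hc
    have hlt := (σ j).isLt
    have : (σ j : ℕ) = n + 1 := by omega
    have e : σ j = σ ⟨0, by omega⟩ := by rw [h0]; exact Fin.ext this
    have := σ.injective e
    rw [this] at hj0
    simp at hj0

lemma resW_val {n : ℕ} (σ : Equiv.Perm (Fin (n+2))) (hinv : IsInvolution σ)
    (h0 : σ ⟨0, by omega⟩ = ⟨n+1, by omega⟩) (i : Fin n) :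
    (resW σ i : ℕ) = (σ ⟨(i : ℕ) + 1, by omega⟩ : ℕ) - 1 := by
  have hm := mid_maps_mid σ hinv h0 ⟨(i : ℕ) + 1, by omega⟩ (by simp) (by
    simp only []
    have := i.isLt
    omega)
  have h : (σ ⟨(i : ℕ) + 1, by omega⟩ : ℕ) - 1 < n := by omega
  simp only [resW, dif_pos h]

/-! ### the key structural lemma -/

lemma top_lemma {n : ℕ} (σ : Equiv.Perm (Fin (n+2))) (hg : Good σ)
    (h : σ ⟨n+1, by omega⟩ ≠ ⟨n+1, by omega⟩) : σ ⟨0, by omega⟩ = ⟨n+1, by omega⟩ := by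
  obtain ⟨hinv, h132, h3412⟩ := hg
  by_contra h0
  have pN : n + 1 < n + 2 := by omega
  have p0 : 0 < n + 2 := by omega
  have hmN : σ (σ ⟨n+1, pN⟩) = ⟨n+1, pN⟩ := hinv _
  have haa : σ (σ ⟨0, p0⟩) = ⟨0, p0⟩ := hinv _
  have hmlt : (σ ⟨n+1, pN⟩ : ℕ) < n + 1 := by
    have h1 := (σ ⟨n+1, pN⟩).isLt
    have h2 : (σ ⟨n+1, pN⟩ : ℕ) ≠ n + 1 := fun hc => h (Fin.ext hc)
    omega
  have hm0 : (σ ⟨n+1, pN⟩ : ℕ) ≠ 0 := by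
    intro hc
    apply h0
    have e : (⟨0, p0⟩ : Fin (n+2)) = σ ⟨n+1, pN⟩ := Fin.ext hc.symm
    rw [e, hmN]
  have haN : (σ ⟨0, p0⟩ : ℕ) ≠ n + 1 := fun hc => h0 (Fin.ext hc)
  have halt : (σ ⟨0, p0⟩ : ℕ) < n + 1 := by
    have := (σ ⟨0, p0⟩).isLt
    omega
  have ham : (σ ⟨0, p0⟩ : ℕ) ≠ (σ ⟨n+1, pN⟩ : ℕ) := by
    intro hc
    have e : σ ⟨0, p0⟩ = σ ⟨n+1, pN⟩ := Fin.ext hc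
    have e2 := congrArg σ e
    rw [haa, hmN] at e2
    have e3 := congrArg Fin.val e2
    simp only [Fin.val_mk] at e3
    omega
  rcases Nat.lt_or_ge (σ ⟨0, p0⟩ : ℕ) (σ ⟨n+1, pN⟩ : ℕ) with hlt | hge
  · -- 132 pattern at (0, σ(N), N)
    apply h132
    refine ⟨⟨0, p0⟩, σ ⟨n+1, pN⟩, ⟨n+1, pN⟩, ?_, ?_, ?_, ?_⟩
    · rw [Fin.lt_def]
      simp only [Fin.val_mk]
      omega
    · rw [Fin.lt_def]
      simp only [Fin.val_mk]
      omega
    · rw [Fin.lt_def]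
      exact hlt
    · rw [Fin.lt_def, hmN]
      simp only [Fin.val_mk]
      omega
  · -- 3412 pattern at (0, σ(N), σ(0), N)
    apply h3412
    refine ⟨⟨0, p0⟩, σ ⟨n+1, pN⟩, σ ⟨0, p0⟩, ⟨n+1, pN⟩, ?_, ?_, ?_, ?_, ?_, ?_⟩
    · rw [Fin.lt_def]
      simp only [Fin.val_mk]
      omega
    · rw [Fin.lt_def]
      omega
    · rw [Fin.lt_def]
      simp only [Fin.val_mk]
      omega
    · rw [Fin.lt_def, haa]
      simp only [Fin.val_mk]
      omega
    · rw [Fin.lt_def]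
      omega
    · rw [Fin.lt_def, hmN]
      simp only [Fin.val_mk]
      omega

/-! ### restriction perms and their goodness -/

lemma inv_res1 {n : ℕ} (σ : Equiv.Perm (Fin (n+2))) (hinv : IsInvolution σ)
    (hfix : σ ⟨n+1, by omega⟩ = ⟨n+1, by omega⟩) : Function.Involutive (res1 σ) := by
  intro i
  apply Fin.ext
  have p1 : (i : ℕ) < n + 2 := by omega
  have key : (⟨((res1 σ i : Fin (n+1)) : ℕ), by omega⟩ : Fin (n+2)) = σ ⟨(i : ℕ), p1⟩ :=
    Fin.ext (res1_val σ hfix i)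
  calc (res1 σ (res1 σ i) : ℕ)
      = (σ ⟨((res1 σ i : Fin (n+1)) : ℕ), by omega⟩ : ℕ) := res1_val σ hfix _
    _ = (σ (σ ⟨(i : ℕ), p1⟩) : ℕ) := congrArg (fun x => (σ x : ℕ)) key
    _ = (i : ℕ) := by rw [hinv]

def res1Perm {n : ℕ} (σ : Equiv.Perm (Fin (n+2))) (hinv : IsInvolution σ)
    (hfix : σ ⟨n+1, by omega⟩ = ⟨n+1, by omega⟩) : Equiv.Perm (Fin (n+1)) :=
  Function.Involutive.toPerm _ (inv_res1 σ hinv hfix)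

@[simp] lemma res1Perm_apply {n : ℕ} (σ : Equiv.Perm (Fin (n+2))) (hinv : IsInvolution σ)
    (hfix : σ ⟨n+1, by omega⟩ = ⟨n+1, by omega⟩) (i : Fin (n+1)) :
    res1Perm σ hinv hfix i = res1 σ i := rfl

lemma good_res1 {n : ℕ} (σ : Equiv.Perm (Fin (n+2))) (hg : Good σ)
    (hfix : σ ⟨n+1, by omega⟩ = ⟨n+1, by omega⟩) : Good (res1Perm σ hg.1 hfix) := by
  obtain ⟨hinv, h132, h3412⟩ := hg
  refine ⟨fun i => inv_res1 σ hinv hfix i, ?_, ?_⟩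
  · rintro ⟨i, j, k, hij, hjk, h1, h2⟩
    simp only [res1Perm_apply] at h1 h2
    rw [Fin.lt_def] at hij hjk h1 h2
    rw [res1_val σ hfix, res1_val σ hfix] at h1 h2
    apply h132
    refine ⟨⟨(i : ℕ), by omega⟩, ⟨(j : ℕ), by omega⟩, ⟨(k : ℕ), by omega⟩, ?_, ?_, ?_, ?_⟩
    · rw [Fin.lt_def]; exact hij
    · rw [Fin.lt_def]; exact hjk
    · rw [Fin.lt_def]; exact h1
    · rw [Fin.lt_def]; exact h2
  · rintro ⟨i, j, k, l, hij, hjk, hkl, h1, h2, h3⟩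
    simp only [res1Perm_apply] at h1 h2 h3
    rw [Fin.lt_def] at hij hjk hkl h1 h2 h3
    rw [res1_val σ hfix, res1_val σ hfix] at h1 h2 h3
    apply h3412
    refine ⟨⟨(i : ℕ), by omega⟩, ⟨(j : ℕ), by omega⟩, ⟨(k : ℕ), by omega⟩, ⟨(l : ℕ), by omega⟩,
      ?_, ?_, ?_, ?_, ?_, ?_⟩
    all_goals rw [Fin.lt_def]
    exacts [hij, hjk, hkl, h1, h2, h3]

lemma inv_resW {n : ℕ} (σ : Equiv.Perm (Fin (n+2))) (hinv : IsInvolution σ)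
    (h0 : σ ⟨0, by omega⟩ = ⟨n+1, by omega⟩) : Function.Involutive (resW σ) := by
  intro i
  have hm := mid_maps_mid σ hinv h0 ⟨(i : ℕ) + 1, by omega⟩ (by simp)
    (by simp only [Fin.val_mk]; have := i.isLt; omega)
  apply Fin.ext
  have p1 : (i : ℕ) + 1 < n + 2 := by have := i.isLt; omega
  have key : (⟨((resW σ i : Fin n) : ℕ) + 1, by omega⟩ : Fin (n+2)) = σ ⟨(i : ℕ) + 1, p1⟩ := by
    apply Fin.ext
    simp only [Fin.val_mk]
    rw [resW_val σ hinv h0 i]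
    omega
  calc (resW σ (resW σ i) : ℕ)
      = (σ ⟨((resW σ i : Fin n) : ℕ) + 1, by omega⟩ : ℕ) - 1 := resW_val σ hinv h0 _
    _ = (σ (σ ⟨(i : ℕ) + 1, p1⟩) : ℕ) - 1 := congrArg (fun x => (σ x : ℕ) - 1) key
    _ = (i : ℕ) := by rw [hinv]; simp only [Fin.val_mk]; omega

def resWPerm {n : ℕ} (σ : Equiv.Perm (Fin (n+2))) (hinv : IsInvolution σ)
    (h0 : σ ⟨0, by omega⟩ = ⟨n+1, by omega⟩) : Equiv.Perm (Fin n) :=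
  Function.Involutive.toPerm _ (inv_resW σ hinv h0)

@[simp] lemma resWPerm_apply {n : ℕ} (σ : Equiv.Perm (Fin (n+2))) (hinv : IsInvolution σ)
    (h0 : σ ⟨0, by omega⟩ = ⟨n+1, by omega⟩) (i : Fin n) :
    resWPerm σ hinv h0 i = resW σ i := rfl

lemma good_resW {n : ℕ} (σ : Equiv.Perm (Fin (n+2))) (hg : Good σ)
    (h0 : σ ⟨0, by omega⟩ = ⟨n+1, by omega⟩) : Good (resWPerm σ hg.1 h0) := by
  obtain ⟨hinv, h132, h3412⟩ := hg
  have mid : ∀ i : Fin n, 1 ≤ (σ ⟨(i : ℕ) + 1, by omega⟩ : ℕ) ∧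
      (σ ⟨(i : ℕ) + 1, by omega⟩ : ℕ) ≤ n := fun i =>
    mid_maps_mid σ hinv h0 ⟨(i : ℕ) + 1, by omega⟩ (by simp)
      (by simp only [Fin.val_mk]; have := i.isLt; omega)
  refine ⟨fun i => inv_resW σ hinv h0 i, ?_, ?_⟩
  · rintro ⟨i, j, k, hij, hjk, h1, h2⟩
    simp only [resWPerm_apply] at h1 h2
    rw [Fin.lt_def] at hij hjk h1 h2
    rw [resW_val σ hinv h0, resW_val σ hinv h0] at h1 h2
    have mi := mid i
    have mj := mid j
    have mk := mid k
    apply h132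
    refine ⟨⟨(i : ℕ) + 1, by omega⟩, ⟨(j : ℕ) + 1, by omega⟩, ⟨(k : ℕ) + 1, by omega⟩,
      ?_, ?_, ?_, ?_⟩
    all_goals rw [Fin.lt_def]
    · simp only [Fin.val_mk]; omega
    · simp only [Fin.val_mk]; omega
    · omega
    · omega
  · rintro ⟨i, j, k, l, hij, hjk, hkl, h1, h2, h3⟩
    simp only [resWPerm_apply] at h1 h2 h3
    rw [Fin.lt_def] at hij hjk hkl h1 h2 h3
    rw [resW_val σ hinv h0, resW_val σ hinv h0] at h1 h2 h3
    have mi := mid i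
    have mj := mid j
    have mk := mid k
    have ml := mid l
    apply h3412
    refine ⟨⟨(i : ℕ) + 1, by omega⟩, ⟨(j : ℕ) + 1, by omega⟩, ⟨(k : ℕ) + 1, by omega⟩,
      ⟨(l : ℕ) + 1, by omega⟩, ?_, ?_, ?_, ?_, ?_, ?_⟩
    all_goals rw [Fin.lt_def]
    · simp only [Fin.val_mk]; omega
    · simp only [Fin.val_mk]; omega
    · simp only [Fin.val_mk]; omega
    · omega
    · omega
    · omega

/-! ### the two equivalences -/

lemma ext1Perm_fix {n : ℕ} (π : Equiv.Perm (Fin (n+1))) (hπ : IsInvolution π) :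
    ext1Perm π hπ ⟨n+1, by omega⟩ = ⟨n+1, by omega⟩ :=
  ext1Fun_last π ⟨n+1, by omega⟩ rfl

lemma wrapPerm_fix0 {n : ℕ} (π : Equiv.Perm (Fin n)) (hπ : IsInvolution π) :
    wrapPerm π hπ ⟨0, by omega⟩ = ⟨n+1, by omega⟩ :=
  Fin.ext (wrapFun_zero π ⟨0, by omega⟩ rfl)

def e1Equiv (n : ℕ) :
    S (n+1) ≃ {σ : S (n+2) // σ.1 ⟨n+1, by omega⟩ = ⟨n+1, by omega⟩} where
  toFun p := ⟨⟨ext1Perm p.1 p.2.1, good_ext1 p.1 p.2⟩, ext1Perm_fix p.1 p.2.1⟩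
  invFun q := ⟨res1Perm q.1.1 q.1.2.1 q.2, good_res1 q.1.1 q.1.2 q.2⟩
  left_inv p := by
    apply Subtype.ext
    apply Equiv.ext
    intro i
    apply Fin.ext
    simp only [res1Perm_apply]
    rw [res1_val (ext1Perm p.1 p.2.1) (ext1Perm_fix p.1 p.2.1) i]
    rw [show (ext1Perm p.1 p.2.1) ⟨(i : ℕ), by omega⟩ = ext1Fun p.1 ⟨(i : ℕ), by omega⟩ from rfl]
    rw [ext1Fun_val p.1 _ (show ((⟨(i : ℕ), by omega⟩ : Fin (n+2)) : ℕ) < n + 1 from i.isLt)]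
  right_inv q := by
    apply Subtype.ext
    apply Subtype.ext
    apply Equiv.ext
    intro j
    apply Fin.ext
    rw [show (ext1Perm (res1Perm q.1.1 q.1.2.1 q.2) (fun i => inv_res1 q.1.1 q.1.2.1 q.2 i)) j =
      ext1Fun (res1Perm q.1.1 q.1.2.1 q.2) j from rfl]
    rcases Nat.lt_or_ge (j : ℕ) (n + 1) with hv | hv
    · rw [ext1Fun_val _ j hv]
      simp only [res1Perm_apply]
      rw [res1_val q.1.1 q.2]
    · have hv' : (j : ℕ) = n + 1 := by have := j.isLt; omega
      rw [ext1Fun_last _ j hv']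
      have : j = ⟨n+1, by omega⟩ := Fin.ext hv'
      rw [this, q.2]

def e2Equiv (n : ℕ) :
    S n ≃ {σ : S (n+2) // ¬ σ.1 ⟨n+1, by omega⟩ = ⟨n+1, by omega⟩} where
  toFun p := ⟨⟨wrapPerm p.1 p.2.1, good_wrap p.1 p.2⟩, by
    intro hc
    have hv := congrArg Fin.val hc
    rw [show ((wrapPerm p.1 p.2.1) ⟨n+1, by omega⟩ : ℕ) =
      (wrapFun p.1 ⟨n+1, by omega⟩ : ℕ) from rfl] at hv
    rw [wrapFun_last p.1 _ rfl] at hv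
    simp at hv⟩
  invFun q := ⟨resWPerm q.1.1 q.1.2.1 (top_lemma q.1.1 q.1.2 q.2),
    good_resW q.1.1 q.1.2 (top_lemma q.1.1 q.1.2 q.2)⟩
  left_inv p := by
    apply Subtype.ext
    apply Equiv.ext
    intro i
    apply Fin.ext
    simp only [resWPerm_apply]
    rw [resW_val (wrapPerm p.1 p.2.1) (fun i => inv_wrap p.1 p.2.1 i)
      (wrapPerm_fix0 p.1 p.2.1) i]
    rw [show (wrapPerm p.1 p.2.1) ⟨(i : ℕ) + 1, by omega⟩ =
      wrapFun p.1 ⟨(i : ℕ) + 1, by omega⟩ from rfl]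
    rw [wrapFun_mid p.1 _ (by simp) (by simp only [Fin.val_mk]; have := i.isLt; omega)]
    simp only [Fin.val_mk, Nat.add_sub_cancel]
  right_inv q := by
    have h0 := top_lemma q.1.1 q.1.2 q.2
    have hinv : IsInvolution q.1.1 := q.1.2.1
    have hlast : q.1.1 ⟨n+1, by omega⟩ = ⟨0, by omega⟩ := by
      have h2 := hinv ⟨0, by omega⟩
      rw [h0] at h2
      exact h2
    apply Subtype.ext
    apply Subtype.ext
    apply Equiv.ext
    intro j
    apply Fin.ext
    rw [show (wrapPerm (resWPerm q.1.1 hinv h0) (fun i => inv_resW q.1.1 hinv h0 i)) j =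
      wrapFun (resWPerm q.1.1 hinv h0) j from rfl]
    rcases eq_or_ne (j : ℕ) 0 with hj0 | hj0
    · rw [wrapFun_zero _ j hj0]
      have ej : j = ⟨0, by omega⟩ := Fin.ext hj0
      rw [ej, h0]
    · rcases Nat.lt_or_ge (j : ℕ) (n+1) with hjm | hjl
      · rw [wrapFun_mid _ j hj0 hjm]
        simp only [resWPerm_apply]
        rw [resW_val q.1.1 hinv h0 ⟨(j : ℕ) - 1, by omega⟩]
        have ej : (⟨((⟨(j : ℕ) - 1, by omega⟩ : Fin n) : ℕ) + 1, by omega⟩ : Fin (n+2)) = j :=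
          Fin.ext (by simp only [Fin.val_mk]; omega)
        rw [ej]
        have hm := (mid_maps_mid q.1.1 hinv h0 j hj0 (by omega)).1
        omega
      · have hj1 : (j : ℕ) = n + 1 := by have := j.isLt; omega
        rw [wrapFun_last _ j hj1]
        have ej : j = ⟨n+1, by omega⟩ := Fin.ext hj1
        rw [ej, hlast]

/-! ### counting -/

lemma card_rec (n : ℕ) : Nat.card (S (n+2)) = Nat.card (S (n+1)) + Nat.card (S n) := by
  classical
  rw [Nat.card_congr (Equiv.sumCompl
    (fun σ : S (n+2) => σ.1 ⟨n+1, by omega⟩ = ⟨n+1, by omega⟩)).symm, Nat.card_sum,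
    Nat.card_congr (e1Equiv n).symm, Nat.card_congr (e2Equiv n).symm]

lemma good_one (n : ℕ) : Good (1 : Equiv.Perm (Fin n)) := by
  refine ⟨fun i => rfl, ?_, ?_⟩
  · rintro ⟨i, j, k, hij, hjk, h1, h2⟩
    simp only [Equiv.Perm.one_apply] at h1 h2
    exact absurd h2 (not_lt.mpr hjk.le)
  · rintro ⟨i, j, k, l, hij, hjk, hkl, h1, h2, h3⟩
    simp only [Equiv.Perm.one_apply] at h1 h2 h3
    exact absurd h2 (not_lt.mpr ((hij.trans (hjk.trans hkl)).le))

lemma card_base (n : ℕ) (hs : Subsingleton (Fin n)) : Nat.card (S n) = 1 := by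
  haveI : Unique (S n) :=
    { default := ⟨1, good_one n⟩,
      uniq := fun p => Subtype.ext (Equiv.ext fun i => Subsingleton.elim _ _) }
  exact Nat.card_unique

lemma card_fib : ∀ m : ℕ, Nat.card (S m) = Nat.fib (m + 1) := by
  intro m
  induction m using Nat.twoStepInduction with
  | zero => rw [card_base 0 inferInstance, Nat.fib_one]
  | one => rw [card_base 1 inferInstance, Nat.fib_two]
  | more m ih1 ih2 =>
    rw [card_rec m, ih1, ih2]
    have h1 := Nat.fib_add_two (n := m + 1)
    have h2 : Nat.fib (m + 2 + 1) = Nat.fib (m + 1 + 2) := rfl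
    omega

end Stmt13

theorem stmt13 (n : ℕ) :
    Nat.card {π : Equiv.Perm (Fin n) // IsInvolution π ∧ Avoids132 π ∧ Avoids3412 π} =
      Nat.fib (n + 1) := Stmt13.card_fib n
end

section
/- The number of involutions of length 2n avoiding 132, 123, and 213 equals F_{n+1}, and the number of such involutions of length 2n+1 equals F_n, where F_0=F_1=1 and F_m=F_{m-1}+F_{m-2}. -/
def Avoids123 {n : ℕ} (π : Equiv.Perm (Fin n)) : Prop :=
  ¬ ∃ i j k : Fin n, i < j ∧ j < k ∧ π i < π j ∧ π j < π k

def Avoids213 {n : ℕ} (π : Equiv.Perm (Fin n)) : Prop :=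
  ¬ ∃ i j k : Fin n, i < j ∧ j < k ∧ π j < π i ∧ π i < π k

/-- The "band" condition: every value sits within 1 of the antidiagonal. -/
def Band (m : ℕ) (π : Equiv.Perm (Fin m)) : Prop :=
  ∀ i : Fin m, m - 2 ≤ (π i).val + i.val ∧ (π i).val + i.val ≤ m

instance (m : ℕ) : DecidablePred (Band m) := fun _ => inferInstanceAs (Decidable (∀ _, _))

/-- pigeonhole: at least two positions before `i` carry values below `π i`, if `π i + i` is big -/
lemma two_before {m : ℕ} (π : Equiv.Perm (Fin m)) (i : Fin m) (h : m + 1 ≤ (π i).val + i.val) :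
    ∃ j k : Fin m, j < k ∧ k < i ∧ π j < π i ∧ π k < π i := by
  classical
  set C : Finset (Fin m) := Finset.univ.filter (fun j => π j < π i ∧ j < i) with hC
  have hcard : 2 ≤ C.card := by
    have hA : (Finset.univ.filter (fun j => π j < π i)).card = (π i).val := by
      have : (Finset.univ.filter (fun j => π j < π i)) = (Finset.Iio (π i)).image π.symm := by
        ext j
        simp only [Finset.mem_filter, Finset.mem_univ, true_and, Finset.mem_image,
          Finset.mem_Iio]
        constructor
        · intro hj; exact ⟨π j, hj, π.symm_apply_apply j⟩
        · rintro ⟨v, hv, rfl⟩; simpa using hv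
      rw [this, Finset.card_image_of_injective _ π.symm.injective, Fin.card_Iio]
    have hsub : (Finset.univ.filter (fun j => π j < π i)) ⊆ C ∪ Finset.Ioi i := by
      intro j hj
      simp only [Finset.mem_filter, Finset.mem_univ, true_and] at hj
      rcases lt_trichotomy j i with hlt | rfl | hgt
      · exact Finset.mem_union_left _ (by simp [hC, hj, hlt])
      · exact absurd hj (lt_irrefl _)
      · exact Finset.mem_union_right _ (by simpa using hgt)
    have := Finset.card_le_card hsub
    have h2 := Finset.card_union_le C (Finset.Ioi i)
    rw [hA] at this
    have h3 : (Finset.Ioi i).card = m - 1 - i.val := Fin.card_Ioi i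
    omega
  obtain ⟨j, hj, k, hk, hjk⟩ := Finset.one_lt_card.mp hcard
  simp only [hC, Finset.mem_filter, Finset.mem_univ, true_and] at hj hk
  rcases lt_or_gt_of_ne hjk with h' | h'
  · exact ⟨j, k, h', hk.2, hj.1, hk.1⟩
  · exact ⟨k, j, h', hj.2, hk.1, hj.1⟩

/-- pigeonhole: at least two positions after `i` carry values above `π i`, if `π i + i` is small -/
lemma two_after {m : ℕ} (π : Equiv.Perm (Fin m)) (i : Fin m) (h : (π i).val + i.val + 3 ≤ m) :
    ∃ j k : Fin m, i < j ∧ j < k ∧ π i < π j ∧ π i < π k := by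
  classical
  set C : Finset (Fin m) := Finset.univ.filter (fun j => π i < π j ∧ i < j) with hC
  have hcard : 2 ≤ C.card := by
    have hA : (Finset.univ.filter (fun j => π i < π j)).card = m - 1 - (π i).val := by
      have : (Finset.univ.filter (fun j => π i < π j)) = (Finset.Ioi (π i)).image π.symm := by
        ext j
        simp only [Finset.mem_filter, Finset.mem_univ, true_and, Finset.mem_image,
          Finset.mem_Ioi]
        constructor
        · intro hj; exact ⟨π j, hj, π.symm_apply_apply j⟩
        · rintro ⟨v, hv, rfl⟩; simpa using hv
      rw [this, Finset.card_image_of_injective _ π.symm.injective, Fin.card_Ioi]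
    have hsub : (Finset.univ.filter (fun j => π i < π j)) ⊆ C ∪ Finset.Iio i := by
      intro j hj
      simp only [Finset.mem_filter, Finset.mem_univ, true_and] at hj
      rcases lt_trichotomy i j with hlt | rfl | hgt
      · exact Finset.mem_union_left _ (by simp [hC, hj, hlt])
      · exact absurd hj (lt_irrefl _)
      · exact Finset.mem_union_right _ (by simpa using hgt)
    have := Finset.card_le_card hsub
    have h2 := Finset.card_union_le C (Finset.Iio i)
    rw [hA] at this
    have h3 : (Finset.Iio i).card = i.val := Fin.card_Iio i
    have h4 : (π i).val < m := (π i).isLt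
    omega
  obtain ⟨j, hj, k, hk, hjk⟩ := Finset.one_lt_card.mp hcard
  simp only [hC, Finset.mem_filter, Finset.mem_univ, true_and] at hj hk
  rcases lt_or_gt_of_ne hjk with h' | h'
  · exact ⟨j, k, hj.2, h', hj.1, hk.1⟩
  · exact ⟨k, j, hk.2, h', hk.1, hj.1⟩

/-- Main characterization: the three avoidance conditions together are equivalent to `Band`. -/
lemma avoid_iff_band {m : ℕ} (π : Equiv.Perm (Fin m)) :
    (Avoids132 π ∧ Avoids123 π ∧ Avoids213 π) ↔ Band m π := by
  constructor
  · rintro ⟨h132, h123, h213⟩ i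
    constructor
    · by_contra hlt
      push_neg at hlt
      have h' : (π i).val + i.val + 3 ≤ m := by omega
      obtain ⟨j, k, hij, hjk, h1, h2⟩ := two_after π i h'
      rcases lt_trichotomy (π j) (π k) with h3 | h3 | h3
      · exact h123 ⟨i, j, k, hij, hjk, h1, h3⟩
      · exact absurd (π.injective h3) (ne_of_lt hjk)
      · exact h132 ⟨i, j, k, hij, hjk, h2, h3⟩
    · by_contra hgt
      push_neg at hgt
      obtain ⟨j, k, hjk, hki, h1, h2⟩ := two_before π i hgt
      rcases lt_trichotomy (π j) (π k) with h3 | h3 | h3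
      · exact h123 ⟨j, k, i, hjk, hki, h3, h2⟩
      · exact absurd (π.injective h3) (ne_of_lt hjk)
      · exact h213 ⟨j, k, i, hjk, hki, h3, h1⟩
  · intro hb
    have key : ∀ i j : Fin m, i < j → π i < π j → (π j).val + j.val ≥ (π i).val + i.val + 2 := by
      intro i j hij hpij
      have := Fin.lt_iff_val_lt_val.mp hij
      have := Fin.lt_iff_val_lt_val.mp hpij
      omega
    refine ⟨?_, ?_, ?_⟩
    · rintro ⟨i, j, k, hij, hjk, h1, h2⟩
      have hbi := hb i; have hbk := hb k
      have hik : i < k := hij.trans hjk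
      have := Fin.lt_iff_val_lt_val.mp hik
      have := Fin.lt_iff_val_lt_val.mp h1
      have := Fin.lt_iff_val_lt_val.mp hij
      have := Fin.lt_iff_val_lt_val.mp hjk
      have hk3 : 2 ≤ k.val := by omega
      omega
    · rintro ⟨i, j, k, hij, hjk, h1, h2⟩
      have hbi := hb i; have hbk := hb k
      have := Fin.lt_iff_val_lt_val.mp hij
      have := Fin.lt_iff_val_lt_val.mp hjk
      have := Fin.lt_iff_val_lt_val.mp h1
      have := Fin.lt_iff_val_lt_val.mp h2
      omega
    · rintro ⟨i, j, k, hij, hjk, h1, h2⟩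
      have hbj := hb j; have hbk := hb k
      have := Fin.lt_iff_val_lt_val.mp hij
      have := Fin.lt_iff_val_lt_val.mp hjk
      have := Fin.lt_iff_val_lt_val.mp h1
      have := Fin.lt_iff_val_lt_val.mp h2
      omega

def padFun {m : ℕ} (π : Equiv.Perm (Fin m)) : Fin (m + 2) → Fin (m + 2) := fun x =>
  if h0 : x.val = 0 then ⟨m + 1, by omega⟩
  else if h1 : x.val = m + 1 then ⟨0, by omega⟩
  else ⟨(π ⟨x.val - 1, by have := x.isLt; omega⟩).val + 1,
    by have := (π ⟨x.val - 1, by have := x.isLt; omega⟩).isLt; omega⟩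

lemma padFun_zero {m : ℕ} (π : Equiv.Perm (Fin m)) {x : Fin (m + 2)} (hx : x.val = 0) :
    padFun π x = ⟨m + 1, by omega⟩ := by
  unfold padFun; rw [dif_pos hx]

lemma padFun_last {m : ℕ} (π : Equiv.Perm (Fin m)) {x : Fin (m + 2)} (hx : x.val = m + 1) :
    padFun π x = ⟨0, by omega⟩ := by
  unfold padFun; rw [dif_neg (by omega), dif_pos hx]

lemma padFun_mid {m : ℕ} (π : Equiv.Perm (Fin m)) {x : Fin (m + 2)}
    (h1 : ¬ x.val = 0) (h2 : ¬ x.val = m + 1) (hlt : x.val - 1 < m) :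
    padFun π x = ⟨(π ⟨x.val - 1, hlt⟩).val + 1,
      by have := (π ⟨x.val - 1, hlt⟩).isLt; omega⟩ := by
  unfold padFun; rw [dif_neg h1, dif_neg h2]

lemma padFun_inv {m : ℕ} (π ρ : Equiv.Perm (Fin m)) (h : ∀ i, ρ (π i) = i) :
    Function.LeftInverse (padFun ρ) (padFun π) := by
  intro x
  by_cases h0 : x.val = 0
  · rw [padFun_zero π h0, padFun_last ρ (by simp)]
    exact Fin.ext h0.symm
  by_cases h1 : x.val = m + 1
  · rw [padFun_last π h1, padFun_zero ρ (by simp)]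
    exact Fin.ext h1.symm
  have hlt : x.val - 1 < m := by have := x.isLt; omega
  rw [padFun_mid π h0 h1 hlt]
  have hy := (π ⟨x.val - 1, hlt⟩).isLt
  rw [padFun_mid ρ (by simp) (by simp; omega) (by simp)]
  apply Fin.ext
  simp only [Nat.add_sub_cancel, Fin.eta, h]
  have := x.isLt
  omega

def pad1 {m : ℕ} (π : Equiv.Perm (Fin m)) : Equiv.Perm (Fin (m + 2)) :=
  ⟨padFun π, padFun π.symm,
    padFun_inv π π.symm (fun i => π.symm_apply_apply i),
    padFun_inv π.symm π (fun i => π.apply_symm_apply i)⟩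

lemma pad1_zero {m : ℕ} (π : Equiv.Perm (Fin m)) {x : Fin (m + 2)} (hx : x.val = 0) :
    pad1 π x = ⟨m + 1, by omega⟩ := padFun_zero π hx

lemma pad1_last {m : ℕ} (π : Equiv.Perm (Fin m)) {x : Fin (m + 2)} (hx : x.val = m + 1) :
    pad1 π x = ⟨0, by omega⟩ := padFun_last π hx

lemma pad1_mid {m : ℕ} (π : Equiv.Perm (Fin m)) {x : Fin (m + 2)}
    (h1 : ¬ x.val = 0) (h2 : ¬ x.val = m + 1) (hlt : x.val - 1 < m) :
    pad1 π x = ⟨(π ⟨x.val - 1, hlt⟩).val + 1,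
      by have := (π ⟨x.val - 1, hlt⟩).isLt; omega⟩ := padFun_mid π h1 h2 hlt

def padFun2 {m : ℕ} (π : Equiv.Perm (Fin m)) : Fin (m + 4) → Fin (m + 4) := fun x =>
  if h0 : x.val = 0 then ⟨m + 2, by omega⟩
  else if h1 : x.val = 1 then ⟨m + 3, by omega⟩
  else if h2 : x.val = m + 2 then ⟨0, by omega⟩
  else if h3 : x.val = m + 3 then ⟨1, by omega⟩
  else ⟨(π ⟨x.val - 2, by have := x.isLt; omega⟩).val + 2,
    by have := (π ⟨x.val - 2, by have := x.isLt; omega⟩).isLt; omega⟩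

lemma padFun2_zero {m : ℕ} (π : Equiv.Perm (Fin m)) {x : Fin (m + 4)} (hx : x.val = 0) :
    padFun2 π x = ⟨m + 2, by omega⟩ := by
  unfold padFun2; rw [dif_pos hx]

lemma padFun2_one {m : ℕ} (π : Equiv.Perm (Fin m)) {x : Fin (m + 4)} (hx : x.val = 1) :
    padFun2 π x = ⟨m + 3, by omega⟩ := by
  unfold padFun2; rw [dif_neg (by omega), dif_pos hx]

lemma padFun2_m2 {m : ℕ} (π : Equiv.Perm (Fin m)) {x : Fin (m + 4)} (hx : x.val = m + 2) :
    padFun2 π x = ⟨0, by omega⟩ := by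
  unfold padFun2; rw [dif_neg (by omega), dif_neg (by omega), dif_pos hx]

lemma padFun2_m3 {m : ℕ} (π : Equiv.Perm (Fin m)) {x : Fin (m + 4)} (hx : x.val = m + 3) :
    padFun2 π x = ⟨1, by omega⟩ := by
  unfold padFun2; rw [dif_neg (by omega), dif_neg (by omega), dif_neg (by omega), dif_pos hx]

lemma padFun2_mid {m : ℕ} (π : Equiv.Perm (Fin m)) {x : Fin (m + 4)}
    (h0 : ¬ x.val = 0) (h1 : ¬ x.val = 1) (h2 : ¬ x.val = m + 2) (h3 : ¬ x.val = m + 3)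
    (hlt : x.val - 2 < m) :
    padFun2 π x = ⟨(π ⟨x.val - 2, hlt⟩).val + 2,
      by have := (π ⟨x.val - 2, hlt⟩).isLt; omega⟩ := by
  unfold padFun2; rw [dif_neg h0, dif_neg h1, dif_neg h2, dif_neg h3]

lemma padFun2_inv {m : ℕ} (π ρ : Equiv.Perm (Fin m)) (h : ∀ i, ρ (π i) = i) :
    Function.LeftInverse (padFun2 ρ) (padFun2 π) := by
  intro x
  by_cases h0 : x.val = 0
  · rw [padFun2_zero π h0, padFun2_m2 ρ (by simp)]
    exact Fin.ext h0.symm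
  by_cases h1 : x.val = 1
  · rw [padFun2_one π h1, padFun2_m3 ρ (by simp)]
    exact Fin.ext h1.symm
  by_cases h2 : x.val = m + 2
  · rw [padFun2_m2 π h2, padFun2_zero ρ (by simp)]
    exact Fin.ext h2.symm
  by_cases h3 : x.val = m + 3
  · rw [padFun2_m3 π h3, padFun2_one ρ (by simp)]
    exact Fin.ext h3.symm
  have hlt : x.val - 2 < m := by have := x.isLt; omega
  rw [padFun2_mid π h0 h1 h2 h3 hlt]
  have hy := (π ⟨x.val - 2, hlt⟩).isLt
  rw [padFun2_mid ρ (by simp) (by simp) (by simp; omega) (by simp; omega) (by simp)]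
  apply Fin.ext
  simp only [Nat.add_sub_cancel, Fin.eta, h]
  have := x.isLt
  omega

def pad2 {m : ℕ} (π : Equiv.Perm (Fin m)) : Equiv.Perm (Fin (m + 4)) :=
  ⟨padFun2 π, padFun2 π.symm,
    padFun2_inv π π.symm (fun i => π.symm_apply_apply i),
    padFun2_inv π.symm π (fun i => π.apply_symm_apply i)⟩

lemma pad1_mid' {m : ℕ} (π : Equiv.Perm (Fin m)) (i : Fin m) :
    pad1 π ⟨i.val + 1, by have := i.isLt; omega⟩
      = ⟨(π i).val + 1, by have := (π i).isLt; omega⟩ := by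
  have hi := i.isLt
  have hlt : (⟨i.val + 1, by omega⟩ : Fin (m + 2)).val - 1 < m := by simp
  rw [pad1_mid π (by simp) (by simp; omega) hlt]
  apply Fin.ext
  simp only [Fin.val_mk, add_left_inj]
  have e1 : (⟨(⟨i.val + 1, by omega⟩ : Fin (m + 2)).val - 1, hlt⟩ : Fin m) = i :=
    Fin.ext (by simp)
  rw [e1]

lemma pad2_mid {m : ℕ} (π : Equiv.Perm (Fin m)) {x : Fin (m + 4)}
    (h0 : ¬ x.val = 0) (h1 : ¬ x.val = 1) (h2 : ¬ x.val = m + 2) (h3 : ¬ x.val = m + 3)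
    (hlt : x.val - 2 < m) :
    pad2 π x = ⟨(π ⟨x.val - 2, hlt⟩).val + 2,
      by have := (π ⟨x.val - 2, hlt⟩).isLt; omega⟩ := padFun2_mid π h0 h1 h2 h3 hlt

lemma pad2_mid' {m : ℕ} (π : Equiv.Perm (Fin m)) (i : Fin m) :
    pad2 π ⟨i.val + 2, by have := i.isLt; omega⟩
      = ⟨(π i).val + 2, by have := (π i).isLt; omega⟩ := by
  have hi := i.isLt
  have hlt : (⟨i.val + 2, by omega⟩ : Fin (m + 4)).val - 2 < m := by simp
  rw [pad2_mid π (by simp) (by simp) (by simp; omega) (by simp; omega) hlt]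
  apply Fin.ext
  simp only [Fin.val_mk, add_left_inj]
  have e1 : (⟨(⟨i.val + 2, by omega⟩ : Fin (m + 4)).val - 2, hlt⟩ : Fin m) = i :=
    Fin.ext (by simp)
  rw [e1]

lemma pad2_zero' {m : ℕ} (π : Equiv.Perm (Fin m)) {x : Fin (m + 4)} (hx : x.val = 0) :
    pad2 π x = ⟨m + 2, by omega⟩ := padFun2_zero π hx

lemma pad2_one' {m : ℕ} (π : Equiv.Perm (Fin m)) {x : Fin (m + 4)} (hx : x.val = 1) :
    pad2 π x = ⟨m + 3, by omega⟩ := padFun2_one π hx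

lemma pad2_m2' {m : ℕ} (π : Equiv.Perm (Fin m)) {x : Fin (m + 4)} (hx : x.val = m + 2) :
    pad2 π x = ⟨0, by omega⟩ := padFun2_m2 π hx

lemma pad2_m3' {m : ℕ} (π : Equiv.Perm (Fin m)) {x : Fin (m + 4)} (hx : x.val = m + 3) :
    pad2 π x = ⟨1, by omega⟩ := padFun2_m3 π hx

instance {n : ℕ} : DecidablePred (IsInvolution (n := n)) :=
  fun _ => inferInstanceAs (Decidable (∀ _, _))

/-- the finset of banded involutions -/
def F (m : ℕ) : Finset (Equiv.Perm (Fin m)) :=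
  Finset.univ.filter (fun π => IsInvolution π ∧ Band m π)

lemma mem_F {m : ℕ} (π : Equiv.Perm (Fin m)) :
    π ∈ F m ↔ IsInvolution π ∧ Band m π := by simp [F]

lemma pad1_mem {m : ℕ} {π : Equiv.Perm (Fin m)} (h : π ∈ F m) : pad1 π ∈ F (m + 2) := by
  rw [mem_F] at h ⊢
  obtain ⟨hinv, hb⟩ := h
  constructor
  · exact padFun_inv π π hinv
  · intro x
    have hx := x.isLt
    by_cases h0 : x.val = 0
    · rw [pad1_zero π h0]; simp only [Fin.val_mk]; omega
    by_cases h1 : x.val = m + 1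
    · rw [pad1_last π h1]; simp only [Fin.val_mk]; omega
    · have hlt : x.val - 1 < m := by omega
      rw [pad1_mid π h0 h1 hlt]
      have := hb ⟨x.val - 1, hlt⟩
      have := (π ⟨x.val - 1, hlt⟩).isLt
      simp only [Fin.val_mk] at *
      omega

lemma pad2_mem {m : ℕ} {π : Equiv.Perm (Fin m)} (h : π ∈ F m) : pad2 π ∈ F (m + 4) := by
  rw [mem_F] at h ⊢
  obtain ⟨hinv, hb⟩ := h
  constructor
  · exact padFun2_inv π π hinv
  · intro x
    have hx := x.isLt
    by_cases h0 : x.val = 0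
    · rw [pad2_zero' π h0]; simp only [Fin.val_mk]; omega
    by_cases h1 : x.val = 1
    · rw [pad2_one' π h1]; simp only [Fin.val_mk]; omega
    by_cases h2 : x.val = m + 2
    · rw [pad2_m2' π h2]; simp only [Fin.val_mk]; omega
    by_cases h3 : x.val = m + 3
    · rw [pad2_m3' π h3]; simp only [Fin.val_mk]; omega
    · have hlt : x.val - 2 < m := by omega
      rw [pad2_mid π h0 h1 h2 h3 hlt]
      have := hb ⟨x.val - 2, hlt⟩
      have := (π ⟨x.val - 2, hlt⟩).isLt
      simp only [Fin.val_mk] at *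
      omega

lemma pad1_inj {m : ℕ} : Function.Injective (pad1 (m := m)) := by
  intro σ τ h
  ext i
  have h1 := pad1_mid' σ i
  have h2 := pad1_mid' τ i
  rw [h] at h1
  rw [h1] at h2
  have := Fin.mk.injEq _ _ _ _ ▸ h2
  omega

lemma pad2_inj {m : ℕ} : Function.Injective (pad2 (m := m)) := by
  intro σ τ h
  ext i
  have h1 := pad2_mid' σ i
  have h2 := pad2_mid' τ i
  rw [h] at h1
  rw [h1] at h2
  have := Fin.mk.injEq _ _ _ _ ▸ h2
  omega


def emb1 {m : ℕ} (i : Fin (m + 2)) : Fin (m + 4) := ⟨i.val + 1, by have := i.isLt; omega⟩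

def emb2 {m : ℕ} (i : Fin m) : Fin (m + 4) := ⟨i.val + 2, by have := i.isLt; omega⟩

@[simp] lemma emb1_val {m : ℕ} (i : Fin (m + 2)) : (emb1 i).val = i.val + 1 := rfl
@[simp] lemma emb2_val {m : ℕ} (i : Fin m) : (emb2 i).val = i.val + 2 := rfl

lemma inv_point {m : ℕ} (π : Equiv.Perm (Fin m)) (hinv : IsInvolution π) {a b : Fin m}
    (h : π a = b) : π b = a := by rw [← h, hinv]

lemma surj1 {m : ℕ} {π : Equiv.Perm (Fin (m + 4))} (hπ : π ∈ F (m + 4))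
    (hA : (π ⟨0, by omega⟩).val = m + 3) : ∃ σ ∈ F (m + 2), pad1 σ = π := by
  rw [mem_F] at hπ
  obtain ⟨hinv, hb⟩ := hπ
  set z0 : Fin (m + 4) := ⟨0, by omega⟩ with hz0
  have key : ∀ i : Fin (m + 2), 1 ≤ (π (emb1 i)).val ∧ (π (emb1 i)).val ≤ m + 2 := by
    intro i
    have hi := i.isLt
    have hne1 : (π (emb1 i)).val ≠ m + 3 := by
      intro h
      have h' : π (emb1 i) = π z0 := Fin.ext (by rw [h, hA])
      have := congrArg Fin.val (π.injective h')
      simp [hz0] at this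
    have hne0 : (π (emb1 i)).val ≠ 0 := by
      intro h
      have h' : π (emb1 i) = z0 := Fin.ext (by simpa [hz0] using h)
      have h2 : π z0 = emb1 i := by rw [← h', hinv]
      have := congrArg Fin.val h2
      rw [hA] at this
      simp at this
      omega
    have := (π (emb1 i)).isLt
    omega
  have hlt1 : ∀ i : Fin (m + 2), (π (emb1 i)).val - 1 < m + 2 := by
    intro i; have := key i; have := (π (emb1 i)).isLt; omega
  set u : Fin (m + 2) → Fin (m + 2) := fun i => ⟨(π (emb1 i)).val - 1, hlt1 i⟩ with hu_def
  have hemb : ∀ i : Fin (m + 2), emb1 (u i) = π (emb1 i) := by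
    intro i
    apply Fin.ext
    have := key i
    simp [hu_def]
    omega
  have hu : ∀ i, u (u i) = i := by
    intro i
    apply Fin.ext
    show (π (emb1 (u i))).val - 1 = i.val
    rw [hemb i, hinv]
    simp
  refine ⟨⟨u, u, hu, hu⟩, ?_, ?_⟩
  · rw [mem_F]
    refine ⟨hu, ?_⟩
    intro i
    have hbi := hb (emb1 i)
    have hki := key i
    simp only [emb1_val] at hbi
    show m + 2 - 2 ≤ (u i).val + i.val ∧ (u i).val + i.val ≤ m + 2
    simp only [hu_def]
    omega
  · apply Equiv.ext
    intro x
    have hx := x.isLt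
    by_cases hx0 : x.val = 0
    · rw [pad1_zero _ hx0]
      have hxz : x = z0 := Fin.ext hx0
      rw [hxz]
      exact Fin.ext (by rw [hA])
    by_cases hxl : x.val = m + 3
    · rw [pad1_last _ (by omega : x.val = (m + 2) + 1)]
      have hxz : x = π z0 := Fin.ext (by rw [hA, hxl])
      rw [hxz, hinv]
    · have hlt : x.val - 1 < m + 2 := by omega
      rw [pad1_mid _ hx0 (by omega : ¬ x.val = (m + 2) + 1) hlt]
      have he : emb1 (⟨x.val - 1, hlt⟩ : Fin (m + 2)) = x := Fin.ext (by simp; omega)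
      have hk := key ⟨x.val - 1, hlt⟩
      rw [he] at hk
      apply Fin.ext
      show (u ⟨x.val - 1, hlt⟩).val + 1 = (π x).val
      simp only [hu_def, Fin.val_mk]
      rw [he]
      omega


lemma surj2 {m : ℕ} {π : Equiv.Perm (Fin (m + 4))} (hπ : π ∈ F (m + 4))
    (hA : (π ⟨0, by omega⟩).val = m + 2) : ∃ σ ∈ F m, pad2 σ = π := by
  rw [mem_F] at hπ
  obtain ⟨hinv, hb⟩ := hπ
  obtain ⟨c0, hc0⟩ : ∃ x : Fin (m + 4), x.val = 0 := ⟨⟨0, by omega⟩, rfl⟩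
  obtain ⟨c1, hc1⟩ : ∃ x : Fin (m + 4), x.val = 1 := ⟨⟨1, by omega⟩, rfl⟩
  obtain ⟨c2, hc2⟩ : ∃ x : Fin (m + 4), x.val = m + 2 := ⟨⟨m + 2, by omega⟩, rfl⟩
  obtain ⟨c3, hc3⟩ : ∃ x : Fin (m + 4), x.val = m + 3 := ⟨⟨m + 3, by omega⟩, rfl⟩
  have hA' : (π c0).val = m + 2 := by
    rw [show c0 = ⟨0, by omega⟩ from Fin.ext (by rw [hc0])]
    exact hA
  have h1 : π c0 = c2 := Fin.ext (by rw [hA', hc2])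
  have h2 : π c2 = c0 := inv_point π hinv h1
  have hb3 := hb c3
  rw [hc3] at hb3
  have hb3lt := (π c3).isLt
  have hne30 : (π c3).val ≠ 0 := by
    intro h
    have h' : π c3 = π c2 := Fin.ext (by rw [h, h2, hc0])
    have t := congrArg Fin.val (π.injective h')
    rw [hc3, hc2] at t
    omega
  have h4 : π c3 = c1 := Fin.ext (by rw [hc1]; omega)
  have h3 : π c1 = c3 := inv_point π hinv h4
  have key : ∀ i : Fin m, 2 ≤ (π (emb2 i)).val ∧ (π (emb2 i)).val ≤ m + 1 := by
    intro i
    have hi := i.isLt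
    have hlt := (π (emb2 i)).isLt
    have hne0 : (π (emb2 i)).val ≠ 0 := by
      intro h
      have h' : π (emb2 i) = π c2 := Fin.ext (by rw [h, h2, hc0])
      have t := congrArg Fin.val (π.injective h')
      rw [hc2] at t
      simp at t
      omega
    have hne1 : (π (emb2 i)).val ≠ 1 := by
      intro h
      have h' : π (emb2 i) = π c3 := Fin.ext (by rw [h, h4, hc1])
      have t := congrArg Fin.val (π.injective h')
      rw [hc3] at t
      simp at t
      omega
    have hne2' : (π (emb2 i)).val ≠ m + 2 := by
      intro h
      have h' : π (emb2 i) = π c0 := Fin.ext (by rw [h, h1, hc2])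
      have t := congrArg Fin.val (π.injective h')
      rw [hc0] at t
      simp at t
    have hne3 : (π (emb2 i)).val ≠ m + 3 := by
      intro h
      have h' : π (emb2 i) = π c1 := Fin.ext (by rw [h, h3, hc3])
      have t := congrArg Fin.val (π.injective h')
      rw [hc1] at t
      simp at t
    omega
  have hlt1 : ∀ i : Fin m, (π (emb2 i)).val - 2 < m := by
    intro i; have := key i; have := (π (emb2 i)).isLt; omega
  set u : Fin m → Fin m := fun i => ⟨(π (emb2 i)).val - 2, hlt1 i⟩ with hu_def
  have hemb : ∀ i : Fin m, emb2 (u i) = π (emb2 i) := by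
    intro i
    apply Fin.ext
    have := key i
    simp [hu_def]
    omega
  have hu : ∀ i, u (u i) = i := by
    intro i
    apply Fin.ext
    show (π (emb2 (u i))).val - 2 = i.val
    rw [hemb i, hinv]
    simp
  refine ⟨⟨u, u, hu, hu⟩, ?_, ?_⟩
  · rw [mem_F]
    refine ⟨hu, ?_⟩
    intro i
    have hbi := hb (emb2 i)
    have hki := key i
    simp only [emb2_val] at hbi
    show m - 2 ≤ (u i).val + i.val ∧ (u i).val + i.val ≤ m
    simp only [hu_def]
    omega
  · apply Equiv.ext
    intro x
    have hx := x.isLt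
    by_cases hx0 : x.val = 0
    · rw [pad2_zero' _ hx0]
      have hxz : x = c0 := Fin.ext (by rw [hx0, hc0])
      rw [hxz, h1]
      exact Fin.ext (by rw [hc2])
    by_cases hx1 : x.val = 1
    · rw [pad2_one' _ hx1]
      have hxz : x = c1 := Fin.ext (by rw [hx1, hc1])
      rw [hxz, h3]
      exact Fin.ext (by rw [hc3])
    by_cases hx2 : x.val = m + 2
    · rw [pad2_m2' _ hx2]
      have hxz : x = c2 := Fin.ext (by rw [hx2, hc2])
      rw [hxz, h2]
      exact Fin.ext (by rw [hc0])
    by_cases hx3 : x.val = m + 3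
    · rw [pad2_m3' _ hx3]
      have hxz : x = c3 := Fin.ext (by rw [hx3, hc3])
      rw [hxz, h4]
      exact Fin.ext (by rw [hc1])
    · have hlt : x.val - 2 < m := by omega
      rw [pad2_mid _ hx0 hx1 hx2 hx3 hlt]
      have he : emb2 (⟨x.val - 2, hlt⟩ : Fin m) = x := Fin.ext (by simp; omega)
      have hk := key ⟨x.val - 2, hlt⟩
      rw [he] at hk
      apply Fin.ext
      show (u ⟨x.val - 2, hlt⟩).val + 2 = (π x).val
      simp only [hu_def, Fin.val_mk]
      rw [he]
      omega


lemma F_rec (m : ℕ) : (F (m + 4)).card = (F (m + 2)).card + (F m).card := by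
  have himage : F (m + 4) = (F (m + 2)).image pad1 ∪ (F m).image pad2 := by
    apply Finset.ext
    intro π
    simp only [Finset.mem_union, Finset.mem_image]
    constructor
    · intro hπ
      have hb := ((mem_F π).mp hπ).2 ⟨0, by omega⟩
      simp only [Fin.val_mk, Nat.add_zero] at hb
      have hlt := (π ⟨0, by omega⟩).isLt
      rcases (by omega : (π ⟨0, by omega⟩).val = m + 3 ∨ (π ⟨0, by omega⟩).val = m + 2) with h | h
      · obtain ⟨σ, hσ, hσπ⟩ := surj1 hπ h
        exact Or.inl ⟨σ, hσ, hσπ⟩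
      · obtain ⟨σ, hσ, hσπ⟩ := surj2 hπ h
        exact Or.inr ⟨σ, hσ, hσπ⟩
    · rintro (⟨σ, hσ, rfl⟩ | ⟨σ, hσ, rfl⟩)
      · exact pad1_mem hσ
      · exact pad2_mem hσ
  have hdisj : Disjoint ((F (m + 2)).image pad1) ((F m).image pad2) := by
    rw [Finset.disjoint_left]
    rintro π hπ1 hπ2
    obtain ⟨σ, _, rfl⟩ := Finset.mem_image.mp hπ1
    obtain ⟨τ, _, hτ⟩ := Finset.mem_image.mp hπ2
    have := congrArg (fun f : Equiv.Perm (Fin (m + 4)) => (f ⟨0, by omega⟩).val) hτ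
    rw [pad2_zero' τ rfl, pad1_zero σ rfl] at this
    simp at this
  rw [himage, Finset.card_union_of_disjoint hdisj,
    Finset.card_image_of_injective _ pad1_inj, Finset.card_image_of_injective _ pad2_inj]


lemma F_card_fib : ∀ n : ℕ,
    ((F (2 * n)).card = Nat.fib (n + 2) ∧ (F (2 * n + 1)).card = Nat.fib (n + 1)) ∧
    ((F (2 * (n + 1))).card = Nat.fib (n + 3) ∧ (F (2 * (n + 1) + 1)).card = Nat.fib (n + 2)) := by
  intro n
  induction n with
  | zero =>
    refine ⟨⟨?_, ?_⟩, ?_, ?_⟩ <;> decide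
  | succ k ih =>
    refine ⟨ih.2, ?_, ?_⟩
    · have h : 2 * (k + 2) = 2 * k + 4 := by ring
      rw [h, F_rec]
      have h2 : 2 * k + 2 = 2 * (k + 1) := by ring
      rw [h2, ih.2.1, ih.1.1, Nat.add_comm]
      exact (Nat.fib_add_two (n := k + 2)).symm
    · have h : 2 * (k + 2) + 1 = (2 * k + 1) + 4 := by ring
      rw [h, F_rec]
      have h2 : 2 * k + 1 + 2 = 2 * (k + 1) + 1 := by ring
      rw [h2, ih.2.2, ih.1.2, Nat.add_comm]
      exact (Nat.fib_add_two (n := k + 1)).symm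

theorem stmt14 (n : ℕ) :
    Nat.card {π : Equiv.Perm (Fin (2 * n)) //
        IsInvolution π ∧ Avoids132 π ∧ Avoids123 π ∧ Avoids213 π} = Nat.fib (n + 2) ∧
    Nat.card {π : Equiv.Perm (Fin (2 * n + 1)) //
        IsInvolution π ∧ Avoids132 π ∧ Avoids123 π ∧ Avoids213 π} = Nat.fib (n + 1) := by
  have key : ∀ m : ℕ, Nat.card {π : Equiv.Perm (Fin m) //
      IsInvolution π ∧ Avoids132 π ∧ Avoids123 π ∧ Avoids213 π} = (F m).card := by
    intro m
    have e : ∀ π : Equiv.Perm (Fin m),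
        (IsInvolution π ∧ Avoids132 π ∧ Avoids123 π ∧ Avoids213 π) ↔
          (IsInvolution π ∧ Band m π) := by
      intro π
      rw [← avoid_iff_band]
    rw [Nat.card_congr (Equiv.subtypeEquivRight e), Nat.card_eq_fintype_card,
      Fintype.card_subtype]
    rfl
  exact ⟨(key _).trans (F_card_fib n).1.1, (key _).trans (F_card_fib n).1.2⟩
end

section
/- The number of involutions of length n ≥ 1 avoiding 132, 213, and 321 equals ((−1)^n + 3)/2 (i.e., 2 if n is even, 1 if n is odd); the number of involutions of length n ≥ 1 avoiding 132, 213, and 4321 equals ⌊n/2⌋ + 1. -/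
def Avoids4321 {n : ℕ} (π : Equiv.Perm (Fin n)) : Prop :=
  ¬ ∃ i j k l : Fin n, i < j ∧ j < k ∧ k < l ∧ π l < π k ∧ π k < π j ∧ π j < π i

def sfun (n k : ℕ) (hk : 2 * k ≤ n) (i : Fin n) : Fin n :=
  ⟨if i.1 < k then i.1 + (n - k) else if i.1 < n - k then i.1 else i.1 - (n - k),
   by have := i.2; split_ifs <;> omega⟩

lemma sfun_invol (n k : ℕ) (hk : 2 * k ≤ n) : ∀ i, sfun n k hk (sfun n k hk i) = i := by
  intro i; have hi := i.2; apply Fin.ext; simp only [sfun]; split_ifs <;> omega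

def sperm (n k : ℕ) (hk : 2 * k ≤ n) : Equiv.Perm (Fin n) :=
  ⟨sfun n k hk, sfun n k hk, sfun_invol n k hk, sfun_invol n k hk⟩

lemma sperm_apply (n k : ℕ) (hk : 2 * k ≤ n) (i : Fin n) :
    (sperm n k hk i).1 = if i.1 < k then i.1 + (n - k) else if i.1 < n - k then i.1
      else i.1 - (n - k) := rfl

lemma sperm_invol (n k : ℕ) (hk : 2 * k ≤ n) : IsInvolution (sperm n k hk) :=
  sfun_invol n k hk

lemma sperm_av132 (n k : ℕ) (hk : 2 * k ≤ n) : Avoids132 (sperm n k hk) := by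
  rintro ⟨i, j, l, hij, hjl, h1, h2⟩
  have hi := i.2; have hj := j.2; have hl := l.2
  rw [Fin.lt_def] at hij hjl h1 h2
  rw [sperm_apply, sperm_apply] at h1 h2

  split_ifs at h1 h2 <;> omega

lemma sperm_av213 (n k : ℕ) (hk : 2 * k ≤ n) : Avoids213 (sperm n k hk) := by
  rintro ⟨i, j, l, hij, hjl, h1, h2⟩
  have hi := i.2; have hj := j.2; have hl := l.2
  rw [Fin.lt_def] at hij hjl h1 h2
  rw [sperm_apply, sperm_apply] at h1 h2

  split_ifs at h1 h2 <;> omega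

lemma sperm_av4321 (n k : ℕ) (hk : 2 * k ≤ n) : Avoids4321 (sperm n k hk) := by
  rintro ⟨i, j, l, m, hij, hjl, hlm, h1, h2, h3⟩
  have hi := i.2; have hj := j.2; have hl := l.2; have hm := m.2
  rw [Fin.lt_def] at hij hjl hlm h1 h2 h3
  rw [sperm_apply, sperm_apply] at h1 h2 h3
  split_ifs at h1 h2 h3 <;> omega

lemma sperm_av321 (n k : ℕ) (hk : 2 * k ≤ n) (hor : k = 0 ∨ 2 * k = n) :
    Avoids321 (sperm n k hk) := by
  rintro ⟨i, j, l, hij, hjl, h1, h2⟩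
  have hi := i.2; have hj := j.2; have hl := l.2
  rw [Fin.lt_def] at hij hjl h1 h2
  rw [sperm_apply, sperm_apply] at h1 h2

  rcases hor with rfl | hor <;> split_ifs at h1 h2 <;> omega

/-- The slope lemma: in a {132,213}-avoiding permutation, ascents have slope one. -/
lemma ascSlope {n : ℕ} (π : Equiv.Perm (Fin n)) (hinv : IsInvolution π)
    (h132 : Avoids132 π) (h213 : Avoids213 π) :
    ∀ i j : Fin n, i < j → π i < π j → (π i).1 + j.1 = (π j).1 + i.1 := by
  intro i j hij hv
  have himg : (Finset.Ioo i j).image π = Finset.Ioo (π i) (π j) := by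
    apply Finset.Subset.antisymm
    · intro v hv'
      rw [Finset.mem_image] at hv'
      obtain ⟨t, ht, rfl⟩ := hv'
      rw [Finset.mem_Ioo] at ht ⊢
      obtain ⟨h1, h2⟩ := ht
      constructor
      · rcases lt_trichotomy (π i) (π t) with h | h | h
        · exact h
        · exact absurd (π.injective h.symm) (by rintro rfl; exact lt_irrefl _ h1)
        · exact absurd (h213 ⟨i, t, j, h1, h2, h, hv⟩) (fun h => h)
      · rcases lt_trichotomy (π t) (π j) with h | h | h
        · exact h
        · exact absurd (π.injective h) (by rintro rfl; exact lt_irrefl _ h2)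
        · exact absurd (h132 ⟨i, t, j, h1, h2, hv, h⟩) (fun h => h)
    · intro v hv'
      rw [Finset.mem_Ioo] at hv'
      rw [Finset.mem_image]
      refine ⟨π v, ?_, hinv v⟩
      rw [Finset.mem_Ioo]
      have e1 : π (π v) = v := hinv v
      constructor
      · rcases lt_trichotomy i (π v) with h | h | h
        · exact h
        · exact absurd (congrArg π h) (by rw [e1]; rintro rfl; exact lt_irrefl _ hv'.1)
        · exact absurd (h213 ⟨π v, i, j, h, hij, by rw [e1]; exact hv'.1, by rw [e1]; exact hv'.2⟩) (fun h => h)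
      · rcases lt_trichotomy (π v) j with h | h | h
        · exact h
        · exact absurd (congrArg π h) (by rw [e1]; rintro rfl; exact lt_irrefl _ hv'.2)
        · exact absurd (h132 ⟨i, j, π v, hij, h, by rw [e1]; exact hv'.1, by rw [e1]; exact hv'.2⟩) (fun h => h)
  have hcard := congrArg Finset.card himg
  rw [Finset.card_image_of_injective _ π.injective, Fin.card_Ioo, Fin.card_Ioo] at hcard
  rw [Fin.lt_def] at hij hv
  omega

lemma classify {n : ℕ} (hn : 1 ≤ n) (π : Equiv.Perm (Fin n))
    (hinv : IsInvolution π) (h132 : Avoids132 π) (h213 : Avoids213 π)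
    (h4 : Avoids4321 π) :
    ∃ k, ∃ hk : 2 * k ≤ n, π = sperm n k hk := by
  have hC : ∀ i j : Fin n, i.1 < j.1 → (π i).1 < (π j).1 → (π i).1 + j.1 = (π j).1 + i.1 := by
    intro i j h1 h2
    exact ascSlope π hinv h132 h213 i j (Fin.lt_def.2 h1) (Fin.lt_def.2 h2)
  set z : Fin n := ⟨0, hn⟩ with hz
  set M : Fin n := π z with hMdef
  set m : ℕ := M.1 with hm
  have hmn : m < n := M.2
  have hMz : π M = z := hinv z
  by_cases hm0 : m = 0
  · -- identity case
    refine ⟨0, by omega, ?_⟩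
    have hzz : π z = z := by apply Fin.ext; rw [← hm, hm0]
    apply Equiv.ext; intro i
    apply Fin.ext
    rw [sperm_apply]
    simp only [Nat.not_lt_zero, if_false, Nat.sub_zero, i.2, if_true]
    by_cases hi0 : i.1 = 0
    · have : i = z := Fin.ext hi0
      rw [this, hzz]
    · have hne : π i ≠ z := by
        intro h
        have := hinv i
        rw [h, hzz] at this
        exact hi0 (by rw [← this])
      have hpos : 0 < (π i).1 := by
        rcases Nat.eq_zero_or_pos (π i).1 with h | h
        · exact absurd (Fin.ext h : π i = z) hne
        · exact h
      have := hC z i (by omega) (by rw [hzz]; exact hpos)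
      rw [hzz] at this
      omega
  · -- m > 0 case
    have hm1 : 0 < m := Nat.pos_of_ne_zero hm0
    -- step 2
    have step2 : ∀ j : Fin n, m < j.1 → (π j).1 = j.1 - m := by
      intro j hj
      have hpos : 0 < (π j).1 := by
        rcases Nat.eq_zero_or_pos (π j).1 with h | h
        swap
        · exact h
        · exfalso
          have : π j = z := Fin.ext h
          have : j = M := by
            have h2 := hinv j
            rw [this] at h2
            rw [← h2, hMdef]
          omega
      have := hC M j hj (by rw [hMz]; exact hpos)
      rw [hMz] at this
      simp only [hz] at this
      omega
    -- step 4
    have step4 : ∀ i : Fin n, 0 < i.1 → i.1 < n - m → (π i).1 = i.1 + m := by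
      intro i h0 hnm
      set j : Fin n := ⟨i.1 + m, by omega⟩ with hj
      have h2 := step2 j (by simp [hj]; omega)
      have hji : π j = i := Fin.ext (by rw [h2]; simp [hj])
      have := hinv j
      rw [hji] at this
      rw [this, hj]
    -- step 3
    have step3 : n ≤ 2 * m := by
      by_contra h
      have := step4 M hm1 (by omega)
      rw [hMz] at this
      simp only [hz] at this
      omega
    have hkn : 2 * (n - m) ≤ n := by omega
    -- step 5 : middle is fixed
    have step5 : ∀ i : Fin n, n - m ≤ i.1 → i.1 < m → (π i).1 = i.1 := by
      intro i hlo hhi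
      have hvn : (π i).1 < n := (π i).2
      have hvm : (π i).1 ≠ m := by
        intro h
        have : π i = M := Fin.ext h
        have h2 := hinv i
        rw [this, hMz] at h2
        have : i.1 = 0 := by rw [← h2]
        omega
      have hv0 : (π i).1 ≠ 0 := by
        intro h
        have : π i = z := Fin.ext h
        have h2 := hinv i
        rw [this] at h2
        have : i.1 = m := by rw [← h2, ← hMdef]
        omega
      have hvgt : ¬ (m < (π i).1) := by
        intro h
        have h4' := step4 ⟨(π i).1 - m, by omega⟩ (by simp; omega) (by simp; omega)
        have : π (⟨(π i).1 - m, by omega⟩ : Fin n) = π i := Fin.ext (by rw [h4']; simp; omega)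
        have := π.injective this
        have hval : (π i).1 - m = i.1 := by simpa using congrArg Fin.val this
        omega
      have hvlt : ¬ ((π i).1 < n - m) := by
        intro h
        have h2' := step2 ⟨(π i).1 + m, by omega⟩ (by simp; omega)
        have : π (⟨(π i).1 + m, by omega⟩ : Fin n) = π i := Fin.ext (by rw [h2']; simp)
        have := π.injective this
        have hval : (π i).1 + m = i.1 := by simpa using congrArg Fin.val this
        omega
      -- now n - m ≤ (π i).1 < m
      by_contra hne
      have hVi : π ⟨(π i).1, hvn⟩ = i := by
        have h2 := hinv i
        have : π i = ⟨(π i).1, hvn⟩ := Fin.ext rfl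
        rw [this] at h2
        exact h2
      rcases Nat.lt_or_ge (π i).1 i.1 with h | h
      · exact h4 ⟨z, ⟨(π i).1, hvn⟩, i, M,
          Fin.lt_def.2 (by simp [hz]; omega),
          Fin.lt_def.2 (by simpa using h),
          Fin.lt_def.2 (by exact hhi),
          Fin.lt_def.2 (by rw [hMz]; simpa [hz] using Nat.pos_of_ne_zero hv0),
          Fin.lt_def.2 (by rw [hVi]; exact h),
          Fin.lt_def.2 (by rw [hVi]; simp; omega)⟩
      · have h' : i.1 < (π i).1 := by omega
        exact h4 ⟨z, i, ⟨(π i).1, hvn⟩, M,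
          Fin.lt_def.2 (by simp [hz]; omega),
          Fin.lt_def.2 (by simpa using h'),
          Fin.lt_def.2 (by simp; omega),
          Fin.lt_def.2 (by rw [hMz, hVi]; simp [hz]; omega),
          Fin.lt_def.2 (by rw [hVi]; exact h'),
          Fin.lt_def.2 (by simp; omega)⟩
    -- conclude
    refine ⟨n - m, hkn, ?_⟩
    have hnnm : n - (n - m) = m := by omega
    apply Equiv.ext; intro i
    apply Fin.ext
    rw [sperm_apply, hnnm]
    have hi := i.2
    split_ifs with hA hB
    · by_cases hi0 : i.1 = 0
      · have : i = z := Fin.ext hi0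
        rw [this, ← hMdef, ← hm]
        simp [hz]
      · exact step4 i (Nat.pos_of_ne_zero hi0) hA
    · exact step5 i (by omega) hB
    · by_cases him : i.1 = m
      · have : i = M := Fin.ext him
        rw [this, hMz]
        simp [hz]; omega
      · have := step2 i (by omega)
        omega

lemma av321_of {n : ℕ} (π : Equiv.Perm (Fin n)) (h : Avoids321 π) : Avoids4321 π := by
  rintro ⟨i, j, k, l, h1, h2, h3, h4, h5, h6⟩
  exact h ⟨j, k, l, h2, h3, h4, h5⟩

lemma sperm_not321 {n k : ℕ} (hk : 2 * k ≤ n) (hk0 : 0 < k) (hkn : 2 * k < n) :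
    ¬ Avoids321 (sperm n k hk) := by
  intro h
  exact h ⟨⟨0, by omega⟩, ⟨k, by omega⟩, ⟨n - 1, by omega⟩,
    Fin.lt_def.2 (by simpa using hk0),
    Fin.lt_def.2 (by simp; omega),
    Fin.lt_def.2 (by rw [sperm_apply, sperm_apply]; simp; split_ifs <;> omega),
    Fin.lt_def.2 (by rw [sperm_apply, sperm_apply]; simp; split_ifs <;> omega)⟩

lemma sperm_zero_val {n k : ℕ} (hk : 2 * k ≤ n) (i : Fin n) (h0 : i.1 = 0) :
    ((sperm n k hk) i).1 = if 0 < k then n - k else 0 := by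
  rw [sperm_apply, h0]; split_ifs <;> omega

lemma sperm_inj {n : ℕ} (hn : 1 ≤ n) {a b : ℕ} (ha : 2 * a ≤ n) (hb : 2 * b ≤ n)
    (h : sperm n a ha = sperm n b hb) : a = b := by
  have h1 := congrArg (fun x => ((x : Equiv.Perm (Fin n)) ⟨0, hn⟩).1) h
  rw [sperm_zero_val ha _ rfl, sperm_zero_val hb _ rfl] at h1
  split_ifs at h1 <;> omega

theorem stmt15 (n : ℕ) (hn : 1 ≤ n) :
    ((Nat.card {π : Equiv.Perm (Fin n) //
        IsInvolution π ∧ Avoids132 π ∧ Avoids213 π ∧ Avoids321 π} : ℤ) =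
      ((-1) ^ n + 3) / 2) ∧
    Nat.card {π : Equiv.Perm (Fin n) //
        IsInvolution π ∧ Avoids132 π ∧ Avoids213 π ∧ Avoids4321 π} = n / 2 + 1 := by
  have hk0 : (2 : ℕ) * 0 ≤ n := by omega
  constructor
  · -- 321 case
    rcases Nat.even_or_odd n with he | ho
    · -- even : card = 2
      have hcard : Nat.card {π : Equiv.Perm (Fin n) //
          IsInvolution π ∧ Avoids132 π ∧ Avoids213 π ∧ Avoids321 π} = 2 := by
        rw [Nat.card_eq_two_iff]
        have h2 : 2 * (n / 2) = n := by
          rcases he with ⟨r, hr⟩; omega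
        have hkh : 2 * (n / 2) ≤ n := by omega
        refine ⟨⟨sperm n 0 hk0, sperm_invol _ _ _, sperm_av132 _ _ _, sperm_av213 _ _ _,
            sperm_av321 n 0 hk0 (Or.inl rfl)⟩,
          ⟨sperm n (n / 2) hkh, sperm_invol _ _ _, sperm_av132 _ _ _, sperm_av213 _ _ _,
            sperm_av321 n (n / 2) hkh (Or.inr h2)⟩, ?_, ?_⟩
        · intro hcon
          have := sperm_inj hn hk0 hkh (congrArg Subtype.val hcon)
          omega
        · apply Set.eq_univ_iff_forall.2
          rintro ⟨π, hinv, h132, h213, h321⟩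
          obtain ⟨k, hk, rfl⟩ := classify hn π hinv h132 h213 (av321_of π h321)
          rcases Nat.eq_zero_or_pos k with hk0' | hkpos
          · left
            apply Subtype.ext
            simp only
            subst hk0'
            rfl
          · have : ¬ (2 * k < n) := fun hlt => sperm_not321 hk hkpos hlt h321
            have hkeq : k = n / 2 := by omega
            right
            apply Subtype.ext
            simp only
            subst hkeq
            rfl
      rw [hcard, he.neg_one_pow]
      norm_num
    · -- odd : card = 1
      have hcard : Nat.card {π : Equiv.Perm (Fin n) //
          IsInvolution π ∧ Avoids132 π ∧ Avoids213 π ∧ Avoids321 π} = 1 := by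
        have : Unique {π : Equiv.Perm (Fin n) //
            IsInvolution π ∧ Avoids132 π ∧ Avoids213 π ∧ Avoids321 π} := by
          refine ⟨⟨⟨sperm n 0 hk0, sperm_invol _ _ _, sperm_av132 _ _ _, sperm_av213 _ _ _,
            sperm_av321 n 0 hk0 (Or.inl rfl)⟩⟩, ?_⟩
          rintro ⟨π, hinv, h132, h213, h321⟩
          obtain ⟨k, hk, rfl⟩ := classify hn π hinv h132 h213 (av321_of π h321)
          rcases Nat.eq_zero_or_pos k with hk0' | hkpos
          · apply Subtype.ext
            simp only
            subst hk0'
            rfl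
          · exfalso
            have h1 : ¬ (2 * k < n) := fun hlt => sperm_not321 hk hkpos hlt h321
            rcases ho with ⟨r, hr⟩
            omega
        rw [Nat.card_unique]
      rw [hcard, ho.neg_one_pow]
      norm_num
  · -- 4321 case
    let f : Fin (n / 2 + 1) → {π : Equiv.Perm (Fin n) //
        IsInvolution π ∧ Avoids132 π ∧ Avoids213 π ∧ Avoids4321 π} :=
      fun k => ⟨sperm n k.1 (by have := k.2; omega), sperm_invol _ _ _, sperm_av132 _ _ _,
        sperm_av213 _ _ _, sperm_av4321 _ _ _⟩
    have hbij : Function.Bijective f := by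
      constructor
      · intro a b hab
        have := sperm_inj hn (by have := a.2; omega) (by have := b.2; omega)
          (congrArg Subtype.val hab)
        exact Fin.ext this
      · rintro ⟨π, hinv, h132, h213, h4⟩
        obtain ⟨k, hk, rfl⟩ := classify hn π hinv h132 h213 h4
        refine ⟨⟨k, by omega⟩, ?_⟩
        apply Subtype.ext
        rfl
    exact Nat.card_eq_of_equiv_fin (Equiv.ofBijective f hbij).symm
end

section
/- The number of involutions of length n avoiding 132 and containing exactly one occurrence of the pattern 12 equals 1 if n ≥ 2 is even, and 0 otherwise (generating function x²/(1−x²)). -/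
def Contains12Once {n : ℕ} (π : Equiv.Perm (Fin n)) : Prop :=
  (Finset.univ.filter fun t : Fin n × Fin n => t.1 < t.2 ∧ π t.1 < π t.2).card = 1

open Finset

lemma once_eq {n : ℕ} (π : Equiv.Perm (Fin n)) (h : Contains12Once π) :
    ∃ t : Fin n × Fin n, ∀ i j : Fin n, (i < j ∧ π i < π j) ↔ (i = t.1 ∧ j = t.2) := by
  rw [Contains12Once, Finset.card_eq_one] at h
  obtain ⟨t, ht⟩ := h
  refine ⟨t, fun i j => ?_⟩
  have hm : (i, j) ∈ (Finset.univ.filter fun t : Fin n × Fin n =>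
      t.1 < t.2 ∧ π t.1 < π t.2) ↔ (i, j) = t := by rw [ht]; simp
  rw [Finset.mem_filter] at hm
  simp only [Finset.mem_univ, true_and, Prod.ext_iff] at hm
  exact hm

lemma avoids_of_once {n : ℕ} (π : Equiv.Perm (Fin n)) (h : Contains12Once π) :
    Avoids132 π := by
  obtain ⟨t, K⟩ := once_eq π h
  rintro ⟨i, j, k, hij, hjk, h1, h2⟩
  have e1 := (K i j).mp ⟨hij, h1.trans h2⟩
  have e2 := (K i k).mp ⟨hij.trans hjk, h1⟩
  exact absurd (e1.2.trans e2.2.symm) (ne_of_lt hjk)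

lemma val_eq_card {n : ℕ} (π : Equiv.Perm (Fin n)) (i : Fin n) :
    (π i : ℕ) = (Finset.univ.filter fun j => π j < π i).card := by
  have h1 : (Finset.univ.filter fun j => π j < π i)
      = (Finset.univ.filter fun y => y < π i).image π.symm := by
    ext j
    simp only [Finset.mem_filter, Finset.mem_univ, true_and, Finset.mem_image]
    constructor
    · intro hj; exact ⟨π j, hj, π.symm_apply_apply j⟩
    · rintro ⟨y, hy, rfl⟩; rwa [π.apply_symm_apply]
  rw [h1, Finset.card_image_of_injective _ π.symm.injective]
  have : (Finset.univ.filter fun y => y < π i) = Finset.Iio (π i) := by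
    ext y; simp
  rw [this, Fin.card_Iio]

lemma main_char {n : ℕ} (π : Equiv.Perm (Fin n)) (h1 : IsInvolution π)
    (h2 : Contains12Once π) :
    ∃ a : ℕ, n = 2 * a + 2 ∧ ∀ i : Fin n,
      (π i : ℕ) = if (i : ℕ) = a ∨ (i : ℕ) = a + 1 then (i : ℕ) else n - 1 - (i : ℕ) := by
  obtain ⟨⟨a, b⟩, K⟩ := once_eq π h2
  have hab : a < b ∧ π a < π b := (K a b).mpr ⟨rfl, rfl⟩
  have hbn : (b : ℕ) < n := b.isLt
  have han : (a : ℕ) + 1 ≤ (b : ℕ) := hab.1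
  -- generic values
  have hgen : ∀ i : Fin n, i ≠ a → i ≠ b → (π i : ℕ) = n - 1 - (i : ℕ) := by
    intro i hia hib
    rw [val_eq_card]
    have hset : (Finset.univ.filter fun j => π j < π i) = Finset.Ioi i := by
      ext j
      simp only [Finset.mem_filter, Finset.mem_univ, true_and, Finset.mem_Ioi]
      constructor
      · intro hj
        rcases lt_trichotomy i j with h | h | h
        · exact h
        · exact absurd (h ▸ hj) (lt_irrefl _)
        · exact absurd ((K j i).mp ⟨h, hj⟩).2 hib
      · intro hij
        rcases lt_trichotomy (π i) (π j) with h | h | h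
        · exact absurd ((K i j).mp ⟨hij, h⟩).1 hia
        · exact absurd (π.injective h) (ne_of_lt hij)
        · exact h
    rw [hset, Fin.card_Ioi]
  have ha_val : (π a : ℕ) = n - 1 - (a : ℕ) - 1 := by
    rw [val_eq_card]
    have hset : (Finset.univ.filter fun j => π j < π a) = (Finset.Ioi a).erase b := by
      ext j
      simp only [Finset.mem_filter, Finset.mem_univ, true_and, Finset.mem_erase,
        Finset.mem_Ioi]
      constructor
      · intro hj
        refine ⟨fun hjb => absurd (hjb ▸ hj) (asymm hab.2), ?_⟩
        rcases lt_trichotomy a j with h | h | h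
        · exact h
        · exact absurd (h ▸ hj) (lt_irrefl _)
        · exact absurd ((K j a).mp ⟨h, hj⟩).2 (by
            intro hh; exact absurd (hh ▸ hab.1) (lt_irrefl _))
      · rintro ⟨hjb, haj⟩
        rcases lt_trichotomy (π a) (π j) with h | h | h
        · exact absurd ((K a j).mp ⟨haj, h⟩).2 hjb
        · exact absurd (π.injective h) (ne_of_lt haj)
        · exact h
    rw [hset, Finset.card_erase_of_mem (Finset.mem_Ioi.mpr hab.1), Fin.card_Ioi]
  have hb_val : (π b : ℕ) = n - 1 - (b : ℕ) + 1 := by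
    rw [val_eq_card]
    have hset : (Finset.univ.filter fun j => π j < π b) = insert a (Finset.Ioi b) := by
      ext j
      simp only [Finset.mem_filter, Finset.mem_univ, true_and, Finset.mem_insert,
        Finset.mem_Ioi]
      constructor
      · intro hj
        rcases lt_trichotomy b j with h | h | h
        · exact Or.inr h
        · exact absurd (h ▸ hj) (lt_irrefl _)
        · exact Or.inl ((K j b).mp ⟨h, hj⟩).1
      · rintro (rfl | hbj)
        · exact hab.2
        · rcases lt_trichotomy (π b) (π j) with h | h | h
          · have := ((K b j).mp ⟨hbj, h⟩).1
            exact absurd (this ▸ hab.1) (lt_irrefl _)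
          · exact absurd (π.injective h) (ne_of_lt hbj)
          · exact h
    rw [hset, Finset.card_insert_of_notMem (by
      simp only [Finset.mem_Ioi]; exact fun hh => absurd (hab.1.trans hh) (lt_irrefl _)),
      Fin.card_Ioi]
  -- involution at a forces π a = a and n = 2a + 2
  have hpaa : π a = a := by
    by_cases hpa : π a = a
    · exact hpa
    by_cases hpb : π a = b
    · exfalso
      have h3 : (π (π a) : ℕ) = n - 1 - (b : ℕ) + 1 := by rw [hpb]; exact hb_val
      rw [h1 a] at h3
      have h4 : (b : ℕ) = n - 1 - (a : ℕ) - 1 := by rw [← ha_val, hpb]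
      omega
    · exfalso
      have h3 := hgen (π a) hpa hpb
      rw [h1 a] at h3
      omega
  have hn : n = 2 * (a : ℕ) + 2 := by
    have := ha_val
    rw [hpaa] at this
    omega
  -- involution at b forces π b = b and b = a + 1
  have hpbb : π b = b := by
    by_cases hpb : π b = b
    · exact hpb
    by_cases hpa : π b = a
    · exfalso
      have : π (π b) = π a := by rw [hpa]
      rw [h1 b, hpaa] at this
      exact absurd (this ▸ hab.1) (lt_irrefl _)
    · exfalso
      have h3 := hgen (π b) hpa hpb
      rw [h1 b] at h3
      omega
  have hba : (b : ℕ) = (a : ℕ) + 1 := by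
    have := hb_val
    rw [hpbb] at this
    omega
  refine ⟨(a : ℕ), hn, fun i => ?_⟩
  by_cases hia : (i : ℕ) = (a : ℕ)
  · have : i = a := Fin.ext hia
    rw [this, hpaa, if_pos (Or.inl rfl)]
  by_cases hib : (i : ℕ) = (a : ℕ) + 1
  · have : i = b := Fin.ext (by omega)
    rw [this, hpbb, if_pos (Or.inr (by omega))]
  · rw [if_neg (by tauto)]
    exact hgen i (fun hh => hia (by rw [hh])) (fun hh => hib (by rw [hh]; omega))

theorem stmt16 (n : ℕ) :
    Nat.card {π : Equiv.Perm (Fin n) //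
        IsInvolution π ∧ Avoids132 π ∧ Contains12Once π} =
      if 2 ≤ n ∧ n % 2 = 0 then 1 else 0 := by
  by_cases h : 2 ≤ n ∧ n % 2 = 0
  · rw [if_pos h]
    obtain ⟨a, hn⟩ : ∃ a : ℕ, n = 2 * a + 2 := ⟨(n - 2) / 2, by omega⟩
    rw [Nat.card_eq_one_iff_unique]
    constructor
    · -- subsingleton
      constructor
      rintro ⟨π, hπ1, _, hπ3⟩ ⟨ρ, hρ1, _, hρ3⟩
      obtain ⟨aπ, hnπ, hπ⟩ := main_char π hπ1 hπ3
      obtain ⟨aρ, hnρ, hρ⟩ := main_char ρ hρ1 hρ3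
      have haa : aπ = aρ := by omega
      apply Subtype.ext
      apply Equiv.ext
      intro i
      apply Fin.ext
      rw [hπ i, hρ i, haa]
    · -- nonempty : construct the involution
      have hval : ∀ i : Fin n,
          (if (i : ℕ) = a ∨ (i : ℕ) = a + 1 then (i : ℕ) else n - 1 - (i : ℕ)) < n := by
        intro i
        have := i.isLt
        split_ifs <;> omega
      set f : Fin n → Fin n := fun i =>
        ⟨if (i : ℕ) = a ∨ (i : ℕ) = a + 1 then (i : ℕ) else n - 1 - (i : ℕ), hval i⟩ with hf_def
      have hfval : ∀ i : Fin n, (f i : ℕ) =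
          if (i : ℕ) = a ∨ (i : ℕ) = a + 1 then (i : ℕ) else n - 1 - (i : ℕ) := fun i => rfl
      have hf : Function.Involutive f := by
        intro i
        apply Fin.ext
        rw [hfval, hfval]
        have := i.isLt
        split_ifs <;> omega
      refine ⟨⟨hf.toPerm, ?_, ?_, ?_⟩⟩
      · exact hf
      · apply avoids_of_once
        -- prove Contains12Once first
        rw [Contains12Once, Finset.card_eq_one]
        refine ⟨(⟨a, by omega⟩, ⟨a + 1, by omega⟩), ?_⟩
        ext ⟨i, j⟩
        simp only [Finset.mem_filter, Finset.mem_univ, true_and, Finset.mem_singleton,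
          Prod.ext_iff, Fin.lt_def, Fin.ext_iff]
        show (i : ℕ) < (j : ℕ) ∧ (f i : ℕ) < (f j : ℕ) ↔ (i : ℕ) = a ∧ (j : ℕ) = a + 1
        rw [hfval, hfval]
        have hi := i.isLt
        have hj := j.isLt
        constructor
        · rintro ⟨hij, hv⟩
          split_ifs at hv <;> omega
        · rintro ⟨h1, h2⟩
          rw [if_pos (Or.inl h1), if_pos (Or.inr h2)]
          omega
      · rw [Contains12Once, Finset.card_eq_one]
        refine ⟨(⟨a, by omega⟩, ⟨a + 1, by omega⟩), ?_⟩
        ext ⟨i, j⟩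
        simp only [Finset.mem_filter, Finset.mem_univ, true_and, Finset.mem_singleton,
          Prod.ext_iff, Fin.lt_def, Fin.ext_iff]
        show (i : ℕ) < (j : ℕ) ∧ (f i : ℕ) < (f j : ℕ) ↔ (i : ℕ) = a ∧ (j : ℕ) = a + 1
        rw [hfval, hfval]
        have hi := i.isLt
        have hj := j.isLt
        constructor
        · rintro ⟨hij, hv⟩
          split_ifs at hv <;> omega
        · rintro ⟨h1, h2⟩
          rw [if_pos (Or.inl h1), if_pos (Or.inr h2)]
          omega
  · rw [if_neg h]
    have : IsEmpty {π : Equiv.Perm (Fin n) //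
        IsInvolution π ∧ Avoids132 π ∧ Contains12Once π} := by
      constructor
      rintro ⟨π, hπ1, _, hπ3⟩
      obtain ⟨a, hn, _⟩ := main_char π hπ1 hπ3
      exact h ⟨by omega, by omega⟩
    exact Nat.card_of_isEmpty
end
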